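/- arXiv:2604.22689 — 8 statements merged into one kernel-verified Lean document; each statement's English description precedes it below -/
import Mathlib

section
/- Let δ > 0, ψ : ℕ → ℝ_{≥0}, y ∈ ℝ², and q ∈ ℕ with ψ(q) ≤ 1/2. Let (a_q, b_q) ∈ ℤ² × ℕ satisfy |b_q·y − a_q| < q^{−δ/(δ+3)}, 1 ≤ b_q ≤ q^{2δ/(δ+3)}, and gcd(a_q, b_q) = 1. Then the Lebesgue measure of Ã_q equals 4ψ(q)² · ∏_{p prime, p | q, p ∤ b_q} (1 − p^{−2}). -/
open MeasureTheory Real Filter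

/-- The unit box `[0,1)²`. -/
def unitBox : Set (Fin 2 → ℝ) := Set.univ.pi fun _ => Set.Ico (0 : ℝ) 1

/-- `gcd(q, v₁, v₂)` for `q ∈ ℕ` and `v ∈ ℤ²`. -/
def gcdVec (q : ℕ) (v : Fin 2 → ℤ) : ℕ := Nat.gcd q (Int.gcd (v 0) (v 1))

/-- The reduced set `Ã_q`: points `x ∈ [0,1)²` admitting `p ∈ ℤ²` with
`|q·x - p - y| < ψ(q)` and `gcd(q, b·p + a) = 1`. -/
def Atilde (ψ : ℕ → ℝ) (y : Fin 2 → ℝ) (a : Fin 2 → ℤ) (b : ℕ) (q : ℕ) :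
    Set (Fin 2 → ℝ) :=
  {x ∈ unitBox | ∃ p : Fin 2 → ℤ,
    ‖(q : ℝ) • x - (fun i => (p i : ℝ)) - y‖ < ψ q ∧
    gcdVec q (fun i => (b : ℤ) * p i + a i) = 1}


open Finset

lemma isCoprime_prod_iff {R S : Type*} [CommSemiring R] [CommSemiring S]
    (x y : R × S) : IsCoprime x y ↔ IsCoprime x.1 y.1 ∧ IsCoprime x.2 y.2 := by
  constructor
  · intro h
    exact ⟨h.map (RingHom.fst R S), h.map (RingHom.snd R S)⟩
  · rintro ⟨⟨c1, d1, h1⟩, ⟨c2, d2, h2⟩⟩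
    exact ⟨(c1, c2), (d1, d2), Prod.ext h1 h2⟩

lemma gcd_eq_one_iff_isCoprime (q : ℕ) (x₁ x₂ : ℤ) :
    Nat.gcd q (Int.gcd x₁ x₂) = 1 ↔ IsCoprime (x₁ : ZMod q) (x₂ : ZMod q) := by
  constructor
  · intro h
    have h1 : ((Nat.gcd q (Int.gcd x₁ x₂) : ℤ)) =
        q * Nat.gcdA q (Int.gcd x₁ x₂) + (Int.gcd x₁ x₂ : ℤ) * Nat.gcdB q (Int.gcd x₁ x₂) :=
      Nat.gcd_eq_gcd_ab _ _
    have h2 : ((Int.gcd x₁ x₂ : ℤ)) = x₁ * Int.gcdA x₁ x₂ + x₂ * Int.gcdB x₁ x₂ :=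
      Int.gcd_eq_gcd_ab _ _
    rw [h, h2] at h1
    refine ⟨((Int.gcdA x₁ x₂ * Nat.gcdB q (Int.gcd x₁ x₂) : ℤ) : ZMod q),
      ((Int.gcdB x₁ x₂ * Nat.gcdB q (Int.gcd x₁ x₂) : ℤ) : ZMod q), ?_⟩
    have := congrArg (fun z : ℤ => (z : ZMod q)) h1
    push_cast at this
    rw [ZMod.natCast_self] at this
    push_cast
    linear_combination -this
  · rintro ⟨c, d, hcd⟩
    obtain ⟨c', rfl⟩ := ZMod.intCast_surjective c
    obtain ⟨d', rfl⟩ := ZMod.intCast_surjective d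
    have : ((c' * x₁ + d' * x₂ : ℤ) : ZMod q) = ((1 : ℤ) : ZMod q) := by push_cast; rw [← hcd]
    rw [ZMod.intCast_eq_intCast_iff] at this
    obtain ⟨k, hk⟩ := Int.modEq_iff_dvd.mp this
    set n := Nat.gcd q (Int.gcd x₁ x₂) with hn
    have dq : (n : ℤ) ∣ (q : ℤ) := Int.natCast_dvd_natCast.mpr (Nat.gcd_dvd_left _ _)
    have dg : (n : ℤ) ∣ (Int.gcd x₁ x₂ : ℤ) := Int.natCast_dvd_natCast.mpr (Nat.gcd_dvd_right _ _)
    have d1 : (n : ℤ) ∣ x₁ := dg.trans (Int.gcd_dvd_left _ _)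
    have d2 : (n : ℤ) ∣ x₂ := dg.trans (Int.gcd_dvd_right _ _)
    have : (n : ℤ) ∣ 1 := by
      have : (1 : ℤ) = c' * x₁ + d' * x₂ + q * k := by linarith [hk]
      rw [this]
      exact dvd_add (dvd_add (Dvd.dvd.mul_left d1 c') (Dvd.dvd.mul_left d2 d')) (dq.mul_right k)
    have : n ∣ 1 := by exact_mod_cast this
    exact Nat.dvd_one.mp this

def Cpred (a : Fin 2 → ℤ) (b : ℕ) (q : ℕ) (v : Fin 2 → ZMod q) : Prop :=
  IsCoprime ((b : ZMod q) * v 0 + (a 0 : ZMod q)) ((b : ZMod q) * v 1 + (a 1 : ZMod q))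

noncomputable def cnt (a : Fin 2 → ℤ) (b : ℕ) (q : ℕ) : ℕ :=
  Nat.card {v : Fin 2 → ZMod q // Cpred a b q v}

noncomputable def unitsEquivIsUnit' (M : Type*) [Monoid M] : Mˣ ≃ {x : M // IsUnit x} where
  toFun u := ⟨u, u.isUnit⟩
  invFun x := x.2.unit
  left_inv u := Units.ext u.isUnit.unit_spec
  right_inv x := Subtype.ext x.2.unit_spec

lemma isUnit_zmod_pow_iff {ℓ e : ℕ} (hp : ℓ.Prime) (he : e ≠ 0) (x : ZMod (ℓ ^ e)) :
    IsUnit x ↔ (ZMod.castHom (dvd_pow_self ℓ he) (ZMod ℓ)) x ≠ 0 := by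
  haveI : Fact ℓ.Prime := ⟨hp⟩
  haveI : NeZero (ℓ ^ e) := ⟨pow_ne_zero e hp.pos.ne'⟩
  have hx : ((x.val : ℕ) : ZMod (ℓ ^ e)) = x := by rw [ZMod.natCast_val, ZMod.cast_id]
  have hiu := ZMod.isUnit_iff_coprime x.val (ℓ ^ e)
  rw [hx] at hiu
  have hphi : (ZMod.castHom (dvd_pow_self ℓ he) (ZMod ℓ)) x = ((x.val : ℕ) : ZMod ℓ) := by
    rw [ZMod.castHom_apply, ← ZMod.natCast_val]
  rw [hphi, Ne, ZMod.natCast_eq_zero_iff, hiu,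
    Nat.coprime_pow_right_iff (Nat.pos_of_ne_zero he), Nat.coprime_comm]
  exact hp.coprime_iff_not_dvd

lemma card_nonunits {ℓ e : ℕ} (hp : ℓ.Prime) (he : e ≠ 0) :
    Nat.card {x : ZMod (ℓ ^ e) // ¬ IsUnit x} = ℓ ^ (e - 1) := by
  classical
  haveI : Fact ℓ.Prime := ⟨hp⟩
  haveI : NeZero (ℓ ^ e) := ⟨pow_ne_zero e hp.pos.ne'⟩
  rw [Nat.card_eq_fintype_card, Fintype.card_subtype_compl]
  have h1 : Fintype.card {x : ZMod (ℓ ^ e) // IsUnit x} = Fintype.card (ZMod (ℓ ^ e))ˣ :=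
    (Fintype.card_congr (unitsEquivIsUnit' _)).symm
  rw [h1, ZMod.card_units_eq_totient, ZMod.card, Nat.totient_prime_pow hp (Nat.pos_of_ne_zero he)]
  have h2 : ℓ ^ e = ℓ ^ (e - 1) * ℓ := by
    rw [← pow_succ]; congr 1; omega
  rw [h2, ← Nat.mul_sub]
  have h3 : ℓ - (ℓ - 1) = 1 := by have := hp.pos; omega
  rw [h3, mul_one]

lemma isCoprime_zmod_pow_iff {ℓ e : ℕ} (hp : ℓ.Prime) (he : e ≠ 0) (x y : ZMod (ℓ ^ e)) :
    IsCoprime x y ↔ IsUnit x ∨ IsUnit y := by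
  haveI : Fact ℓ.Prime := ⟨hp⟩
  constructor
  · rintro ⟨c, d, h⟩
    by_contra hcon
    push_neg at hcon
    obtain ⟨hx, hy⟩ := hcon
    rw [isUnit_zmod_pow_iff hp he, not_ne_iff] at hx hy
    have := congrArg (ZMod.castHom (dvd_pow_self ℓ he) (ZMod ℓ)) h
    rw [map_add, map_mul, map_mul, map_one, hx, hy, mul_zero, mul_zero, add_zero] at this
    exact zero_ne_one this
  · rintro (h | h)
    · obtain ⟨u, rfl⟩ := h
      exact ⟨(↑u⁻¹ : ZMod (ℓ ^ e)), 0, by simp⟩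
    · obtain ⟨u, rfl⟩ := h
      exact ⟨0, (↑u⁻¹ : ZMod (ℓ ^ e)), by simp⟩

lemma cnt_one (a : Fin 2 → ℤ) (b : ℕ) : cnt a b 1 = 1 := by
  have hall : ∀ v : Fin 2 → ZMod 1, Cpred a b 1 v := fun v => ⟨1, 1, Subsingleton.elim _ _⟩
  rw [cnt, Nat.card_congr (Equiv.subtypeUnivEquiv hall), Nat.card_eq_fintype_card]
  simp

lemma card_bad {ℓ e : ℕ} (hp : ℓ.Prime) (he : e ≠ 0) {b : ZMod (ℓ ^ e)} (hb : IsUnit b)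
    (c : ZMod (ℓ ^ e)) :
    Nat.card {u : ZMod (ℓ ^ e) // ¬ IsUnit (b * u + c)} = ℓ ^ (e - 1) := by
  obtain ⟨w, hw⟩ := hb
  let E : ZMod (ℓ ^ e) ≃ ZMod (ℓ ^ e) :=
    { toFun := fun u => b * u + c
      invFun := fun x => ↑w⁻¹ * (x - c)
      left_inv := fun u => by
        simp only [add_sub_cancel_right, ← hw, ← mul_assoc, Units.inv_mul, one_mul]
      right_inv := fun x => by
        simp only [← hw, ← mul_assoc, Units.mul_inv, one_mul, sub_add_cancel] }
  exact (Nat.card_congr (Equiv.subtypeEquiv (p := fun u => ¬ IsUnit (b * u + c))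
    (q := fun x => ¬ IsUnit x) E fun u => Iff.rfl)).trans (card_nonunits hp he)

lemma cnt_prime_pow_dvd {a : Fin 2 → ℤ} {b ℓ e : ℕ} (hp : ℓ.Prime) (he : e ≠ 0)
    (hd : ℓ ∣ b) (hgcdab : Nat.gcd (Int.gcd (a 0) (a 1)) b = 1) :
    cnt a b (ℓ ^ e) = ℓ ^ (2 * e) := by
  haveI : Fact ℓ.Prime := ⟨hp⟩
  have hg : ¬ ℓ ∣ Int.gcd (a 0) (a 1) := by
    intro hdvd
    have : ℓ ∣ 1 := hgcdab ▸ Nat.dvd_gcd hdvd hd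
    exact hp.one_lt.ne' (Nat.dvd_one.mp this)
  have hai : ¬ ((ℓ : ℤ) ∣ a 0 ∧ (ℓ : ℤ) ∣ a 1) := by
    rintro ⟨h0, h1⟩
    exact hg (Int.natCast_dvd_natCast.mp (Int.dvd_coe_gcd h0 h1))
  have hall : ∀ v : Fin 2 → ZMod (ℓ ^ e), Cpred a b (ℓ ^ e) v := by
    intro v
    rw [Cpred, isCoprime_zmod_pow_iff hp he]
    have hunit : ∀ i : Fin 2, ¬ (ℓ : ℤ) ∣ a i →
        IsUnit ((b : ZMod (ℓ ^ e)) * v i + (a i : ZMod (ℓ ^ e))) := by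
      intro i hi
      rw [isUnit_zmod_pow_iff hp he, map_add, map_mul, map_natCast, map_intCast]
      have hb0 : ((b : ZMod ℓ)) = 0 := (ZMod.natCast_eq_zero_iff b ℓ).mpr hd
      have ha0 : ((a i : ZMod ℓ)) ≠ 0 := fun h => hi ((ZMod.intCast_zmod_eq_zero_iff_dvd _ ℓ).mp h)
      rw [hb0, zero_mul, zero_add]
      exact ha0
    rcases not_and_or.mp hai with h | h
    · exact Or.inl (hunit 0 h)
    · exact Or.inr (hunit 1 h)
  rw [cnt, Nat.card_congr (Equiv.subtypeUnivEquiv hall), Nat.card_eq_fintype_card]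
  simp only [Fintype.card_pi, ZMod.card, Finset.prod_const, Finset.card_univ, Fintype.card_fin]
  rw [← pow_mul, mul_comm]

lemma cnt_prime_pow_not_dvd {a : Fin 2 → ℤ} {b ℓ e : ℕ} (hp : ℓ.Prime) (he : e ≠ 0)
    (hd : ¬ ℓ ∣ b) : cnt a b (ℓ ^ e) = ℓ ^ (2 * e) - ℓ ^ (2 * e - 2) := by
  classical
  haveI : Fact ℓ.Prime := ⟨hp⟩
  haveI : NeZero (ℓ ^ e) := ⟨pow_ne_zero e hp.pos.ne'⟩
  have hbu : IsUnit ((b : ZMod (ℓ ^ e))) := by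
    rw [ZMod.isUnit_iff_coprime, Nat.coprime_pow_right_iff (Nat.pos_of_ne_zero he),
      Nat.coprime_comm]
    exact hp.coprime_iff_not_dvd.mpr hd
  -- reformulate predicate
  have hpred : ∀ v : Fin 2 → ZMod (ℓ ^ e), Cpred a b (ℓ ^ e) v ↔
      ¬ (¬ IsUnit ((b : ZMod (ℓ ^ e)) * v 0 + (a 0 : ZMod (ℓ ^ e))) ∧
         ¬ IsUnit ((b : ZMod (ℓ ^ e)) * v 1 + (a 1 : ZMod (ℓ ^ e)))) := by
    intro v
    rw [Cpred, isCoprime_zmod_pow_iff hp he, not_and_or, not_not, not_not]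
  have key : cnt a b (ℓ ^ e) = Fintype.card
      {w : ZMod (ℓ ^ e) × ZMod (ℓ ^ e) //
        ¬ (¬ IsUnit ((b : ZMod (ℓ ^ e)) * w.1 + (a 0 : ZMod (ℓ ^ e))) ∧
           ¬ IsUnit ((b : ZMod (ℓ ^ e)) * w.2 + (a 1 : ZMod (ℓ ^ e))))} := by
    rw [cnt, ← Nat.card_eq_fintype_card]
    refine Nat.card_congr (Equiv.subtypeEquiv (piFinTwoEquiv fun _ => ZMod (ℓ ^ e)) ?_)
    intro v
    exact hpred v
  rw [key, Fintype.card_subtype_compl]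
  have hprod : Fintype.card
      {w : ZMod (ℓ ^ e) × ZMod (ℓ ^ e) //
        (¬ IsUnit ((b : ZMod (ℓ ^ e)) * w.1 + (a 0 : ZMod (ℓ ^ e)))) ∧
        (¬ IsUnit ((b : ZMod (ℓ ^ e)) * w.2 + (a 1 : ZMod (ℓ ^ e))))} =
      ℓ ^ (e - 1) * ℓ ^ (e - 1) := by
    rw [Fintype.card_congr (Equiv.subtypeProdEquivProd
      (p := fun u => ¬ IsUnit ((b : ZMod (ℓ ^ e)) * u + (a 0 : ZMod (ℓ ^ e))))
      (q := fun u => ¬ IsUnit ((b : ZMod (ℓ ^ e)) * u + (a 1 : ZMod (ℓ ^ e))))), Fintype.card_prod,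
      ← Nat.card_eq_fintype_card, ← Nat.card_eq_fintype_card,
      card_bad hp he hbu, card_bad hp he hbu]
  rw [hprod, Fintype.card_prod, ZMod.card, ← pow_add, ← pow_add,
    show e + e = 2 * e from by omega, show e - 1 + (e - 1) = 2 * e - 2 from by omega]


lemma isCoprime_map_equiv {R S : Type*} [CommSemiring R] [CommSemiring S] (e : R ≃+* S)
    (x y : R) : IsCoprime (e x) (e y) ↔ IsCoprime x y := by
  constructor
  · intro h
    have := h.map (e.symm : S →+* R)
    simpa using this
  · intro h
    exact h.map (e : R →+* S)

lemma cnt_mul (a : Fin 2 → ℤ) (b : ℕ) {m n : ℕ} (h : m.Coprime n) :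
    cnt a b (m * n) = cnt a b m * cnt a b n := by
  let e := ZMod.chineseRemainder h
  let f : ZMod (m * n) →+* ZMod m := (RingHom.fst _ _).comp (e : ZMod (m * n) →+* ZMod m × ZMod n)
  let g : ZMod (m * n) →+* ZMod n := (RingHom.snd _ _).comp (e : ZMod (m * n) →+* ZMod m × ZMod n)
  have hf : ∀ (x : ZMod (m * n)) (i : Fin 2),
      f ((b : ZMod (m * n)) * x + (a i : ZMod (m * n))) = (b : ZMod m) * f x + (a i : ZMod m) := by
    intro x i; rw [map_add, map_mul, map_natCast, map_intCast]
  have hg : ∀ (x : ZMod (m * n)) (i : Fin 2),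
      g ((b : ZMod (m * n)) * x + (a i : ZMod (m * n))) = (b : ZMod n) * g x + (a i : ZMod n) := by
    intro x i; rw [map_add, map_mul, map_natCast, map_intCast]
  have key : ∀ v : Fin 2 → ZMod (m * n), Cpred a b (m * n) v ↔
      (Cpred a b m (fun i => f (v i)) ∧ Cpred a b n (fun i => g (v i))) := by
    intro v
    rw [Cpred, ← isCoprime_map_equiv e, isCoprime_prod_iff]
    constructor
    · rintro ⟨h1, h2⟩
      constructor
      · show IsCoprime ((b : ZMod m) * f (v 0) + (a 0 : ZMod m))
          ((b : ZMod m) * f (v 1) + (a 1 : ZMod m))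
        rw [← hf (v 0) 0, ← hf (v 1) 1]
        exact h1
      · show IsCoprime ((b : ZMod n) * g (v 0) + (a 0 : ZMod n))
          ((b : ZMod n) * g (v 1) + (a 1 : ZMod n))
        rw [← hg (v 0) 0, ← hg (v 1) 1]
        exact h2
    · rintro ⟨h1, h2⟩
      constructor
      · show IsCoprime (f _) (f _)
        rw [hf (v 0) 0, hf (v 1) 1]
        exact h1
      · show IsCoprime (g _) (g _)
        rw [hg (v 0) 0, hg (v 1) 1]
        exact h2
  let E1 : (Fin 2 → ZMod (m * n)) ≃ (Fin 2 → ZMod m) × (Fin 2 → ZMod n) :=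
    (Equiv.piCongrRight fun _ => e.toEquiv).trans (Equiv.arrowProdEquivProdArrow _ _ _)
  rw [cnt, cnt, cnt, ← Nat.card_prod]
  exact Nat.card_congr ((Equiv.subtypeEquiv E1 fun v => key v).trans
    (Equiv.subtypeProdEquivProd (p := Cpred a b m) (q := Cpred a b n)))

lemma cnt_formula (a : Fin 2 → ℤ) (b : ℕ)
    (hgcdab : Nat.gcd (Int.gcd (a 0) (a 1)) b = 1) :
    ∀ q : ℕ, 1 ≤ q → (cnt a b q : ℝ) =
      (q : ℝ) ^ 2 * ∏ p ∈ q.primeFactors.filter (fun p => ¬ p ∣ b), (1 - 1 / (p : ℝ) ^ 2) := by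
  intro q
  induction q using Nat.recOnPosPrimePosCoprime with
  | prime_pow p n hp hn =>
    intro _
    rw [Nat.primeFactors_prime_pow hn.ne' hp, Finset.filter_singleton]
    have hp0 : (p : ℝ) ≠ 0 := Nat.cast_ne_zero.mpr hp.pos.ne'
    by_cases hd : p ∣ b
    · rw [cnt_prime_pow_dvd hp hn.ne' hd hgcdab]
      simp only [hd, not_true_eq_false, if_false, Finset.prod_empty, mul_one]
      push_cast
      rw [← pow_mul, mul_comm n 2]
    · rw [cnt_prime_pow_not_dvd hp hn.ne' hd]
      simp only [hd, not_false_eq_true, if_true, Finset.prod_singleton]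
      have hle : p ^ (2 * n - 2) ≤ p ^ (2 * n) := Nat.pow_le_pow_right hp.pos (by omega)
      push_cast [hle]
      have h2 : 2 * n = (2 * n - 2) + 2 := by omega
      rw [← pow_mul, mul_comm n 2, h2, pow_add]
      field_simp
      ring_nf
      rw [Nat.add_sub_cancel_left]
  | zero => intro h; omega
  | one =>
    intro _
    simp [cnt_one]
  | coprime m n hm hn hco ihm ihn =>
    intro _
    rw [cnt_mul a b hco, hco.primeFactors_mul, Finset.filter_union,
      Finset.prod_union (Finset.disjoint_filter_filter hco.disjoint_primeFactors)]
    push_cast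
    rw [ihm (by omega), ihn (by omega)]
    ring


lemma vol_inter (a b : ℝ) :
    volume (Set.Ico (0:ℝ) 1 ∩ Set.Ioo a b) = ENNReal.ofReal (min 1 b - max 0 a) := by
  apply le_antisymm
  · have h2 : Set.Ico (0:ℝ) 1 ∩ Set.Ioo a b ⊆ Set.Ico (max 0 a) (min 1 b) := by
      rintro t ⟨⟨h1, h2⟩, h3, h4⟩
      exact ⟨max_le h1 h3.le, lt_min h2 h4⟩
    calc volume (Set.Ico (0:ℝ) 1 ∩ Set.Ioo a b) ≤ volume (Set.Ico (max 0 a) (min 1 b)) :=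
          measure_mono h2
      _ = ENNReal.ofReal (min 1 b - max 0 a) := Real.volume_Ico
  · have h1 : Set.Ioo (max 0 a) (min 1 b) ⊆ Set.Ico (0:ℝ) 1 ∩ Set.Ioo a b := by
      rintro t ⟨h1, h2⟩
      refine ⟨⟨(le_max_left 0 a).trans h1.le, lt_of_lt_of_le h2 (min_le_left 1 b)⟩,
        lt_of_le_of_lt (le_max_right 0 a) h1, lt_of_lt_of_le h2 (min_le_right 1 b)⟩
    calc ENNReal.ofReal (min 1 b - max 0 a) = volume (Set.Ioo (max 0 a) (min 1 b)) :=
          Real.volume_Ioo.symm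
      _ ≤ volume (Set.Ico (0:ℝ) 1 ∩ Set.Ioo a b) := measure_mono h1

lemma volume_core (s δ : ℝ) (hδ : 0 < δ) (hδ2 : δ ≤ 1/2) :
    volume {t : ℝ | t ∈ Set.Ico (0:ℝ) 1 ∧ ∃ k : ℤ, |t - s - k| < δ} = ENNReal.ofReal (2*δ) := by
  set σ := Int.fract s with hσdef
  have hs0 : 0 ≤ σ := Int.fract_nonneg s
  have hs1 : σ < 1 := Int.fract_lt_one s
  have hfr : σ = s - ⌊s⌋ := rfl
  have hsplit : ∀ t : ℝ, (∃ k : ℤ, |t - s - k| < δ) ↔ (∃ k : ℤ, |t - σ - k| < δ) := by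
    intro t
    constructor
    · rintro ⟨k, hk⟩
      refine ⟨k + ⌊s⌋, ?_⟩
      have e : t - σ - ((k + ⌊s⌋ : ℤ) : ℝ) = t - s - k := by rw [hfr]; push_cast; ring
      rw [e]; exact hk
    · rintro ⟨k, hk⟩
      refine ⟨k - ⌊s⌋, ?_⟩
      have e : t - s - ((k - ⌊s⌋ : ℤ) : ℝ) = t - σ - k := by rw [hfr]; push_cast; ring
      rw [e]; exact hk
  have hset : {t : ℝ | t ∈ Set.Ico (0:ℝ) 1 ∧ ∃ k : ℤ, |t - s - k| < δ}
      = (Set.Ico (0:ℝ) 1 ∩ Set.Ioo (σ - δ) (σ + δ))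
      ∪ (Set.Ico (0:ℝ) 1 ∩ Set.Ioo (σ + 1 - δ) (σ + 1 + δ))
      ∪ (Set.Ico (0:ℝ) 1 ∩ Set.Ioo (σ - 1 - δ) (σ - 1 + δ)) := by
    ext t
    simp only [Set.mem_setOf_eq, Set.mem_union, Set.mem_inter_iff, Set.mem_Ioo, Set.mem_Ico]
    rw [and_congr_right fun _ => hsplit t]
    constructor
    · rintro ⟨⟨ht0, ht1⟩, k, hk⟩
      rw [abs_lt] at hk
      obtain ⟨hk1, hk2⟩ := hk
      have hklb : (-2 : ℝ) < (k : ℝ) := by linarith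
      have hkub : (k : ℝ) < 2 := by linarith
      have hklb' : (-2 : ℤ) < k := by exact_mod_cast hklb
      have hkub' : k < 2 := by exact_mod_cast hkub
      interval_cases k
      · push_cast at hk1 hk2
        exact Or.inr ⟨⟨ht0, ht1⟩, by linarith, by linarith⟩
      · push_cast at hk1 hk2
        exact Or.inl (Or.inl ⟨⟨ht0, ht1⟩, by linarith, by linarith⟩)
      · push_cast at hk1 hk2
        exact Or.inl (Or.inr ⟨⟨ht0, ht1⟩, by linarith, by linarith⟩)
    · rintro ((⟨ht, h1, h2⟩ | ⟨ht, h1, h2⟩) | ⟨ht, h1, h2⟩)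
      · exact ⟨ht, 0, by rw [abs_lt]; push_cast; constructor <;> linarith⟩
      · exact ⟨ht, 1, by rw [abs_lt]; push_cast; constructor <;> linarith⟩
      · exact ⟨ht, -1, by rw [abs_lt]; push_cast; constructor <;> linarith⟩
  have hmeas : ∀ a b : ℝ, MeasurableSet (Set.Ico (0:ℝ) 1 ∩ Set.Ioo a b) :=
    fun a b => measurableSet_Ico.inter measurableSet_Ioo
  have hd2 : Disjoint
      ((Set.Ico (0:ℝ) 1 ∩ Set.Ioo (σ - δ) (σ + δ))
        ∪ (Set.Ico (0:ℝ) 1 ∩ Set.Ioo (σ + 1 - δ) (σ + 1 + δ)))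
      (Set.Ico (0:ℝ) 1 ∩ Set.Ioo (σ - 1 - δ) (σ - 1 + δ)) := by
    rw [Set.disjoint_left]
    rintro t (⟨⟨h0, h1⟩, h2, h3⟩ | ⟨⟨h0, h1⟩, h2, h3⟩) ⟨⟨g0, g1⟩, g2, g3⟩ <;> linarith
  have hd1 : Disjoint (Set.Ico (0:ℝ) 1 ∩ Set.Ioo (σ - δ) (σ + δ))
      (Set.Ico (0:ℝ) 1 ∩ Set.Ioo (σ + 1 - δ) (σ + 1 + δ)) := by
    rw [Set.disjoint_left]
    rintro t ⟨⟨h0, h1⟩, h2, h3⟩ ⟨⟨g0, g1⟩, g2, g3⟩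
    linarith
  rw [hset, measure_union hd2 (hmeas _ _), measure_union hd1 (hmeas _ _),
    vol_inter, vol_inter, vol_inter]
  have e1 : min 1 (σ + 1 + δ) = 1 := min_eq_left (by linarith)
  have e2 : max 0 (σ + 1 - δ) = σ + 1 - δ := max_eq_right (by linarith)
  have e3 : min 1 (σ - 1 + δ) = σ - 1 + δ := min_eq_right (by linarith)
  have e4 : max 0 (σ - 1 - δ) = 0 := max_eq_left (by linarith)
  rw [e1, e2, e3, e4]
  rcases lt_or_ge σ δ with hc | hc
  · have f1 : min 1 (σ + δ) = σ + δ := min_eq_right (by linarith)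
    have f2 : max 0 (σ - δ) = 0 := max_eq_left (by linarith)
    rw [f1, f2, ENNReal.ofReal_eq_zero.mpr (by linarith : σ - 1 + δ - 0 ≤ 0), add_zero,
      ← ENNReal.ofReal_add (by linarith) (by linarith)]
    congr 1; ring
  rcases le_or_gt σ (1 - δ) with hc2 | hc2
  · have f1 : min 1 (σ + δ) = σ + δ := min_eq_right (by linarith)
    have f2 : max 0 (σ - δ) = σ - δ := max_eq_right (by linarith)
    rw [f1, f2, ENNReal.ofReal_eq_zero.mpr (by linarith : 1 - (σ + 1 - δ) ≤ 0), add_zero,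
      ENNReal.ofReal_eq_zero.mpr (by linarith : σ - 1 + δ - 0 ≤ 0), add_zero]
    congr 1; ring
  · have f1 : min 1 (σ + δ) = 1 := min_eq_left (by linarith)
    have f2 : max 0 (σ - δ) = σ - δ := max_eq_right (by linarith)
    rw [f1, f2, ENNReal.ofReal_eq_zero.mpr (by linarith : 1 - (σ + 1 - δ) ≤ 0), add_zero,
      ← ENNReal.ofReal_add (by linarith) (by linarith)]
    congr 1; ring

lemma oneD (q : ℕ) [NeZero q] {ε : ℝ} (hε : 0 < ε) (hε2 : ε ≤ 1/2) (c : ℝ) (r : ZMod q) :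
    volume {t : ℝ | t ∈ Set.Ico (0:ℝ) 1 ∧
        ∃ p : ℤ, ((p : ZMod q) = r ∧ |(q : ℝ) * t - p - c| < ε)}
      = ENNReal.ofReal (2 * ε / q) := by
  have hq1 : 1 ≤ q := Nat.pos_of_ne_zero (NeZero.ne q)
  have hq0 : 0 < (q : ℝ) := by exact_mod_cast hq1
  have hqR : (q : ℝ) ≠ 0 := ne_of_gt hq0
  have hset : {t : ℝ | t ∈ Set.Ico (0:ℝ) 1 ∧
        ∃ p : ℤ, ((p : ZMod q) = r ∧ |(q : ℝ) * t - p - c| < ε)}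
      = {t : ℝ | t ∈ Set.Ico (0:ℝ) 1 ∧ ∃ k : ℤ, |t - ((r.val : ℝ) + c)/q - k| < ε / q} := by
    ext t
    simp only [Set.mem_setOf_eq]
    refine and_congr_right fun _ => ?_
    constructor
    · rintro ⟨p, hp1, hp2⟩
      have hrv : ((r.val : ℤ) : ZMod q) = r := by
        push_cast [ZMod.natCast_val, ZMod.cast_id]
        rfl
      rw [← hrv, ZMod.intCast_eq_intCast_iff] at hp1
      obtain ⟨k, hk⟩ := Int.modEq_iff_dvd.mp hp1
      refine ⟨-k, ?_⟩
      have hkr : ((r.val : ℝ)) - p = q * k := by exact_mod_cast congrArg (fun z : ℤ => (z : ℝ)) hk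
      have hpk : (p : ℝ) = (r.val : ℝ) - q * k := by linarith [hkr]
      have key : t - ((r.val : ℝ) + c)/q - ((-k : ℤ) : ℝ) = ((q : ℝ) * t - p - c)/q := by
        rw [hpk]
        push_cast
        field_simp
        ring
      rw [key, abs_div, abs_of_pos hq0]
      gcongr
    · rintro ⟨k, hk⟩
      refine ⟨(r.val : ℤ) + q * k, ?_, ?_⟩
      · push_cast [ZMod.natCast_val, ZMod.cast_id, ZMod.natCast_self]
        ring
      · have key : (q : ℝ) * t - (((r.val : ℤ) + q * k : ℤ) : ℝ) - c
            = q * (t - ((r.val : ℝ) + c)/q - k) := by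
          push_cast
          field_simp
          ring
        rw [key, abs_mul, abs_of_pos hq0]
        calc (q : ℝ) * |t - ((r.val : ℝ) + c)/q - k| < q * (ε / q) :=
              mul_lt_mul_of_pos_left hk hq0
          _ = ε := by field_simp
  rw [hset, volume_core _ _ (by positivity)
    ((div_le_self hε.le (by exact_mod_cast hq1)).trans hε2), mul_div_assoc]

/-- Lemma: under the Dirichlet conditions on `(a,b)` and `ψ(q) ≤ 1/2`, the Lebesgue
measure of `Ã_q` equals `4 ψ(q)² ∏_{p | q, p ∤ b} (1 - p⁻²)`. -/
theorem measure_Atilde (δ : ℝ) (hδ : 0 < δ) (ψ : ℕ → ℝ) (hψ : ∀ n, 0 ≤ ψ n)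
    (y : Fin 2 → ℝ) (q : ℕ) (hq : 1 ≤ q) (hhalf : ψ q ≤ 1 / 2)
    (a : Fin 2 → ℤ) (b : ℕ) (hb1 : 1 ≤ b)
    (hab : ‖(b : ℝ) • y - (fun i => (a i : ℝ))‖ < (q : ℝ) ^ (-(δ / (δ + 3))))
    (hb2 : (b : ℝ) ≤ (q : ℝ) ^ (2 * δ / (δ + 3)))
    (hgcdab : Nat.gcd (Int.gcd (a 0) (a 1)) b = 1) :
    volume (Atilde ψ y a b q) =
      ENNReal.ofReal (4 * ψ q ^ 2 *
        ∏ p ∈ q.primeFactors.filter (fun p => ¬ p ∣ b), (1 - 1 / (p : ℝ) ^ 2)) := by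
  classical
  have hq0 : q ≠ 0 := by omega
  haveI : NeZero q := ⟨hq0⟩
  have hqR : (0 : ℝ) < q := by exact_mod_cast Nat.pos_of_ne_zero hq0
  rcases eq_or_lt_of_le (hψ q) with h0 | hε
  · have hempty : Atilde ψ y a b q = ∅ := by
      refine Set.eq_empty_iff_forall_notMem.mpr fun x hx => ?_
      obtain ⟨-, p, hnorm, -⟩ := hx
      rw [← h0] at hnorm
      exact absurd hnorm (not_lt.mpr (norm_nonneg _))
    rw [hempty, measure_empty, ← h0]
    norm_num
  set ε := ψ q with hεdef
  set T : ZMod q → ℝ → Set ℝ := fun r c =>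
    {t : ℝ | t ∈ Set.Ico (0:ℝ) 1 ∧ ∃ p : ℤ, ((p : ZMod q) = r ∧ |(q : ℝ) * t - p - c| < ε)}
    with hT
  set S : Finset (Fin 2 → ZMod q) := Finset.univ.filter (fun v => Cpred a b q v) with hS
  have hgcd_iff : ∀ p : Fin 2 → ℤ,
      gcdVec q (fun i => (b : ℤ) * p i + a i) = 1 ↔ Cpred a b q (fun i => (p i : ZMod q)) := by
    intro p
    have e0 : (((b : ℤ) * p 0 + a 0 : ℤ) : ZMod q)
        = (b : ZMod q) * ((p 0 : ℤ) : ZMod q) + ((a 0 : ℤ) : ZMod q) := by push_cast; ring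
    have e1 : (((b : ℤ) * p 1 + a 1 : ℤ) : ZMod q)
        = (b : ZMod q) * ((p 1 : ℤ) : ZMod q) + ((a 1 : ℤ) : ZMod q) := by push_cast; ring
    simp only [gcdVec, Cpred]
    rw [gcd_eq_one_iff_isCoprime, e0, e1]
  have hnorm_iff : ∀ (x : Fin 2 → ℝ) (p : Fin 2 → ℤ),
      ‖(q : ℝ) • x - (fun i => (p i : ℝ)) - y‖ < ε ↔
        ∀ i, |(q : ℝ) * x i - p i - y i| < ε := by
    intro x p
    rw [pi_norm_lt_iff hε]
    refine forall_congr' fun i => ?_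
    simp [Real.norm_eq_abs]
  have hA : Atilde ψ y a b q = ⋃ v ∈ S, Set.univ.pi (fun i => T (v i) (y i)) := by
    ext x
    simp only [Atilde, Set.mem_setOf_eq, Set.mem_iUnion, exists_prop, Set.mem_pi,
      Set.mem_univ, true_implies, unitBox]
    constructor
    · rintro ⟨hbox, p, hnorm, hgcd⟩
      refine ⟨fun i => (p i : ZMod q), ?_, ?_⟩
      · rw [hS, Finset.mem_filter]
        exact ⟨Finset.mem_univ _, (hgcd_iff p).mp hgcd⟩
      · intro i
        exact ⟨hbox i, p i, rfl, (hnorm_iff x p).mp hnorm i⟩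
    · rintro ⟨v, hv, hx⟩
      choose hIco p hp1 hp2 using hx
      refine ⟨hIco, p, (hnorm_iff x p).mpr hp2, ?_⟩
      rw [hgcd_iff]
      have hveq : (fun i => ((p i : ℤ) : ZMod q)) = v := funext fun i => hp1 i
      rw [hveq]
      exact (Finset.mem_filter.mp hv).2
  have hdisj : (↑S : Set (Fin 2 → ZMod q)).PairwiseDisjoint
      (fun v => Set.univ.pi fun i => T (v i) (y i)) := by
    intro v _ w _ hvw
    refine Set.disjoint_left.mpr fun x hxv hxw => hvw ?_
    funext i
    obtain ⟨-, p, hp1, hp2⟩ := hxv i (Set.mem_univ i)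
    obtain ⟨-, p', hq1, hq2⟩ := hxw i (Set.mem_univ i)
    have habs : |((p - p' : ℤ) : ℝ)| < 1 := by
      have : ((p - p' : ℤ) : ℝ) = ((q : ℝ) * x i - p' - y i) - ((q : ℝ) * x i - p - y i) := by
        push_cast; ring
      rw [this]
      calc |((q : ℝ) * x i - p' - y i) - ((q : ℝ) * x i - p - y i)|
          ≤ |(q : ℝ) * x i - p' - y i| + |(q : ℝ) * x i - p - y i| := abs_sub _ _
        _ < ε + ε := add_lt_add hq2 hp2
        _ ≤ 1 := by rw [hεdef]; linarith
    have hpp : p = p' := by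
      have h1 : |p - p'| < 1 := by exact_mod_cast habs
      have := Int.abs_lt_one_iff.mp h1
      omega
    rw [← hp1, ← hq1, hpp]
  have hTmeas : ∀ (r : ZMod q) (c : ℝ), MeasurableSet (T r c) := by
    intro r c
    have heq : T r c = Set.Ico (0:ℝ) 1 ∩ ⋃ (p : ℤ) (_ : (p : ZMod q) = r),
        Set.Ioo (((p : ℝ) + c - ε)/q) (((p : ℝ) + c + ε)/q) := by
      ext t
      simp only [hT, Set.mem_setOf_eq, Set.mem_inter_iff, Set.mem_iUnion, Set.mem_Ioo,
        exists_prop]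
      refine and_congr_right fun _ => ?_
      refine exists_congr fun p => and_congr_right fun _ => ?_
      rw [abs_lt]
      constructor
      · rintro ⟨h1, h2⟩
        constructor
        · rw [div_lt_iff₀ hqR]; linarith
        · rw [lt_div_iff₀ hqR]; linarith
      · rintro ⟨h1, h2⟩
        rw [div_lt_iff₀ hqR] at h1
        rw [lt_div_iff₀ hqR] at h2
        constructor <;> linarith
    rw [heq]
    exact measurableSet_Ico.inter
      (MeasurableSet.iUnion fun p => MeasurableSet.iUnion fun _ => measurableSet_Ioo)
  have hvol : ∀ v : Fin 2 → ZMod q,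
      volume (Set.univ.pi fun i => T (v i) (y i)) = ENNReal.ofReal (2 * ε / q) ^ 2 := by
    intro v
    rw [volume_pi_pi]
    have h1 : ∀ i : Fin 2, volume (T (v i) (y i)) = ENNReal.ofReal (2 * ε / q) :=
      fun i => oneD q hε hhalf (y i) (v i)
    simp [h1]
  rw [hA, measure_biUnion_finset hdisj
    (fun v _ => MeasurableSet.univ_pi fun i => hTmeas _ _)]
  rw [Finset.sum_congr rfl (fun v _ => hvol v), Finset.sum_const, nsmul_eq_mul]
  have hScard : (S.card : ℕ) = cnt a b q := by
    rw [cnt, Nat.card_eq_fintype_card, Fintype.card_subtype]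
  have hprod_nonneg : 0 ≤ ∏ p ∈ q.primeFactors.filter (fun p => ¬ p ∣ b), (1 - 1/(p:ℝ)^2) := by
    refine Finset.prod_nonneg fun p hp => ?_
    have hp2 : 2 ≤ p := (Nat.prime_of_mem_primeFactors (Finset.mem_filter.mp hp).1).two_le
    have hge : (1 : ℝ) ≤ (p : ℝ) ^ 2 := by
      have : (1 : ℝ) ≤ (p : ℝ) := by exact_mod_cast Nat.one_le_of_lt hp2
      nlinarith
    have : 1 / (p : ℝ) ^ 2 ≤ 1 := by
      rw [div_le_one (by positivity)]
      exact hge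
    linarith
  rw [hScard]
  calc (cnt a b q : ENNReal) * ENNReal.ofReal (2 * ε / q) ^ 2
      = ENNReal.ofReal (cnt a b q) * ENNReal.ofReal ((2 * ε / q) ^ 2) := by
        rw [ENNReal.ofReal_natCast, ENNReal.ofReal_pow (by positivity)]
    _ = ENNReal.ofReal ((cnt a b q : ℝ) * (2 * ε / q) ^ 2) :=
        (ENNReal.ofReal_mul (by positivity)).symm
    _ = ENNReal.ofReal (4 * ε ^ 2 *
          ∏ p ∈ q.primeFactors.filter (fun p => ¬ p ∣ b), (1 - 1 / (p : ℝ) ^ 2)) := by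
        rw [cnt_formula a b hgcdab q hq]
        congr 1
        field_simp
        ring
end

section
/- Let δ > 0, ψ : ℕ → ℝ_{≥0} with ψ(q) ≤ 1/2 for every q, y ∈ ℝ², and let (a_q, b_q)_{q∈ℕ} ⊂ ℤ² × ℕ satisfy |b_q·y − a_q| < q^{−δ/(δ+3)}, 1 ≤ b_q ≤ q^{2δ/(δ+3)}, and gcd(a_q, b_q) = 1 for all q. Suppose ∑_{q=1}^∞ ψ(q)² = ∞. If the sets {Ã_q}_{q∈ℕ} are quasi-independent on average, i.e. limsup_{Q→∞} (∑_{q=1}^Q |Ã_q|)² / (∑_{q,r=1}^Q |Ã_q ∩ Ã_r|) > 0, then |limsup_{q→∞} Ã_q| = 1. -/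
open MeasureTheory Real Filter

namespace DSAux
open Metric Set

noncomputable section

def cube (q : ℕ) (y : Fin 2 → ℝ) (e : ℝ) (p : Fin 2 → ℤ) : Set (Fin 2 → ℝ) :=
  Set.univ.pi fun i => Set.Ioo (((p i : ℝ) + y i - e)/q) (((p i : ℝ) + y i + e)/q)

lemma pinorm_lt_iff {z : Fin 2 → ℝ} {e : ℝ} : ‖z‖ < e ↔ ∀ i, |z i| < e := by
  constructor
  · intro h i
    exact lt_of_le_of_lt (by simpa [Real.norm_eq_abs] using norm_le_pi_norm z i) h
  · intro h
    have he : 0 < e := lt_of_le_of_lt (abs_nonneg _) (h 0)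
    rw [pi_norm_lt_iff he]; simpa [Real.norm_eq_abs] using h

lemma mem_cube_iff {q : ℕ} (hq : 0 < q) {y : Fin 2 → ℝ} {e : ℝ} {p : Fin 2 → ℤ}
    {x : Fin 2 → ℝ} :
    x ∈ cube q y e p ↔ ∀ i, |(q:ℝ) * x i - p i - y i| < e := by
  have hq' : (0:ℝ) < q := by exact_mod_cast hq
  simp only [cube, Set.mem_pi, Set.mem_univ, forall_true_left, Set.mem_Ioo]
  refine forall_congr' fun i => ?_
  rw [abs_lt]
  constructor
  · rintro ⟨h1, h2⟩
    rw [div_lt_iff₀ hq'] at h1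
    rw [lt_div_iff₀ hq'] at h2
    constructor <;> nlinarith
  · rintro ⟨h1, h2⟩
    constructor
    · rw [div_lt_iff₀ hq']; nlinarith
    · rw [lt_div_iff₀ hq']; nlinarith

lemma norm_eval {q : ℕ} {y : Fin 2 → ℝ} {p : Fin 2 → ℤ} {x : Fin 2 → ℝ} (i : Fin 2) :
    ((q : ℝ) • x - (fun i => (p i : ℝ)) - y) i = (q:ℝ) * x i - p i - y i := by
  simp [Pi.smul_apply, smul_eq_mul]

lemma mem_Atilde_iff {ψ : ℕ → ℝ} {y : Fin 2 → ℝ} {aa : Fin 2 → ℤ} {bb q : ℕ}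
    (hq : 0 < q) {x : Fin 2 → ℝ} :
    x ∈ Atilde ψ y aa bb q ↔ x ∈ unitBox ∧ ∃ p : Fin 2 → ℤ,
      gcdVec q (fun i => (bb:ℤ) * p i + aa i) = 1 ∧ x ∈ cube q y (ψ q) p := by
  simp only [Atilde, Set.mem_setOf_eq, Set.mem_sep_iff]
  refine and_congr_right fun _ => exists_congr fun p => ?_
  rw [mem_cube_iff hq, and_comm]
  refine and_congr_right fun _ => ?_
  rw [pinorm_lt_iff]
  exact forall_congr' fun i => by rw [norm_eval]

lemma volume_cube {q : ℕ} (hq : 0 < q) (y : Fin 2 → ℝ) {e : ℝ} (he : 0 ≤ e)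
    (p : Fin 2 → ℤ) :
    volume (cube q y e p) = ENNReal.ofReal (2*e/q) ^ 2 := by
  have hq' : (0:ℝ) < q := by exact_mod_cast hq
  rw [cube, volume_pi_pi]
  have h : ∀ i : Fin 2,
      volume (Set.Ioo (((p i : ℝ) + y i - e)/q) (((p i : ℝ) + y i + e)/q))
      = ENNReal.ofReal (2*e/q) := by
    intro i; rw [Real.volume_Ioo]; congr 1; field_simp; ring
  simp only [h, Finset.prod_const, Finset.card_univ, Fintype.card_fin]

lemma cube_disjoint {q : ℕ} (hq : 0 < q) {y : Fin 2 → ℝ} {e : ℝ} (he : e ≤ 1/2)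
    {p p' : Fin 2 → ℤ} (hne : p ≠ p') :
    Disjoint (cube q y e p) (cube q y e p') := by
  rw [Set.disjoint_left]
  intro x hx hx'
  apply hne
  funext i
  have h1 := (mem_cube_iff hq).1 hx i
  have h2 := (mem_cube_iff hq).1 hx' i
  have : |(p i : ℝ) - p' i| < 1 := by
    have := abs_lt.1 h1; have := abs_lt.1 h2; rw [abs_lt]; constructor <;> linarith
  have h3 : |p i - p' i| < 1 := by
    exact_mod_cast (by push_cast; exact this : |((p i - p' i : ℤ) : ℝ)| < 1)
  rw [abs_lt] at h3
  omega

lemma measurableSet_unitBox : MeasurableSet unitBox :=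
  MeasurableSet.univ_pi fun _ => measurableSet_Ico

lemma volume_unitBox : volume unitBox = 1 := by
  rw [unitBox, volume_pi_pi]
  simp [Real.volume_Ico]

lemma measurableSet_cube {q : ℕ} {y : Fin 2 → ℝ} {e : ℝ} {p : Fin 2 → ℤ} :
    MeasurableSet (cube q y e p) :=
  MeasurableSet.univ_pi fun _ => measurableSet_Ioo

lemma measurableSet_Atilde (ψ : ℕ → ℝ) (y : Fin 2 → ℝ) (aa : Fin 2 → ℤ) (bb q : ℕ) :
    MeasurableSet (Atilde ψ y aa bb q) := by
  have : Atilde ψ y aa bb q = unitBox ∩ ⋃ p : Fin 2 → ℤ,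
      ⋃ (_ : gcdVec q (fun i => (bb:ℤ) * p i + aa i) = 1),
      {x : Fin 2 → ℝ | ‖(q : ℝ) • x - (fun i => (p i : ℝ)) - y‖ < ψ q} := by
    ext x
    simp only [Atilde, Set.mem_sep_iff, Set.mem_inter_iff, Set.mem_iUnion, Set.mem_setOf_eq]
    tauto
  rw [this]
  refine measurableSet_unitBox.inter (MeasurableSet.iUnion fun p =>
    MeasurableSet.iUnion fun _ => ?_)
  have hc : Continuous fun x : Fin 2 → ℝ => ‖(q : ℝ) • x - (fun i => (p i : ℝ)) - y‖ :=
    (((continuous_id.const_smul ((q:ℝ))).sub continuous_const).sub continuous_const).norm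
  exact (isOpen_lt hc continuous_const).measurableSet

lemma Atilde_subset_unitBox {ψ : ℕ → ℝ} {y : Fin 2 → ℝ} {aa : Fin 2 → ℤ} {bb q : ℕ} :
    Atilde ψ y aa bb q ⊆ unitBox := fun _ hx => hx.1

lemma telescope_bound (T : ℕ) (hT : 5 ≤ T) :
    ∑ n ∈ Finset.Icc 5 T, ((1:ℝ)/(n-1) - 1/n) ≤ 1/4 - 1/T := by
  induction T with
  | zero => omega
  | succ T ih =>
    rcases Nat.lt_or_ge T 5 with h | h
    · have hT4 : T = 4 := by omega
      subst hT4
      norm_num [show Finset.Icc 5 5 = {5} by rfl]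
    · have hind := ih h
      rw [Finset.sum_Icc_succ_top (by omega : 5 ≤ T + 1)]
      have hT' : (5:ℝ) ≤ T := by exact_mod_cast h
      have he : ((T:ℝ)+1) - 1 = T := by ring
      push_cast
      rw [he]
      have hpos : (0:ℝ) < T := by linarith
      linarith

lemma sum_primes_inv_sq (S : Finset ℕ) (hS : ∀ ℓ ∈ S, Nat.Prime ℓ) :
    ∑ ℓ ∈ S, ((ℓ:ℝ)⁻¹)^2 ≤ 2/3 := by
  classical
  have hsplit := Finset.sum_filter_add_sum_filter_not S (fun ℓ => ℓ < 5)
    (fun ℓ => ((ℓ:ℝ)⁻¹)^2)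
  have h1 : ∑ ℓ ∈ S.filter (fun ℓ => ℓ < 5), ((ℓ:ℝ)⁻¹)^2 ≤ 13/36 := by
    have hsub : S.filter (fun ℓ => ℓ < 5) ⊆ ({2, 3} : Finset ℕ) := by
      intro ℓ hℓ
      simp only [Finset.mem_filter] at hℓ
      have hp := hS ℓ hℓ.1
      have h5 := hℓ.2
      simp only [Finset.mem_insert, Finset.mem_singleton]
      have h2 := hp.two_le
      interval_cases ℓ
      · left; rfl
      · right; rfl
      · norm_num at hp
    calc ∑ ℓ ∈ S.filter (fun ℓ => ℓ < 5), ((ℓ:ℝ)⁻¹)^2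
        ≤ ∑ ℓ ∈ ({2,3} : Finset ℕ), ((ℓ:ℝ)⁻¹)^2 :=
          Finset.sum_le_sum_of_subset_of_nonneg hsub (by intros; positivity)
      _ ≤ 13/36 := by norm_num
  have h2 : ∑ ℓ ∈ S.filter (fun ℓ => ¬ ℓ < 5), ((ℓ:ℝ)⁻¹)^2 ≤ 1/4 := by
    set S5 := S.filter (fun ℓ => ¬ ℓ < 5) with hS5
    have hmem : ∀ ℓ ∈ S5, 5 ≤ ℓ := by
      intro ℓ hℓ; simp only [hS5, Finset.mem_filter] at hℓ; omega
    have hstep : ∀ ℓ ∈ S5, ((ℓ:ℝ)⁻¹)^2 ≤ (1:ℝ)/(ℓ-1) - 1/ℓ := by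
      intro ℓ hℓ
      have h5 : (5:ℝ) ≤ ℓ := by exact_mod_cast hmem ℓ hℓ
      have h1 : (0:ℝ) < (ℓ:ℝ) - 1 := by linarith
      have h0 : (0:ℝ) < ℓ := by linarith
      rw [div_sub_div _ _ (ne_of_gt h1) (ne_of_gt h0)]
      have hnum : (1:ℝ) * ℓ - ((ℓ:ℝ)-1) * 1 = 1 := by ring
      rw [hnum, inv_pow]
      rw [inv_eq_one_div, div_le_div_iff₀ (by positivity) (by positivity)]
      nlinarith
    set T := S5.sup id with hT
    have hsub2 : S5 ⊆ Finset.Icc 5 (max T 5) := by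
      intro ℓ hℓ
      simp only [Finset.mem_Icc]
      exact ⟨hmem ℓ hℓ, le_max_of_le_left (Finset.le_sup (f := id) hℓ)⟩
    calc ∑ ℓ ∈ S5, ((ℓ:ℝ)⁻¹)^2 ≤ ∑ ℓ ∈ S5, ((1:ℝ)/(ℓ-1) - 1/ℓ) := Finset.sum_le_sum hstep
      _ ≤ ∑ n ∈ Finset.Icc 5 (max T 5), ((1:ℝ)/(n-1) - 1/n) := by
          refine Finset.sum_le_sum_of_subset_of_nonneg hsub2 ?_
          intro n hn _
          simp only [Finset.mem_Icc] at hn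
          have h5 : (5:ℝ) ≤ n := by exact_mod_cast hn.1
          have h1 : (0:ℝ) < (n:ℝ) - 1 := by linarith
          have : (1:ℝ)/n ≤ 1/((n:ℝ)-1) := by
            apply one_div_le_one_div_of_le h1; linarith
          linarith
      _ ≤ 1/4 - 1/(max T 5) := telescope_bound _ (le_max_right _ _)
      _ ≤ 1/4 := by
          have h0 : (0:ℝ) < ((max T 5 : ℕ) : ℝ) := by
            have h5 : (5:ℕ) ≤ max T 5 := le_max_right _ _
            have : (0:ℕ) < max T 5 := by omega
            exact_mod_cast this
          have := one_div_nonneg.mpr (le_of_lt h0)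
          linarith
  linarith

lemma strictMono_fin_le {k : ℕ} (f : Fin k → ℕ) (hf : StrictMono f) (i : Fin k) :
    (i : ℕ) ≤ f i := by
  rcases i with ⟨v, hv⟩
  induction v with
  | zero => exact Nat.zero_le _
  | succ n ih =>
    have hn : n < k := by omega
    have h1 := ih hn
    have h2 : f ⟨n, hn⟩ < f ⟨n+1, hv⟩ := hf (by simp [Fin.lt_def])
    simp only at h1 ⊢
    omega

lemma sum_le_prod_of_two_le (S : Finset ℕ) (h : ∀ x ∈ S, 2 ≤ x) :
    ∑ x ∈ S, x ≤ ∏ x ∈ S, x := by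
  classical
  induction S using Finset.induction with
  | empty => simp
  | @insert a s hnotmem ih =>
    rw [Finset.sum_insert hnotmem, Finset.prod_insert hnotmem]
    have ha := h a (Finset.mem_insert_self a s)
    have hs := ih (fun x hx => h x (Finset.mem_insert_of_mem hx))
    rcases Finset.eq_empty_or_nonempty s with rfl | hne
    · simp
    · obtain ⟨x0, hx0⟩ := hne
      have hp2 : 2 ≤ ∏ x ∈ s, x := by
        calc 2 ≤ x0 := h x0 (Finset.mem_insert_of_mem hx0)
          _ ≤ ∏ x ∈ s, x := Finset.single_le_prod' (fun x hx =>
              one_le_two.trans (h x (Finset.mem_insert_of_mem hx))) hx0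
      calc a + ∑ x ∈ s, x ≤ a + ∏ x ∈ s, x := Nat.add_le_add_left hs a
        _ ≤ a * ∏ x ∈ s, x := Nat.add_le_mul ha hp2

lemma card_primeFactors_sq_le (q : ℕ) (hq : 1 ≤ q) :
    ((q.primeFactors.card : ℝ))^2 ≤ 3 * q := by
  classical
  set P := q.primeFactors with hP
  set k := P.card with hk
  have e := P.orderIsoOfFin (rfl : P.card = k)
  have hmono : StrictMono fun i : Fin k => ((e i : ℕ)) := by
    intro i j hij
    exact Subtype.coe_lt_coe.mpr (e.lt_iff_lt.mpr hij)
  have hsum_ge : ∑ i ∈ Finset.range k, i ≤ ∑ x ∈ P, x := by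
    have h1 : ∑ x ∈ P, x = ∑ i : Fin k, ((e i : ℕ)) := by
      rw [← Finset.sum_coe_sort P (fun x => x)]
      exact (Fintype.sum_equiv e.toEquiv (fun i => ((e i : ℕ))) (fun x => (x:ℕ))
        (fun i => rfl)).symm
    rw [h1, ← Fin.sum_univ_eq_sum_range]
    exact Finset.sum_le_sum fun i _ => strictMono_fin_le _ hmono i
  have hsum_le : ∑ x ∈ P, x ≤ q := by
    calc ∑ x ∈ P, x ≤ ∏ x ∈ P, x :=
          sum_le_prod_of_two_le P fun x hx => (Nat.prime_of_mem_primeFactors hx).two_le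
      _ ≤ q := Nat.le_of_dvd (by omega) (Nat.prod_primeFactors_dvd q)
  have hcard_le : k ≤ q := by
    calc k = ∑ _x ∈ P, 1 := by simp [hk]
      _ ≤ ∑ x ∈ P, x := Finset.sum_le_sum fun x hx =>
          (Nat.prime_of_mem_primeFactors hx).one_lt.le
      _ ≤ q := hsum_le
  have hgauss : (∑ i ∈ Finset.range k, i) * 2 = k * (k - 1) := Finset.sum_range_id_mul_two k
  have h2 : (k * (k-1) : ℕ) ≤ 2 * q := by
    have := hsum_ge.trans hsum_le
    omega
  have h3 : k * k ≤ 3 * q := by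
    rcases Nat.eq_zero_or_pos k with hk0 | hkpos
    · simp [hk0]
    · have hsp : k - 1 + 1 = k := Nat.succ_pred_eq_of_pos hkpos
      have : k * k = k * (k - 1) + k := by
        calc k * k = k * ((k-1) + 1) := by rw [hsp]
          _ = k * (k-1) + k := by ring
      omega
  calc ((k:ℝ))^2 = ((k * k : ℕ) : ℝ) := by push_cast; ring
    _ ≤ ((3 * q : ℕ) : ℝ) := by exact_mod_cast h3
    _ = 3 * q := by push_cast; ring

lemma card_filter_congr_le (A : ℤ) (L ℓ : ℕ) (hℓ : 0 < ℓ) (r : ZMod ℓ) :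
    ((((Finset.Icc A (A + L - 1)).filter (fun t : ℤ => ((t : ZMod ℓ) = r))).card) : ℝ)
      ≤ (L:ℝ) / ℓ + 1 := by
  classical
  have key : ∀ m m' : ℕ, m' ≤ m → (ℓ:ℤ) ∣ (m : ℤ) - m' → m / ℓ = m' / ℓ → m = m' := by
    intro m m' hle hdvd hdiv
    have hsub : ((m - m' : ℕ) : ℤ) = (m:ℤ) - m' := by omega
    have hdn : ℓ ∣ m - m' := by
      rw [← Int.natCast_dvd_natCast, hsub]; exact hdvd
    obtain ⟨c, hc⟩ := hdn
    have hm : m = ℓ * c + m' := (Nat.sub_eq_iff_eq_add hle).mp hc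
    have hdiv2 : c + m' / ℓ = m' / ℓ := by
      rw [hm, Nat.mul_add_div hℓ] at hdiv; exact hdiv
    have hc0 : c = 0 := by
      have h0 : c + m'/ℓ = 0 + m'/ℓ := by simpa using hdiv2
      exact Nat.add_right_cancel h0
    subst hc0
    simpa using hm
  have hcard : ((Finset.Icc A (A + L - 1)).filter (fun t : ℤ => ((t : ZMod ℓ) = r))).card
      ≤ L / ℓ + 1 := by
    rw [← Finset.card_range (L / ℓ + 1)]
    apply Finset.card_le_card_of_injOn (fun t => (t - A).toNat / ℓ)
    · intro t ht
      simp only [Finset.mem_coe, Finset.mem_filter, Finset.mem_Icc] at ht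
      have h2 : (t - A).toNat ≤ L - 1 := by omega
      simp only [Finset.mem_coe, Finset.mem_range]
      have hd1 : (t - A).toNat / ℓ ≤ (L-1) / ℓ := Nat.div_le_div_right h2
      have hd2 : (L - 1) / ℓ ≤ L / ℓ := Nat.div_le_div_right (by omega)
      exact lt_of_le_of_lt (hd1.trans hd2) (Nat.lt_succ_self _)
    · intro t ht t' ht' heq
      simp only [Finset.coe_filter, Set.mem_setOf_eq, Finset.mem_Icc] at ht ht'
      have hdvd : (ℓ:ℤ) ∣ t - t' := by
        have h0 : ((t - t' : ℤ) : ZMod ℓ) = 0 := by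
          push_cast
          rw [ht.2, ht'.2]; ring
        exact (ZMod.intCast_zmod_eq_zero_iff_dvd _ _).mp h0
      set n := (t - A).toNat with hn
      set n' := (t' - A).toNat with hn'
      have hnn : (n : ℤ) = t - A := Int.toNat_of_nonneg (by omega)
      have hnn' : (n' : ℤ) = t' - A := Int.toNat_of_nonneg (by omega)
      rcases le_total n' n with hle | hle
      · have : n = n' := key n n' hle (by rw [hnn, hnn']; simpa using hdvd) heq
        omega
      · have : n' = n := key n' n hle (by rw [hnn, hnn']; exact (dvd_sub_comm).mp (by simpa using hdvd)) heq.symm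
        omega
  calc ((((Finset.Icc A (A + L - 1)).filter (fun t : ℤ => ((t : ZMod ℓ) = r))).card) : ℝ)
      ≤ ((L / ℓ + 1 : ℕ) : ℝ) := by exact_mod_cast hcard
    _ ≤ (L:ℝ)/ℓ + 1 := by
        push_cast
        have := Nat.cast_div_le (α := ℝ) (m := L) (n := ℓ)
        linarith

/-- The key counting estimate: in any window `W = ∏ Icc (t₀ i) (t₀ i + L - 1)` of
side `L`, the number of `p` with `gcd(q, b p + a) = 1` is at least `L²/4`,
provided `24√(3q) ≤ L` and `24 ≤ L`. -/
lemma good_count (q bb : ℕ) (aa : Fin 2 → ℤ) (hq : 0 < q)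
    (hgcd : Nat.gcd (Int.gcd (aa 0) (aa 1)) bb = 1)
    (t₀ : Fin 2 → ℤ) (L : ℕ)
    (hL24 : (24:ℝ) ≤ L) (hLs : 24 * Real.sqrt (3*(q:ℝ)) ≤ L) :
    ((L:ℝ)^2)/4 ≤
      (((Finset.Icc t₀ (fun i => t₀ i + L - 1)).filter
        (fun p => gcdVec q (fun i => (bb:ℤ) * p i + aa i) = 1)).card : ℝ) := by
  classical
  set W : Finset (Fin 2 → ℤ) := Finset.Icc t₀ (fun i => t₀ i + L - 1) with hW
  have hWcard : W.card = L^2 := by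
    rw [hW, Pi.card_Icc]
    have : ∀ i : Fin 2, (Finset.Icc (t₀ i) (t₀ i + L - 1)).card = L := by
      intro i
      rw [Int.card_Icc]
      simp
    simp [this, sq]
  -- bad set is covered by prime fibers
  set badP : (Fin 2 → ℤ) → Prop :=
    fun p => ¬ gcdVec q (fun i => (bb:ℤ) * p i + aa i) = 1 with hbadP
  have hcover : W.filter badP ⊆ q.primeFactors.biUnion (fun ℓ =>
      W.filter (fun p => ((ℓ:ℤ) ∣ (bb:ℤ) * p 0 + aa 0) ∧ ((ℓ:ℤ) ∣ (bb:ℤ) * p 1 + aa 1))) := by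
    intro p hp
    simp only [Finset.mem_filter, hbadP] at hp
    obtain ⟨hpW, hbad⟩ := hp
    set g := gcdVec q (fun i => (bb:ℤ) * p i + aa i) with hg
    obtain ⟨ℓ, hℓp, hℓdvd⟩ := Nat.exists_prime_and_dvd (by exact hbad)
    have hℓq : ℓ ∣ q := hℓdvd.trans (Nat.gcd_dvd_left _ _)
    have hℓg2 : ℓ ∣ Int.gcd ((bb:ℤ) * p 0 + aa 0) ((bb:ℤ) * p 1 + aa 1) :=
      hℓdvd.trans (Nat.gcd_dvd_right _ _)
    simp only [Finset.mem_biUnion]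
    refine ⟨ℓ, Nat.mem_primeFactors.mpr ⟨hℓp, hℓq, by omega⟩, ?_⟩
    simp only [Finset.mem_filter]
    refine ⟨hpW, ?_, ?_⟩
    · exact dvd_trans (Int.natCast_dvd_natCast.mpr hℓg2) (Int.gcd_dvd_left _ _)
    · exact dvd_trans (Int.natCast_dvd_natCast.mpr hℓg2) (Int.gcd_dvd_right _ _)
  -- per-prime count
  have hperprime : ∀ ℓ ∈ q.primeFactors,
      ((W.filter (fun p => ((ℓ:ℤ) ∣ (bb:ℤ) * p 0 + aa 0) ∧ ((ℓ:ℤ) ∣ (bb:ℤ) * p 1 + aa 1))).card : ℝ)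
        ≤ ((L:ℝ)/ℓ + 1)^2 := by
    intro ℓ hℓ
    have hℓp : ℓ.Prime := Nat.prime_of_mem_primeFactors hℓ
    have hℓ0 : 0 < ℓ := hℓp.pos
    by_cases hbdvd : ℓ ∣ bb
    · -- fiber is empty
      have : W.filter (fun p => ((ℓ:ℤ) ∣ (bb:ℤ) * p 0 + aa 0) ∧ ((ℓ:ℤ) ∣ (bb:ℤ) * p 1 + aa 1)) = ∅ := by
        rw [Finset.eq_empty_iff_forall_notMem]
        intro p hp
        simp only [Finset.mem_filter] at hp
        obtain ⟨-, h0, h1⟩ := hp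
        have hb' : (ℓ:ℤ) ∣ (bb:ℤ) := Int.natCast_dvd_natCast.mpr hbdvd
        have ha0 : (ℓ:ℤ) ∣ aa 0 := by
          have := dvd_sub h0 (hb'.mul_right (p 0)); simpa using this
        have ha1 : (ℓ:ℤ) ∣ aa 1 := by
          have := dvd_sub h1 (hb'.mul_right (p 1)); simpa using this
        have hgg : ℓ ∣ Int.gcd (aa 0) (aa 1) := by
          have := Int.dvd_gcd ha0 ha1
          exact_mod_cast this
        have : ℓ ∣ Nat.gcd (Int.gcd (aa 0) (aa 1)) bb := Nat.dvd_gcd hgg hbdvd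
        rw [hgcd] at this
        exact hℓp.one_lt.ne' (Nat.dvd_one.mp this)
      rw [this]
      simp
      positivity
    · -- per coordinate congruence counting
      haveI : Fact ℓ.Prime := ⟨hℓp⟩
      have hbb0 : (bb : ZMod ℓ) ≠ 0 := by
        rw [Ne, ZMod.natCast_eq_zero_iff]
        exact hbdvd
      set r : Fin 2 → ZMod ℓ := fun i => (-(aa i : ZMod ℓ)) / (bb : ZMod ℓ) with hr
      have hiff : ∀ (i : Fin 2) (t : ℤ), ((ℓ:ℤ) ∣ (bb:ℤ) * t + aa i) ↔ ((t : ZMod ℓ) = r i) := by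
        intro i t
        rw [← ZMod.intCast_zmod_eq_zero_iff_dvd]
        push_cast
        rw [hr, eq_div_iff hbb0]
        constructor
        · intro h; push_cast at h; linear_combination h
        · intro h; linear_combination h
      -- inject into the product of two coordinate filters
      set F : Fin 2 → Finset ℤ := fun i =>
        (Finset.Icc (t₀ i) (t₀ i + L - 1)).filter (fun t : ℤ => ((t : ZMod ℓ) = r i)) with hF
      have hinj : (W.filter (fun p => ((ℓ:ℤ) ∣ (bb:ℤ) * p 0 + aa 0) ∧ ((ℓ:ℤ) ∣ (bb:ℤ) * p 1 + aa 1))).card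
          ≤ ((F 0) ×ˢ (F 1)).card := by
        apply Finset.card_le_card_of_injOn (fun p => (p 0, p 1))
        · intro p hp
          simp only [Finset.mem_coe, Finset.mem_filter, hW, Finset.mem_Icc, Pi.le_def] at hp
          obtain ⟨⟨hlo, hhi⟩, h0, h1⟩ := hp
          simp only [Finset.mem_coe, Finset.mem_product, hF, Finset.mem_filter, Finset.mem_Icc]
          exact ⟨⟨⟨hlo 0, hhi 0⟩, (hiff 0 (p 0)).mp h0⟩, ⟨⟨hlo 1, hhi 1⟩, (hiff 1 (p 1)).mp h1⟩⟩
        · intro p hp p' hp' heq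
          simp only [Prod.mk.injEq] at heq
          funext i
          fin_cases i
          · exact heq.1
          · exact heq.2
      have hcprod : (((F 0) ×ˢ (F 1)).card : ℝ) ≤ ((L:ℝ)/ℓ + 1)^2 := by
        rw [Finset.card_product]
        push_cast
        have h0 := card_filter_congr_le (t₀ 0) L ℓ hℓ0 (r 0)
        have h1 := card_filter_congr_le (t₀ 1) L ℓ hℓ0 (r 1)
        have hn0 : (0:ℝ) ≤ ((F 0).card : ℝ) := by positivity
        have hn1 : (0:ℝ) ≤ ((F 1).card : ℝ) := by positivity
        have hrhs : (0:ℝ) ≤ (L:ℝ)/ℓ + 1 := by positivity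
        calc ((F 0).card : ℝ) * ((F 1).card : ℝ) ≤ ((L:ℝ)/ℓ + 1) * ((L:ℝ)/ℓ + 1) := by
              apply mul_le_mul _ _ hn1 hrhs
              · exact h0
              · exact h1
          _ = ((L:ℝ)/ℓ + 1)^2 := by ring
      calc ((W.filter _).card : ℝ) ≤ (((F 0) ×ˢ (F 1)).card : ℝ) := by exact_mod_cast hinj
        _ ≤ ((L:ℝ)/ℓ + 1)^2 := hcprod
  -- total bad count
  have hsq : (0:ℝ) ≤ Real.sqrt (3*(q:ℝ)) := Real.sqrt_nonneg _
  have hω : ((q.primeFactors.card : ℝ)) ≤ Real.sqrt (3*(q:ℝ)) := by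
    have h2 := card_primeFactors_sq_le q hq
    calc ((q.primeFactors.card:ℝ)) = Real.sqrt (((q.primeFactors.card:ℝ))^2) :=
          (Real.sqrt_sq (by positivity)).symm
      _ ≤ Real.sqrt (3*(q:ℝ)) := Real.sqrt_le_sqrt h2
  have hbadcard : ((W.filter badP).card : ℝ) ≤ (2/3) * L^2 + ((L:ℝ)+1) * Real.sqrt (3*(q:ℝ)) := by
    have h1 : (W.filter badP).card ≤ ∑ ℓ ∈ q.primeFactors,
        (W.filter (fun p => ((ℓ:ℤ) ∣ (bb:ℤ) * p 0 + aa 0) ∧ ((ℓ:ℤ) ∣ (bb:ℤ) * p 1 + aa 1))).card :=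
      le_trans (Finset.card_le_card hcover) (Finset.card_biUnion_le)
    have h2 : (((W.filter badP).card) : ℝ) ≤ ∑ ℓ ∈ q.primeFactors, ((L:ℝ)/ℓ + 1)^2 := by
      calc (((W.filter badP).card) : ℝ) ≤
          ∑ ℓ ∈ q.primeFactors, ((W.filter (fun p => ((ℓ:ℤ) ∣ (bb:ℤ) * p 0 + aa 0) ∧ ((ℓ:ℤ) ∣ (bb:ℤ) * p 1 + aa 1))).card : ℝ) := by
            exact_mod_cast h1
        _ ≤ ∑ ℓ ∈ q.primeFactors, ((L:ℝ)/ℓ + 1)^2 := Finset.sum_le_sum hperprime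
    have h3 : ∑ ℓ ∈ q.primeFactors, ((L:ℝ)/ℓ + 1)^2 ≤ (2/3) * L^2 + ((L:ℝ)+1) * q.primeFactors.card := by
      have hterm : ∀ ℓ ∈ q.primeFactors, ((L:ℝ)/ℓ + 1)^2 ≤ (L:ℝ)^2 * ((ℓ:ℝ)⁻¹)^2 + ((L:ℝ)+1) := by
        intro ℓ hℓ
        have hℓp := Nat.prime_of_mem_primeFactors hℓ
        have hℓ2 : (2:ℝ) ≤ ℓ := by exact_mod_cast hℓp.two_le
        have hℓ0 : (0:ℝ) < ℓ := by linarith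
        have hL0 : (0:ℝ) ≤ L := by positivity
        have hexp : ((L:ℝ)/ℓ + 1)^2 = (L:ℝ)^2 * ((ℓ:ℝ)⁻¹)^2 + 2*(L:ℝ)/ℓ + 1 := by
          field_simp
          ring
        rw [hexp]
        have : 2*(L:ℝ)/ℓ ≤ (L:ℝ) := by
          rw [div_le_iff₀ hℓ0]
          nlinarith
        linarith
      calc ∑ ℓ ∈ q.primeFactors, ((L:ℝ)/ℓ + 1)^2
          ≤ ∑ ℓ ∈ q.primeFactors, ((L:ℝ)^2 * ((ℓ:ℝ)⁻¹)^2 + ((L:ℝ)+1)) := Finset.sum_le_sum hterm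
        _ = (L:ℝ)^2 * (∑ ℓ ∈ q.primeFactors, ((ℓ:ℝ)⁻¹)^2) + ((L:ℝ)+1) * q.primeFactors.card := by
            rw [Finset.sum_add_distrib, Finset.mul_sum]
            simp [Finset.sum_const, nsmul_eq_mul]
            ring
        _ ≤ (L:ℝ)^2 * (2/3) + ((L:ℝ)+1) * q.primeFactors.card := by
            have := sum_primes_inv_sq q.primeFactors (fun ℓ hℓ => Nat.prime_of_mem_primeFactors hℓ)
            nlinarith [sq_nonneg ((L:ℝ))]
        _ = (2/3) * L^2 + ((L:ℝ)+1) * q.primeFactors.card := by ring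
    have h4 : ((L:ℝ)+1) * q.primeFactors.card ≤ ((L:ℝ)+1) * Real.sqrt (3*(q:ℝ)) := by
      apply mul_le_mul_of_nonneg_left hω (by positivity)
    linarith
  -- conclude
  have hsplit : (W.filter (fun p => gcdVec q (fun i => (bb:ℤ) * p i + aa i) = 1)).card
      + (W.filter badP).card = W.card := by
    have hh := Finset.card_filter_add_card_filter_not
      (s := W) (p := fun p => gcdVec q (fun i => (bb:ℤ) * p i + aa i) = 1)
    simpa [hbadP] using hh
  have hLpos : (0:ℝ) < L := by linarith
  have herr : ((L:ℝ)+1) * Real.sqrt (3*(q:ℝ)) ≤ (L:ℝ)^2/12 := by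
    have h1 : Real.sqrt (3*(q:ℝ)) ≤ (L:ℝ)/24 := by linarith
    have h2 : ((L:ℝ)+1) ≤ 2*L := by linarith
    calc ((L:ℝ)+1) * Real.sqrt (3*(q:ℝ)) ≤ (2*(L:ℝ)) * ((L:ℝ)/24) := by
          apply mul_le_mul h2 h1 hsq (by linarith)
      _ ≤ (L:ℝ)^2/12 := by nlinarith
  have hgoal : ((W.filter (fun p => gcdVec q (fun i => (bb:ℤ) * p i + aa i) = 1)).card : ℝ)
      ≥ (L:ℝ)^2 - (2/3)*L^2 - (L:ℝ)^2/12 := by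
    have hc : ((W.card : ℝ)) = (L:ℝ)^2 := by rw [hWcard]; push_cast; ring
    have hcast : ((W.filter (fun p => gcdVec q (fun i => (bb:ℤ) * p i + aa i) = 1)).card : ℝ)
        + ((W.filter badP).card : ℝ) = ((W.card : ℕ) : ℝ) := by exact_mod_cast hsplit
    rw [hc] at hcast
    linarith
  linarith
def box (c : Fin 2 → ℝ) (h : ℝ) : Set (Fin 2 → ℝ) :=
  Set.univ.pi fun i => Set.Ico (c i) (c i + h)

lemma measurableSet_box {c : Fin 2 → ℝ} {h : ℝ} : MeasurableSet (box c h) :=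
  MeasurableSet.univ_pi fun _ => measurableSet_Ico

lemma volume_box (c : Fin 2 → ℝ) {h : ℝ} (hh : 0 ≤ h) :
    volume (box c h) = ENNReal.ofReal (h^2) := by
  rw [box, volume_pi_pi]
  have : ∀ i : Fin 2, volume (Set.Ico (c i) (c i + h)) = ENNReal.ofReal h := by
    intro i; rw [Real.volume_Ico]; congr 1; ring
  simp only [this, Finset.prod_const, Finset.card_univ, Fintype.card_fin]
  rw [ENNReal.ofReal_pow hh]

lemma box_disjoint {h : ℝ} (hh : 0 < h) {v v' : Fin 2 → ℤ} (hne : v ≠ v') :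
    Disjoint (box (fun i => (v i : ℝ) * h) h) (box (fun i => (v' i : ℝ) * h) h) := by
  rw [Set.disjoint_left]
  intro x hx hx'
  apply hne
  funext i
  have h1 := hx i (Set.mem_univ i)
  have h2 := hx' i (Set.mem_univ i)
  simp only [Set.mem_Ico] at h1 h2
  by_contra hne'
  rcases lt_or_gt_of_ne hne' with hlt | hlt
  · have : (v i : ℝ) + 1 ≤ (v' i : ℝ) := by exact_mod_cast hlt
    nlinarith [h1.2, h2.1]
  · have : (v' i : ℝ) + 1 ≤ (v i : ℝ) := by exact_mod_cast hlt
    nlinarith [h2.2, h1.1]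

lemma box_subset_unitBox {c : Fin 2 → ℝ} {h : ℝ} (hcl : ∀ i, 0 ≤ c i)
    (hcu : ∀ i, c i + h ≤ 1) : box c h ⊆ unitBox := by
  intro x hx
  intro i _
  have hxi := hx i (Set.mem_univ i)
  simp only [Set.mem_Ico] at hxi ⊢
  exact ⟨le_trans (hcl i) hxi.1, lt_of_lt_of_le hxi.2 (hcu i)⟩

set_option maxHeartbeats 1000000 in
/-- Main sieve lower bound for the measure of `Ã_q` in a box. -/
lemma sieve_lower (ψ : ℕ → ℝ) (y : Fin 2 → ℝ) (aa : Fin 2 → ℤ) (bb q : ℕ)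
    (hq : 0 < q) (hψ0 : 0 ≤ ψ q) (hψh : ψ q ≤ 1/2)
    (hgcd : Nat.gcd (Int.gcd (aa 0) (aa 1)) bb = 1)
    (c : Fin 2 → ℝ) (h : ℝ) (hh : 0 < h)
    (hcl : ∀ i, 0 ≤ c i) (hcu : ∀ i, c i + h ≤ 1)
    (hsize : 24 * Real.sqrt (3*(q:ℝ)) + 6 ≤ h * q) :
    ENNReal.ofReal (h^2 * (ψ q)^2 / 2) ≤ volume (Atilde ψ y aa bb q ∩ box c h) := by
  classical
  rcases eq_or_lt_of_le hψ0 with h0 | hψpos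
  · rw [← h0]
    simp
  have hq' : (0:ℝ) < q := by exact_mod_cast hq
  have hs1 : (1:ℝ) ≤ Real.sqrt (3*(q:ℝ)) := by
    have hq1 : (1:ℝ) ≤ (q:ℝ) := by exact_mod_cast hq
    have h3 : (1:ℝ) ≤ 3*(q:ℝ) := by linarith
    calc (1:ℝ) = Real.sqrt 1 := Real.sqrt_one.symm
      _ ≤ Real.sqrt (3*(q:ℝ)) := Real.sqrt_le_sqrt h3
  have hqh30 : (30:ℝ) ≤ h * q := by linarith
  set M : ℕ := ⌊h*q⌋.toNat with hM
  have hfloor_le : ((⌊h*q⌋ : ℤ) : ℝ) ≤ h*q := Int.floor_le _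
  have hlt_floor : h*q - 1 < ((⌊h*q⌋ : ℤ) : ℝ) := Int.sub_one_lt_floor _
  have hfloor29 : (29:ℤ) ≤ ⌊h*q⌋ := by
    rw [Int.le_floor]; push_cast; linarith
  have hMfloor : (M : ℤ) = ⌊h*q⌋ := Int.toNat_of_nonneg (by omega)
  have hM29 : 29 ≤ M := by omega
  set L : ℕ := M - 2 with hL
  have hLM : (L : ℤ) = (M:ℤ) - 2 := by omega
  have hLreal_lo : h*q - 3 ≤ (L:ℝ) := by
    have : ((L:ℤ):ℝ) = ((⌊h*q⌋:ℤ):ℝ) - 2 := by rw [hLM, hMfloor]; push_cast; ring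
    push_cast at this
    linarith
  have hLreal_hi : (L:ℝ) ≤ h*q - 2 := by
    have : ((L:ℤ):ℝ) = ((⌊h*q⌋:ℤ):ℝ) - 2 := by rw [hLM, hMfloor]; push_cast; ring
    push_cast at this
    linarith
  have hL24 : (24:ℝ) ≤ L := by linarith
  have hLs : 24 * Real.sqrt (3*(q:ℝ)) ≤ L := by linarith
  set t₀ : Fin 2 → ℤ := fun i => ⌈(q:ℝ) * c i - y i + ψ q⌉ with ht₀
  set W : Finset (Fin 2 → ℤ) := Finset.Icc t₀ (fun i => t₀ i + L - 1) with hW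
  set G : Finset (Fin 2 → ℤ) :=
    W.filter (fun p => gcdVec q (fun i => (bb:ℤ) * p i + aa i) = 1) with hG
  have hcount : ((L:ℝ)^2)/4 ≤ (G.card : ℝ) :=
    good_count q bb aa hq hgcd t₀ L hL24 hLs
  -- every cube with p ∈ W is inside the box
  have hfit : ∀ p ∈ W, cube q y (ψ q) p ⊆ box c h := by
    intro p hp
    rw [hW, Finset.mem_Icc] at hp
    obtain ⟨hlo, hhi⟩ := hp
    intro x hx
    intro i _
    have hxi := hx i (Set.mem_univ i)
    simp only [Set.mem_Ioo] at hxi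
    simp only [Set.mem_Ico]
    have hpl : ((t₀ i : ℤ) : ℝ) ≤ (p i : ℝ) := by exact_mod_cast hlo i
    have hpu : (p i : ℝ) ≤ ((t₀ i : ℤ) : ℝ) + L - 1 := by
      have := hhi i
      have : ((p i : ℤ) : ℝ) ≤ (((t₀ i + L - 1) : ℤ) : ℝ) := by exact_mod_cast this
      push_cast at this
      linarith
    have hceil_ge : (q:ℝ) * c i - y i + ψ q ≤ ((t₀ i : ℤ) : ℝ) := Int.le_ceil _
    have hceil_lt : ((t₀ i : ℤ) : ℝ) < (q:ℝ) * c i - y i + ψ q + 1 := Int.ceil_lt_add_one _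
    constructor
    · -- c i ≤ x i
      have hlow : (q:ℝ) * c i ≤ (p i : ℝ) + y i - ψ q := by linarith
      have : c i ≤ ((p i : ℝ) + y i - ψ q)/q := by
        rw [le_div_iff₀ hq']; linarith [mul_comm (c i) (q:ℝ)]
      linarith [hxi.1]
    · -- x i < c i + h
      have hup : (p i : ℝ) + y i + ψ q ≤ (q:ℝ) * (c i + h) := by
        have h2ψ : 2 * ψ q ≤ 2 := by linarith
        nlinarith
      have : ((p i : ℝ) + y i + ψ q)/q ≤ c i + h := by
        rw [div_le_iff₀ hq']; linarith [mul_comm (c i + h) (q:ℝ)]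
      linarith [hxi.2]
  -- cubes for p ∈ G are inside Atilde ∩ box
  have hsub : ∀ p ∈ G, cube q y (ψ q) p ⊆ Atilde ψ y aa bb q ∩ box c h := by
    intro p hp
    rw [hG, Finset.mem_filter] at hp
    intro x hx
    have hxbox : x ∈ box c h := hfit p hp.1 hx
    refine ⟨?_, hxbox⟩
    rw [mem_Atilde_iff hq]
    exact ⟨box_subset_unitBox hcl hcu hxbox, p, hp.2, hx⟩
  -- measure computation
  have hdisj : Set.PairwiseDisjoint (↑G : Set (Fin 2 → ℤ)) (cube q y (ψ q)) := by
    intro p _ p' _ hne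
    exact cube_disjoint hq hψh hne
  have hmeas : volume (⋃ p ∈ G, cube q y (ψ q) p) = ∑ _p ∈ G, ENNReal.ofReal (2*(ψ q)/q)^2 := by
    rw [measure_biUnion_finset hdisj (fun p _ => measurableSet_cube)]
    exact Finset.sum_congr rfl fun p _ => volume_cube hq y hψ0 p
  have hunion_le : volume (⋃ p ∈ G, cube q y (ψ q) p) ≤ volume (Atilde ψ y aa bb q ∩ box c h) :=
    measure_mono (Set.iUnion₂_subset hsub)
  rw [hmeas] at hunion_le
  refine le_trans ?_ hunion_le
  rw [Finset.sum_const, nsmul_eq_mul]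
  have hofr : ENNReal.ofReal (2*(ψ q)/q)^2 = ENNReal.ofReal ((2*(ψ q)/q)^2) := by
    rw [ENNReal.ofReal_pow (by positivity)]
  rw [hofr, ← ENNReal.ofReal_natCast, ← ENNReal.ofReal_mul (by positivity)]
  apply ENNReal.ofReal_le_ofReal
  -- real inequality: h²ψ²/2 ≤ card * (2ψ/q)²
  have hexp : (G.card : ℝ) * (2*(ψ q)/q)^2 = (G.card : ℝ) * 4 * (ψ q)^2 / q^2 := by
    field_simp
    ring
  rw [hexp]
  have h9 : (9/10 : ℝ) * (h*q) ≤ (L:ℝ) := by linarith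
  have hL2 : (81/100 : ℝ) * (h*q)^2 ≤ (L:ℝ)^2 := by nlinarith
  have hcard2 : (81/400 : ℝ) * (h*q)^2 ≤ (G.card : ℝ) := by linarith
  rw [div_le_div_iff₀ (by norm_num) (by positivity)]
  nlinarith [sq_nonneg (ψ q), sq_nonneg (h*q), mul_pos hq' hq']
/-- Upper bound for the measure of `Ã_q`. -/
lemma Atilde_vol_upper (ψ : ℕ → ℝ) (y : Fin 2 → ℝ) (aa : Fin 2 → ℤ) (bb q : ℕ)
    (hq : 0 < q) (hψ0 : 0 ≤ ψ q) (hψh : ψ q ≤ 1/2) :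
    volume (Atilde ψ y aa bb q) ≤ ENNReal.ofReal (64 * (ψ q)^2) := by
  classical
  have hq' : (0:ℝ) < q := by exact_mod_cast hq
  have hq1 : (1:ℝ) ≤ q := by exact_mod_cast hq
  set plo : Fin 2 → ℤ := fun i => ⌊-(y i) - ψ q⌋ with hplo
  set phi : Fin 2 → ℤ := fun i => ⌈(q:ℝ) - y i + ψ q⌉ with hphi
  have hcover : Atilde ψ y aa bb q ⊆ ⋃ p ∈ Finset.Icc plo phi, cube q y (ψ q) p := by
    intro x hx
    rw [mem_Atilde_iff hq] at hx
    obtain ⟨hxu, p, hpg, hpc⟩ := hx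
    have hxi : ∀ i, 0 ≤ x i ∧ x i < 1 := by
      intro i
      have := hxu i (Set.mem_univ i)
      simpa [Set.mem_Ico] using this
    have habs := (mem_cube_iff hq).1 hpc
    have hpmem : p ∈ Finset.Icc plo phi := by
      rw [Finset.mem_Icc]
      constructor <;> (rw [Pi.le_def]; intro i)
      · have h1 := abs_lt.1 (habs i)
        have hb : -(y i) - ψ q ≤ (p i : ℝ) := by nlinarith [(hxi i).1, (hxi i).2]
        show plo i ≤ p i
        rw [hplo]
        have := Int.floor_le_floor hb
        simpa using this
      · have h1 := abs_lt.1 (habs i)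
        have hb : (p i : ℝ) ≤ (q:ℝ) - y i + ψ q := by nlinarith [(hxi i).1, (hxi i).2]
        show p i ≤ phi i
        rw [hphi]
        exact_mod_cast le_trans hb (Int.le_ceil _)
    exact Set.mem_biUnion hpmem hpc
  have hcardN : ∀ i : Fin 2, (Finset.Icc (plo i) (phi i)).card ≤ q + 3 := by
    intro i
    rw [Int.card_Icc]
    have h1 : ((plo i : ℤ) : ℝ) > -(y i) - ψ q - 1 := by
      rw [hplo]; exact Int.sub_one_lt_floor _
    have h2 : ((phi i : ℤ) : ℝ) < (q:ℝ) - y i + ψ q + 1 := by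
      rw [hphi]; exact Int.ceil_lt_add_one _
    have h3 : (phi i - plo i + 1 : ℤ) ≤ ((q + 3 : ℕ) : ℤ) := by
      have hr : ((phi i - plo i + 1 : ℤ) : ℝ) < ((q:ℝ) + 3) + 1 := by push_cast; linarith
      have : (phi i - plo i + 1 : ℤ) < ((q + 3 : ℕ) : ℤ) + 1 := by exact_mod_cast hr
      omega
    exact Int.toNat_le.mpr (by omega)
  have hcard : ∀ i : Fin 2, ((Finset.Icc (plo i) (phi i)).card : ℝ) ≤ (q:ℝ) + 3 := by
    intro i
    have := hcardN i
    push_cast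
    exact_mod_cast this
  calc volume (Atilde ψ y aa bb q) ≤ volume (⋃ p ∈ Finset.Icc plo phi, cube q y (ψ q) p) :=
        measure_mono hcover
    _ ≤ ∑ p ∈ Finset.Icc plo phi, volume (cube q y (ψ q) p) := measure_biUnion_finset_le _ _
    _ = ∑ _p ∈ Finset.Icc plo phi, ENNReal.ofReal (2*(ψ q)/q)^2 :=
        Finset.sum_congr rfl fun p _ => volume_cube hq y hψ0 p
    _ ≤ ENNReal.ofReal (64 * (ψ q)^2) := by
        rw [Finset.sum_const, nsmul_eq_mul]
        have hofr : ENNReal.ofReal (2*(ψ q)/q)^2 = ENNReal.ofReal ((2*(ψ q)/q)^2) := by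
          rw [ENNReal.ofReal_pow (by positivity)]
        rw [hofr, ← ENNReal.ofReal_natCast, ← ENNReal.ofReal_mul (by positivity)]
        apply ENNReal.ofReal_le_ofReal
        have hc : ((Finset.Icc plo phi).card : ℝ) ≤ ((q:ℝ)+3)^2 := by
          rw [Pi.card_Icc]
          push_cast
          rw [Fin.prod_univ_two]
          have h0 := hcard 0
          have h1 := hcard 1
          have hn0 : (0:ℝ) ≤ ((Finset.Icc (plo 0) (phi 0)).card : ℝ) := by positivity
          have hrhs : (0:ℝ) ≤ (q:ℝ)+3 := by positivity
          nlinarith [hcard 0, hcard 1]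
        have hexp : (2*(ψ q)/q)^2 = 4*(ψ q)^2/q^2 := by field_simp; ring
        rw [hexp]
        have hq3 : ((q:ℝ)+3)^2 ≤ 16 * q^2 := by nlinarith
        have : ((Finset.Icc plo phi).card : ℝ) * (4*(ψ q)^2/q^2) ≤
            (16*q^2) * (4*(ψ q)^2/q^2) := by
          apply mul_le_mul (le_trans hc hq3) (le_refl _) (by positivity) (by positivity)
        calc ((Finset.Icc plo phi).card : ℝ) * (4*(ψ q)^2/q^2)
            ≤ (16*(q:ℝ)^2) * (4*(ψ q)^2/q^2) := this
          _ = 64 * (ψ q)^2 := by field_simp; ring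

/-- Chung–Erdős inequality. -/
lemma chung_erdos {α : Type*} [MeasurableSpace α] (μ : Measure α)
    (F : Finset ℕ) (A : ℕ → Set α) (hA : ∀ q, MeasurableSet (A q)) :
    (∑ q ∈ F, μ (A q))^2 ≤ μ (⋃ q ∈ F, A q) * ∑ q ∈ F, ∑ r ∈ F, μ (A q ∩ A r) := by
  classical
  set f : α → ENNReal := fun x => ∑ q ∈ F, (A q).indicator 1 x with hf
  set U : Set α := ⋃ q ∈ F, A q with hU
  have hUmeas : MeasurableSet U := MeasurableSet.biUnion F.countable_toSet (fun q _ => hA q)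
  have hfmeas : Measurable f := by
    apply Finset.measurable_sum
    intro q _
    exact measurable_one.indicator (hA q)
  have hgmeas : Measurable (U.indicator (1 : α → ENNReal)) := measurable_one.indicator hUmeas
  have h1 : ∫⁻ x, f x ∂μ = ∑ q ∈ F, μ (A q) := by
    rw [hf, lintegral_finset_sum _ (fun q _ => measurable_one.indicator (hA q))]
    exact Finset.sum_congr rfl fun q _ => lintegral_indicator_one (hA q)
  have h2 : ∫⁻ x, (f x)^2 ∂μ = ∑ q ∈ F, ∑ r ∈ F, μ (A q ∩ A r) := by
    have hexp : ∀ x, (f x)^2 = ∑ q ∈ F, ∑ r ∈ F, ((A q ∩ A r).indicator (1 : α → ENNReal) x) := by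
      intro x
      rw [hf, sq, Finset.sum_mul_sum]
      refine Finset.sum_congr rfl fun q _ => Finset.sum_congr rfl fun r _ => ?_
      rw [Set.inter_indicator_one]
      rfl
    rw [lintegral_congr hexp]
    rw [lintegral_finset_sum _ (fun q _ => Finset.measurable_sum _
      (fun r _ => measurable_one.indicator ((hA q).inter (hA r))))]
    refine Finset.sum_congr rfl fun q _ => ?_
    rw [lintegral_finset_sum _ (fun r _ => measurable_one.indicator ((hA q).inter (hA r)))]
    exact Finset.sum_congr rfl fun r _ => lintegral_indicator_one ((hA q).inter (hA r))
  have hfU : ∀ x, f x = (f * U.indicator (1 : α → ENNReal)) x := by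
    intro x
    simp only [Pi.mul_apply]
    by_cases hx : x ∈ U
    · rw [Set.indicator_of_mem hx]; simp
    · have hz : f x = 0 := by
        rw [hf]
        apply Finset.sum_eq_zero
        intro q hq
        have hnm : x ∉ A q := fun hmem => hx (Set.mem_biUnion hq hmem)
        simp [Set.indicator_of_notMem hnm]
      rw [hz]; simp
  have hconj : Real.HolderConjugate 2 2 := Real.HolderConjugate.two_two
  have hholder := ENNReal.lintegral_mul_le_Lp_mul_Lq μ hconj hfmeas.aemeasurable hgmeas.aemeasurable
  have hL : ∫⁻ x, (f * U.indicator (1 : α → ENNReal)) x ∂μ = ∑ q ∈ F, μ (A q) := by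
    rw [← lintegral_congr hfU, h1]
  have hind2 : ∫⁻ x, (U.indicator (1 : α → ENNReal)) x ^ (2:ℝ) ∂μ = μ U := by
    have : ∀ x, (U.indicator (1 : α → ENNReal)) x ^ (2:ℝ) = U.indicator 1 x := by
      intro x
      by_cases hx : x ∈ U
      · rw [Set.indicator_of_mem hx]; simp
      · rw [Set.indicator_of_notMem hx]
        rw [ENNReal.zero_rpow_of_pos (by norm_num)]
    rw [lintegral_congr this, lintegral_indicator_one hUmeas]
  have hf2 : ∫⁻ x, (f x) ^ (2:ℝ) ∂μ = ∑ q ∈ F, ∑ r ∈ F, μ (A q ∩ A r) := by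
    rw [← h2]
    apply lintegral_congr
    intro x
    rw [← ENNReal.rpow_natCast (f x) 2]
    norm_num
  rw [hL, hind2, hf2] at hholder
  have hsq : ∀ x : ENNReal, (x^((1:ℝ)/2))^2 = x := by
    intro x
    rw [← ENNReal.rpow_natCast (x^((1:ℝ)/2)) 2, ← ENNReal.rpow_mul]
    norm_num
  calc (∑ q ∈ F, μ (A q))^2
      ≤ ((∑ q ∈ F, ∑ r ∈ F, μ (A q ∩ A r)) ^ ((1:ℝ)/2) * (μ U) ^ ((1:ℝ)/2))^2 := by
        apply pow_le_pow_left' hholder  -- check name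
    _ = (∑ q ∈ F, ∑ r ∈ F, μ (A q ∩ A r)) * μ U := by
        rw [mul_pow, hsq, hsq]
    _ = μ U * ∑ q ∈ F, ∑ r ∈ F, μ (A q ∩ A r) := mul_comm _ _
/-- The per-scale construction: outside a bad set of measure `≤ ε`, every grid box
meets the limsup set in proportion `≥ κ`. -/
lemma per_scale (A : ℕ → Set (Fin 2 → ℝ)) (hAmeas : ∀ q, MeasurableSet (A q))
    (hAsub : ∀ q, A q ⊆ unitBox)
    (g : ℕ → ℝ) (hg0 : ∀ q, 0 ≤ g q)
    (c ε : ℝ) (hc : 0 < c) (hε : 0 < ε)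
    (hupper : ∀ Q : ℕ, (∑ q ∈ Finset.Icc 1 Q, volume (A q)) ≤
      ENNReal.ofReal (64 * ∑ q ∈ Finset.Icc 1 Q, g q))
    (hfreq : ∃ᶠ Q in atTop,
      ENNReal.ofReal c * (∑ q ∈ Finset.Icc 1 Q, ∑ r ∈ Finset.Icc 1 Q, volume (A q ∩ A r))
        ≤ (∑ q ∈ Finset.Icc 1 Q, volume (A q))^2)
    (hStend : Tendsto (fun Q => ∑ q ∈ Finset.Icc 1 Q, g q) atTop atTop)
    (n : ℕ) (hn : 0 < n)
    (hlower : ∀ᶠ q in atTop, ∀ v : Fin 2 → ℤ,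
      (∀ i, 0 ≤ v i ∧ v i + 1 ≤ n) →
      ENNReal.ofReal (((n:ℝ)⁻¹)^2 * g q / 2) ≤
        volume (A q ∩ box (fun i => (v i : ℝ) * (n:ℝ)⁻¹) ((n:ℝ)⁻¹))) :
    ∃ Vb : Set (Fin 2 → ℝ), MeasurableSet Vb ∧ volume Vb ≤ ENNReal.ofReal ε ∧
      ∀ x ∈ unitBox, x ∉ Vb →
        ENNReal.ofReal (ε*c/65536 * ((n:ℝ)⁻¹)^2) ≤
          volume ((⋂ N, ⋃ q, ⋃ _ : N ≤ q, A q) ∩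
            box (fun i => ((⌊x i * n⌋ : ℤ) : ℝ) * (n:ℝ)⁻¹) ((n:ℝ)⁻¹)) := by
  classical
  set h : ℝ := (n:ℝ)⁻¹ with hh_def
  have hn' : (0:ℝ) < n := by exact_mod_cast hn
  have hh : 0 < h := by rw [hh_def]; positivity
  set V : Finset (Fin 2 → ℤ) := Finset.Icc 0 (fun _ => (n:ℤ) - 1) with hV
  set Bv : (Fin 2 → ℤ) → Set (Fin 2 → ℝ) := fun v => box (fun i => (v i : ℝ) * h) h with hBv
  set FF : ℕ → Set (Fin 2 → ℝ) := fun N => ⋃ q, ⋃ _ : N ≤ q, A q with hFF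
  set Sg : ℕ → ℝ := fun Q => ∑ q ∈ Finset.Icc 1 Q, g q with hSg
  set κ : ℝ := ε*c/65536 with hκ
  have hκpos : 0 < κ := by rw [hκ]; positivity
  have hFFmeas : ∀ N, MeasurableSet (FF N) :=
    fun N => MeasurableSet.iUnion fun q => MeasurableSet.iUnion fun _ => hAmeas q
  have hFFanti : Antitone FF := by
    intro N N' hNN'
    apply Set.iUnion_mono
    intro q
    exact Set.iUnion_subset fun hq => Set.subset_iUnion_of_subset (le_trans hNN' hq) (le_refl _)
  have hBmeas : ∀ v, MeasurableSet (Bv v) := fun v => measurableSet_box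
  have hBvol : ∀ v, volume (Bv v) = ENNReal.ofReal (h^2) := fun v => volume_box _ hh.le
  have hBdisjoint : ∀ v v' : Fin 2 → ℤ, v ≠ v' → Disjoint (Bv v) (Bv v') :=
    fun v v' hne => box_disjoint hh hne
  have hSg0 : ∀ Q, 0 ≤ Sg Q := fun Q => Finset.sum_nonneg fun q _ => hg0 q
  -- the per-N claim
  set HH : ℕ → Finset (Fin 2 → ℤ) := fun N =>
    V.filter (fun v => ENNReal.ofReal (κ * h^2) ≤ volume (FF N ∩ Bv v)) with hHH
  have hvol1 : ∀ s : Set (Fin 2 → ℝ), s ⊆ unitBox → volume s ≤ 1 := by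
    intro s hs
    calc volume s ≤ volume unitBox := measure_mono hs
      _ = 1 := volume_unitBox
  have perN : ∀ N : ℕ, volume (⋃ v ∈ V \ HH N, Bv v) ≤ ENNReal.ofReal ε := by
    intro N
    obtain ⟨m₁, hm₁⟩ := eventually_atTop.mp hlower
    set m : ℕ := max (max N m₁) 1 with hm
    have hm1 : 1 ≤ m := le_max_right _ _
    have hmN : N ≤ m := le_trans (le_max_left N m₁) (le_max_left _ _)
    have hmm₁ : m₁ ≤ m := le_trans (le_max_right N m₁) (le_max_left _ _)
    have hEv : ∀ᶠ Q in atTop, (2*(Sg m) + 1 ≤ Sg Q ∧ m ≤ Q) := by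
      have h1 := hStend.eventually_ge_atTop (2*(Sg m) + 1)
      have h2 := eventually_ge_atTop m
      filter_upwards [h1, h2] with Q hQ1 hQ2
      exact ⟨hQ1, hQ2⟩
    obtain ⟨Q, hQfreq, hQS, hQm⟩ := (hfreq.and_eventually hEv).exists
    have hSgQ1 : (1:ℝ) ≤ Sg Q := by
      have := hSg0 m
      linarith
    set TQ := ∑ q ∈ Finset.Icc 1 Q, ∑ r ∈ Finset.Icc 1 Q, volume (A q ∩ A r) with hTQ
    set Tloc : (Fin 2 → ℤ) → ENNReal := fun v =>
      ∑ q ∈ Finset.Icc 1 Q, ∑ r ∈ Finset.Icc 1 Q, volume (A q ∩ A r ∩ Bv v) with hTloc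
    have hTsum : ∑ v ∈ V, Tloc v ≤ TQ := by
      rw [hTloc, hTQ]
      rw [Finset.sum_comm]
      apply Finset.sum_le_sum
      intro q _
      rw [Finset.sum_comm]
      apply Finset.sum_le_sum
      intro r _
      have hdisj : Set.PairwiseDisjoint (↑V : Set (Fin 2 → ℤ))
          (fun v => A q ∩ A r ∩ Bv v) := by
        intro v _ v' _ hne
        exact (hBdisjoint v v' hne).mono Set.inter_subset_right Set.inter_subset_right
      calc ∑ v ∈ V, volume (A q ∩ A r ∩ Bv v)
          = volume (⋃ v ∈ V, (A q ∩ A r ∩ Bv v)) :=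
            (measure_biUnion_finset hdisj (fun v _ =>
              (((hAmeas q).inter (hAmeas r)).inter (hBmeas v)))).symm
        _ ≤ volume (A q ∩ A r) := measure_mono (Set.iUnion₂_subset fun v _ =>
            Set.inter_subset_left)
    have hTQfin : TQ ≠ ⊤ := by
      refine (ENNReal.sum_lt_top.mpr fun q _ => (ENNReal.sum_lt_top.mpr fun r _ => ?_)).ne
      exact lt_of_le_of_lt (hvol1 _ (Set.Subset.trans Set.inter_subset_left (hAsub q)))
        ENNReal.one_lt_top
    have hTQle : TQ ≤ ENNReal.ofReal (4096 * (Sg Q)^2 / c) := by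
      have hcanc : TQ * ENNReal.ofReal c ≤ ENNReal.ofReal (64 * Sg Q)^2 := by
        rw [mul_comm]
        calc ENNReal.ofReal c * TQ ≤ (∑ q ∈ Finset.Icc 1 Q, volume (A q))^2 := hQfreq
          _ ≤ ENNReal.ofReal (64 * Sg Q)^2 := pow_le_pow_left' (hupper Q) 2
      have hc0 : ENNReal.ofReal c ≠ 0 := by
        simp only [Ne, ENNReal.ofReal_eq_zero, not_le]
        exact hc
      have hcT : ENNReal.ofReal c ≠ ⊤ := ENNReal.ofReal_ne_top
      rw [← ENNReal.le_div_iff_mul_le (Or.inl hc0) (Or.inl hcT)] at hcanc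
      calc TQ ≤ ENNReal.ofReal (64 * Sg Q)^2 / ENNReal.ofReal c := hcanc
        _ = ENNReal.ofReal ((64 * Sg Q)^2) / ENNReal.ofReal c := by
            rw [← ENNReal.ofReal_pow (by positivity)]
        _ = ENNReal.ofReal ((64 * Sg Q)^2 / c) := (ENNReal.ofReal_div_of_pos hc).symm
        _ = ENNReal.ofReal (4096 * (Sg Q)^2 / c) := by
            congr 1
            ring
    -- Markov
    set θ : ENNReal := ENNReal.ofReal (4096 * (Sg Q)^2 / (c * ε * (n:ℝ)^2)) with hθ
    have hθr : (0:ℝ) < 4096 * (Sg Q)^2 / (c * ε * (n:ℝ)^2) := by positivity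
    have hθ0 : θ ≠ 0 := by
      rw [hθ]
      simp only [Ne, ENNReal.ofReal_eq_zero, not_le]
      exact hθr
    have hθT : θ ≠ ⊤ := ENNReal.ofReal_ne_top
    set Bad : Finset (Fin 2 → ℤ) := V.filter (fun v => θ < Tloc v) with hBad
    have hBadcard : (Bad.card : ENNReal) ≤ ENNReal.ofReal (ε * (n:ℝ)^2) := by
      have hMarkov : (Bad.card : ENNReal) * θ ≤ TQ := by
        have h1 : Bad.card • θ ≤ ∑ v ∈ Bad, Tloc v :=
          Finset.card_nsmul_le_sum Bad Tloc θ (fun v hv =>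
            le_of_lt (Finset.mem_filter.mp hv).2)
        have h2 : ∑ v ∈ Bad, Tloc v ≤ ∑ v ∈ V, Tloc v :=
          Finset.sum_le_sum_of_subset (Finset.filter_subset _ _)
        calc (Bad.card : ENNReal) * θ = Bad.card • θ := (nsmul_eq_mul _ _).symm
          _ ≤ ∑ v ∈ Bad, Tloc v := h1
          _ ≤ ∑ v ∈ V, Tloc v := h2
          _ ≤ TQ := hTsum
      have hident : ENNReal.ofReal (ε * (n:ℝ)^2) * θ = ENNReal.ofReal (4096 * (Sg Q)^2 / c) := by
        rw [hθ, ← ENNReal.ofReal_mul (by positivity)]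
        congr 1
        field_simp
      have : (Bad.card : ENNReal) * θ ≤ ENNReal.ofReal (ε * (n:ℝ)^2) * θ := by
        rw [hident]
        exact le_trans hMarkov hTQle
      exact (ENNReal.mul_le_mul_iff_left hθ0 hθT).mp this
    -- good boxes satisfy the density bound
    have hgood : ∀ v ∈ V, Tloc v ≤ θ → ENNReal.ofReal (κ * h^2) ≤ volume (FF N ∩ Bv v) := by
      intro v hvV hvθ
      have hvbounds : ∀ i, 0 ≤ v i ∧ v i + 1 ≤ n := by
        intro i
        rw [hV, Finset.mem_Icc] at hvV
        have h1 : (0:ℤ) ≤ v i := hvV.1 i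
        have h2 : v i ≤ (n:ℤ) - 1 := hvV.2 i
        omega
      -- numerator lower bound
      have hnum : ENNReal.ofReal (h^2 * (Sg Q)/4) ≤
          ∑ q ∈ Finset.Ioc m Q, volume (A q ∩ Bv v) := by
        have hterm : ∀ q ∈ Finset.Ioc m Q,
            ENNReal.ofReal (h^2 * g q / 2) ≤ volume (A q ∩ Bv v) := by
          intro q hq
          rw [Finset.mem_Ioc] at hq
          exact hm₁ q (le_trans hmm₁ (le_of_lt hq.1)) v hvbounds
        have hsum1 : ENNReal.ofReal (∑ q ∈ Finset.Ioc m Q, (h^2 * g q / 2)) ≤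
            ∑ q ∈ Finset.Ioc m Q, volume (A q ∩ Bv v) := by
          rw [ENNReal.ofReal_sum_of_nonneg (fun q _ => by have := hg0 q; positivity)]
          exact Finset.sum_le_sum hterm
        refine le_trans ?_ hsum1
        apply ENNReal.ofReal_le_ofReal
        have hsplit : Sg m + ∑ q ∈ Finset.Ioc m Q, g q = Sg Q := by
          rw [hSg]
          simp only [← Finset.Icc_add_one_left_eq_Ioc]
          rw [Finset.Icc_add_one_left_eq_Ioc m Q, show Finset.Icc 1 m = Finset.Ioc 0 m from Finset.Icc_add_one_left_eq_Ioc 0 m,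
            show Finset.Icc 1 Q = Finset.Ioc 0 Q from Finset.Icc_add_one_left_eq_Ioc 0 Q]
          exact Finset.sum_Ioc_consecutive _ (Nat.zero_le m) hQm
        have hR : (Sg Q)/2 ≤ ∑ q ∈ Finset.Ioc m Q, g q := by linarith
        calc h^2 * (Sg Q)/4 = h^2 * ((Sg Q)/2) / 2 := by ring
          _ ≤ h^2 * (∑ q ∈ Finset.Ioc m Q, g q) / 2 := by nlinarith [sq_nonneg h]
          _ = ∑ q ∈ Finset.Ioc m Q, (h^2 * g q / 2) := by
              rw [Finset.mul_sum, Finset.sum_div]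
      -- Chung-Erdos localized
      have hCE := chung_erdos volume (Finset.Ioc m Q) (fun q => A q ∩ Bv v)
        (fun q => (hAmeas q).inter (hBmeas v))
      have hUsub : (⋃ q ∈ Finset.Ioc m Q, (A q ∩ Bv v)) ⊆ FF N ∩ Bv v := by
        apply Set.iUnion₂_subset
        intro q hq
        rw [Finset.mem_Ioc] at hq
        intro x hx
        refine ⟨?_, hx.2⟩
        rw [hFF]
        exact Set.mem_iUnion.mpr ⟨q, Set.mem_iUnion.mpr
          ⟨le_trans hmN (le_of_lt hq.1), hx.1⟩⟩
      have hdd : ∑ q ∈ Finset.Ioc m Q, ∑ r ∈ Finset.Ioc m Q,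
          volume ((A q ∩ Bv v) ∩ (A r ∩ Bv v)) ≤ Tloc v := by
        have hsetEq : ∀ q r : ℕ, (A q ∩ Bv v) ∩ (A r ∩ Bv v) = A q ∩ A r ∩ Bv v := by
          intro q r
          rw [Set.inter_inter_inter_comm, Set.inter_self]
        have hIocsub : Finset.Ioc m Q ⊆ Finset.Icc 1 Q := by
          intro q hq
          rw [Finset.mem_Ioc] at hq
          rw [Finset.mem_Icc]
          omega
        calc ∑ q ∈ Finset.Ioc m Q, ∑ r ∈ Finset.Ioc m Q,
              volume ((A q ∩ Bv v) ∩ (A r ∩ Bv v))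
            = ∑ q ∈ Finset.Ioc m Q, ∑ r ∈ Finset.Ioc m Q,
              volume (A q ∩ A r ∩ Bv v) := by
              refine Finset.sum_congr rfl fun q _ => Finset.sum_congr rfl fun r _ => ?_
              rw [hsetEq]
          _ ≤ ∑ q ∈ Finset.Ioc m Q, ∑ r ∈ Finset.Icc 1 Q,
              volume (A q ∩ A r ∩ Bv v) := by
              refine Finset.sum_le_sum fun q _ => ?_
              exact Finset.sum_le_sum_of_subset hIocsub
          _ ≤ Tloc v := by
              rw [hTloc]
              exact Finset.sum_le_sum_of_subset hIocsub
      have hCE2 : (ENNReal.ofReal (h^2 * (Sg Q)/4))^2 ≤ volume (FF N ∩ Bv v) * θ := by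
        calc (ENNReal.ofReal (h^2 * (Sg Q)/4))^2
            ≤ (∑ q ∈ Finset.Ioc m Q, volume (A q ∩ Bv v))^2 := pow_le_pow_left' hnum 2
          _ ≤ volume (⋃ q ∈ Finset.Ioc m Q, (A q ∩ Bv v)) *
              (∑ q ∈ Finset.Ioc m Q, ∑ r ∈ Finset.Ioc m Q,
                volume ((A q ∩ Bv v) ∩ (A r ∩ Bv v))) := hCE
          _ ≤ volume (FF N ∩ Bv v) * θ := by
              apply mul_le_mul' (measure_mono hUsub) (le_trans hdd hvθ)
      -- conclude
      have hdivle : (ENNReal.ofReal (h^2 * (Sg Q)/4))^2 / θ ≤ volume (FF N ∩ Bv v) := by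
        rw [ENNReal.div_le_iff_le_mul (Or.inl hθ0) (Or.inl hθT)]
        exact hCE2
      refine le_trans ?_ hdivle
      have hrw : (ENNReal.ofReal (h^2 * (Sg Q)/4))^2 / θ
          = ENNReal.ofReal ((h^2 * (Sg Q)/4)^2 / (4096 * (Sg Q)^2 / (c * ε * (n:ℝ)^2))) := by
        rw [← ENNReal.ofReal_pow (by positivity), hθ, ← ENNReal.ofReal_div_of_pos hθr]
      rw [hrw]
      apply ENNReal.ofReal_le_ofReal
      have hn0 : (n:ℝ) ≠ 0 := ne_of_gt hn'
      have hExact : κ * h^2 * (4096 * (Sg Q)^2 / (c * ε * (n:ℝ)^2)) = (h^2 * (Sg Q)/4)^2 := by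
        rw [hκ, hh_def]
        field_simp
        ring
      rw [le_div_iff₀ hθr]
      exact le_of_eq hExact
    -- bad set inclusion and conclusion
    have hsubBad : V \ HH N ⊆ Bad := by
      intro v hv
      rw [Finset.mem_sdiff, hHH, Finset.mem_filter] at hv
      obtain ⟨hvV, hvnot⟩ := hv
      rw [hBad, Finset.mem_filter]
      refine ⟨hvV, ?_⟩
      by_contra hle
      push_neg at hle
      exact hvnot ⟨hvV, hgood v hvV hle⟩
    calc volume (⋃ v ∈ V \ HH N, Bv v) ≤ ∑ v ∈ V \ HH N, volume (Bv v) :=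
          measure_biUnion_finset_le _ _
      _ ≤ ∑ v ∈ Bad, volume (Bv v) := by
          apply Finset.sum_le_sum_of_subset hsubBad
      _ = (Bad.card : ENNReal) * ENNReal.ofReal (h^2) := by
          rw [Finset.sum_congr rfl (fun v _ => hBvol v), Finset.sum_const, nsmul_eq_mul]
      _ ≤ ENNReal.ofReal (ε * (n:ℝ)^2) * ENNReal.ofReal (h^2) :=
          mul_le_mul_left hBadcard _
      _ = ENNReal.ofReal (ε * ((n:ℝ)^2 * h^2)) := by
          rw [← ENNReal.ofReal_mul (by positivity)]
          congr 1
          ring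
      _ = ENNReal.ofReal ε := by
          have hn2h : (n:ℝ)^2 * h^2 = 1 := by
            rw [hh_def]; field_simp
          rw [hn2h, mul_one]
  -- assemble the bad set
  set Vb : Set (Fin 2 → ℝ) := ⋃ N, ⋃ v ∈ V \ HH N, Bv v with hVb
  have hHHanti : ∀ N N' : ℕ, N ≤ N' → HH N' ⊆ HH N := by
    intro N N' hNN' v hv
    rw [hHH, Finset.mem_filter] at hv ⊢
    exact ⟨hv.1, le_trans hv.2 (measure_mono (Set.inter_subset_inter_left _ (hFFanti hNN')))⟩
  have hVbmeas : MeasurableSet Vb :=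
    MeasurableSet.iUnion fun N => Finset.measurableSet_biUnion _ fun v _ => hBmeas v
  have hVbvol : volume Vb ≤ ENNReal.ofReal ε := by
    rw [hVb]
    rw [Directed.measure_iUnion ?_]
    · exact iSup_le perN
    · apply Monotone.directed_le
      intro N N' hNN' y hy
      simp only [Set.mem_iUnion] at hy ⊢
      obtain ⟨v, hv, hyv⟩ := hy
      rw [Finset.mem_sdiff] at hv
      exact ⟨v, Finset.mem_sdiff.mpr ⟨hv.1, fun hmem => hv.2 (hHHanti N N' hNN' hmem)⟩, hyv⟩
  refine ⟨Vb, hVbmeas, hVbvol, ?_⟩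
  intro x hxu hxVb
  set v : Fin 2 → ℤ := fun i => ⌊x i * n⌋ with hvdef
  have hxIco : ∀ i, 0 ≤ x i ∧ x i < 1 := by
    intro i
    have := hxu i (Set.mem_univ i)
    simpa [Set.mem_Ico] using this
  have hvV : v ∈ V := by
    rw [hV, Finset.mem_Icc]
    constructor <;> (intro i)
    · show (0:ℤ) ≤ v i
      rw [hvdef]
      exact Int.floor_nonneg.mpr (mul_nonneg (hxIco i).1 hn'.le)
    · show (⌊x i * (n:ℝ)⌋ : ℤ) ≤ (n:ℤ) - 1
      have h1 : x i * n < n := by nlinarith [(hxIco i).1, (hxIco i).2]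
      have h2 : (⌊x i * (n:ℝ)⌋ : ℝ) ≤ x i * n := Int.floor_le _
      have : (⌊x i * (n:ℝ)⌋ : ℝ) < (n:ℝ) := lt_of_le_of_lt h2 h1
      have : ⌊x i * (n:ℝ)⌋ < (n:ℤ) := by exact_mod_cast this
      omega
  have hxBv : x ∈ Bv v := by
    intro i _
    simp only [Set.mem_Ico]
    rw [hvdef]
    constructor
    · have h2 : (⌊x i * (n:ℝ)⌋ : ℝ) ≤ x i * n := Int.floor_le _
      calc (⌊x i * (n:ℝ)⌋ : ℝ) * h ≤ (x i * n) * h := by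
            apply mul_le_mul_of_nonneg_right h2 hh.le
        _ = x i := by rw [hh_def]; field_simp
    · have h2 : x i * n < (⌊x i * (n:ℝ)⌋ : ℝ) + 1 := Int.lt_floor_add_one _
      calc x i = (x i * n) * h := by rw [hh_def]; field_simp
        _ < ((⌊x i * (n:ℝ)⌋ : ℝ) + 1) * h := by
            apply mul_lt_mul_of_pos_right h2 hh
        _ = (⌊x i * (n:ℝ)⌋ : ℝ) * h + h := by ring
  have hvHH : ∀ N, v ∈ HH N := by
    intro N
    by_contra hnot
    apply hxVb
    rw [hVb]
    exact Set.mem_iUnion.mpr ⟨N, Set.mem_biUnion (Finset.mem_sdiff.mpr ⟨hvV, hnot⟩) hxBv⟩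
  -- conclude with continuity from above
  have hiInter : (⋂ N, ⋃ q, ⋃ _ : N ≤ q, A q) ∩
      box (fun i => ((⌊x i * n⌋ : ℤ) : ℝ) * (n:ℝ)⁻¹) ((n:ℝ)⁻¹) = ⋂ N, (FF N ∩ Bv v) := by
    rw [Set.iInter_inter]
  rw [hiInter]
  have hmeas2 : ∀ N, NullMeasurableSet (FF N ∩ Bv v) volume :=
    fun N => ((hFFmeas N).inter (hBmeas v)).nullMeasurableSet
  have hfin : volume (FF 0 ∩ Bv v) ≠ ⊤ := by
    refine ne_of_lt (lt_of_le_of_lt (hvol1 _ ?_) ENNReal.one_lt_top)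
    refine Set.Subset.trans Set.inter_subset_left ?_
    rw [hFF]
    apply Set.iUnion_subset
    intro q
    apply Set.iUnion_subset
    intro _
    exact hAsub q
  rw [Directed.measure_iInter hmeas2 ?_ ⟨0, hfin⟩]
  · apply le_iInf
    intro N
    have := hvHH N
    rw [hHH, Finset.mem_filter] at this
    exact le_trans (le_of_eq (by rw [hκ])) this.2
  · intro N N'
    refine ⟨max N N', Set.inter_subset_inter_left _ (hFFanti (le_max_left _ _)),
      Set.inter_subset_inter_left _ (hFFanti (le_max_right _ _))⟩

lemma eventually_size (h : ℝ) (hh : 0 < h) :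
    ∀ᶠ q : ℕ in atTop, 24 * Real.sqrt (3*(q:ℝ)) + 6 ≤ h * q := by
  set R : ℝ := (24 * Real.sqrt 3 + 6)/h + 1 with hR
  have hR1 : 1 ≤ R := by
    rw [hR]
    have h0 : 0 ≤ (24 * Real.sqrt 3 + 6)/h := by positivity
    linarith
  filter_upwards [eventually_ge_atTop ⌈R^2⌉₊] with q hq
  have hq' : R^2 ≤ (q:ℝ) := by
    calc R^2 ≤ (⌈R^2⌉₊ : ℝ) := Nat.le_ceil _
      _ ≤ q := by exact_mod_cast hq
  have hsq : R ≤ Real.sqrt q := by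
    have h1 := Real.sqrt_le_sqrt hq'
    rwa [Real.sqrt_sq (by linarith : (0:ℝ) ≤ R)] at h1
  have hq1 : (1:ℝ) ≤ Real.sqrt q := le_trans hR1 hsq
  have h3q : Real.sqrt (3*(q:ℝ)) = Real.sqrt 3 * Real.sqrt q := Real.sqrt_mul (by norm_num) _
  have hqeq : (q:ℝ) = Real.sqrt q * Real.sqrt q :=
    (Real.mul_self_sqrt (by positivity)).symm
  have hhR : h * R = 24*Real.sqrt 3 + 6 + h := by
    rw [hR]
    field_simp
  have h1 : 24*Real.sqrt 3 + 6 ≤ h * Real.sqrt q := by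
    have h2 := mul_le_mul_of_nonneg_left hsq hh.le
    rw [hhR] at h2
    linarith
  calc 24 * Real.sqrt (3*(q:ℝ)) + 6 = 24*Real.sqrt 3*Real.sqrt q + 6 := by rw [h3q]; ring
    _ ≤ 24*Real.sqrt 3*Real.sqrt q + 6*Real.sqrt q := by nlinarith [Real.sqrt_nonneg (3:ℝ)]
    _ = (24*Real.sqrt 3 + 6)*Real.sqrt q := by ring
    _ ≤ (h*Real.sqrt q)*Real.sqrt q := by nlinarith [Real.sqrt_nonneg ((q:ℝ))]
    _ = h * q := by rw [mul_assoc, ← hqeq]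

end
end DSAux

open DSAux Metric in
/-- Divergence Borel–Cantelli: if `∑ ψ(q)² = ∞` and the sets `Ã_q` are quasi-independent
on average, then `limsup Ã_q` has full measure. -/
theorem full_measure_of_quasi_independent
    (δ : ℝ) (hδ : 0 < δ) (ψ : ℕ → ℝ) (hψ : ∀ n, 0 ≤ ψ n)
    (hhalf : ∀ q, ψ q ≤ 1 / 2) (y : Fin 2 → ℝ)
    (a : ℕ → Fin 2 → ℤ) (b : ℕ → ℕ) (hb1 : ∀ q, 1 ≤ b q)
    (hab : ∀ q : ℕ, 1 ≤ q →
      ‖(b q : ℝ) • y - (fun i => (a q i : ℝ))‖ < (q : ℝ) ^ (-(δ / (δ + 3))))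
    (hb2 : ∀ q : ℕ, 1 ≤ q → (b q : ℝ) ≤ (q : ℝ) ^ (2 * δ / (δ + 3)))
    (hgcdab : ∀ q, Nat.gcd (Int.gcd (a q 0) (a q 1)) (b q) = 1)
    (hdiv : ¬ Summable (fun q : ℕ => ψ q ^ 2))
    (hqi : 0 < atTop.limsup (fun Q : ℕ =>
      (∑ q ∈ Finset.Icc 1 Q, volume (Atilde ψ y (a q) (b q) q)) ^ 2 /
      ∑ q ∈ Finset.Icc 1 Q, ∑ r ∈ Finset.Icc 1 Q,
        volume (Atilde ψ y (a q) (b q) q ∩ Atilde ψ y (a r) (b r) r))) :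
    volume (⋂ N : ℕ, ⋃ q : ℕ, ⋃ _ : N ≤ q, Atilde ψ y (a q) (b q) q) = 1 := by
  classical
  set A : ℕ → Set (Fin 2 → ℝ) := fun q => Atilde ψ y (a q) (b q) q with hA
  have hAmeas : ∀ q, MeasurableSet (A q) := fun q => measurableSet_Atilde _ _ _ _ _
  have hAsub : ∀ q, A q ⊆ unitBox := fun q => Atilde_subset_unitBox
  set g : ℕ → ℝ := fun q => ψ q^2 with hg
  have hg0 : ∀ q, 0 ≤ g q := fun q => sq_nonneg _
  have hvol1 : ∀ s : Set (Fin 2 → ℝ), s ⊆ unitBox → volume s ≤ 1 := by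
    intro s hs
    calc volume s ≤ volume unitBox := measure_mono hs
      _ = 1 := volume_unitBox
  -- upper bound for partial sums
  have hupper : ∀ Q : ℕ, (∑ q ∈ Finset.Icc 1 Q, volume (A q)) ≤
      ENNReal.ofReal (64 * ∑ q ∈ Finset.Icc 1 Q, g q) := by
    intro Q
    calc ∑ q ∈ Finset.Icc 1 Q, volume (A q)
        ≤ ∑ q ∈ Finset.Icc 1 Q, ENNReal.ofReal (64 * g q) := by
          apply Finset.sum_le_sum
          intro q hq
          rw [Finset.mem_Icc] at hq
          exact Atilde_vol_upper ψ y (a q) (b q) q (by omega) (hψ q) (hhalf q)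
      _ = ENNReal.ofReal (∑ q ∈ Finset.Icc 1 Q, 64 * g q) :=
          (ENNReal.ofReal_sum_of_nonneg (fun q _ => by have := hg0 q; positivity)).symm
      _ = ENNReal.ofReal (64 * ∑ q ∈ Finset.Icc 1 Q, g q) := by rw [Finset.mul_sum]
  -- divergence of partial sums
  have hStend : Tendsto (fun Q => ∑ q ∈ Finset.Icc 1 Q, g q) atTop atTop := by
    have hns : ¬ Summable g := hdiv
    have h1 : Tendsto (fun n => ∑ q ∈ Finset.range n, g q) atTop atTop :=
      (not_summable_iff_tendsto_nat_atTop_of_nonneg hg0).mp hns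
    have hrel : ∀ Q : ℕ, ∑ q ∈ Finset.range (Q+1), g q = g 0 + ∑ q ∈ Finset.Icc 1 Q, g q := by
      intro Q
      have hins : Finset.range (Q+1) = insert 0 (Finset.Icc 1 Q) := by
        ext t
        simp only [Finset.mem_range, Finset.mem_insert, Finset.mem_Icc]
        omega
      rw [hins, Finset.sum_insert (by simp)]
    have h2 : Tendsto (fun Q : ℕ => ∑ q ∈ Finset.range (Q+1), g q) atTop atTop :=
      h1.comp (tendsto_add_atTop_nat 1)
    have h3 : (fun Q : ℕ => ∑ q ∈ Finset.Icc 1 Q, g q)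
        = fun Q : ℕ => (∑ q ∈ Finset.range (Q+1), g q) + (- g 0) := by
      funext Q
      rw [hrel]
      ring
    rw [h3]
    exact h2.atTop_add tendsto_const_nhds
  -- finiteness of pair-sums
  have hTTfin : ∀ Q : ℕ, (∑ q ∈ Finset.Icc 1 Q, ∑ r ∈ Finset.Icc 1 Q, volume (A q ∩ A r)) ≠ ⊤ := by
    intro Q
    refine (ENNReal.sum_lt_top.mpr fun q _ => (ENNReal.sum_lt_top.mpr fun r _ => ?_)).ne
    exact lt_of_le_of_lt (hvol1 _ (Set.Subset.trans Set.inter_subset_left (hAsub q)))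
      ENNReal.one_lt_top
  -- extract the quasi-independence constant
  obtain ⟨c0, hc0, hfreq0⟩ : ∃ c : ℝ, 0 < c ∧ ∃ᶠ Q in atTop,
      ENNReal.ofReal c * (∑ q ∈ Finset.Icc 1 Q, ∑ r ∈ Finset.Icc 1 Q, volume (A q ∩ A r))
        ≤ (∑ q ∈ Finset.Icc 1 Q, volume (A q))^2 := by
    set f : ℕ → ENNReal := fun Q =>
      (∑ q ∈ Finset.Icc 1 Q, volume (A q)) ^ 2 /
        ∑ q ∈ Finset.Icc 1 Q, ∑ r ∈ Finset.Icc 1 Q, volume (A q ∩ A r) with hf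
    have hqi' : 0 < atTop.limsup f := hqi
    obtain ⟨c', hc'0, hc'lt, hc'top⟩ : ∃ c' : ENNReal, 0 < c' ∧ c' < atTop.limsup f ∧ c' ≠ ⊤ := by
      rcases eq_or_ne (atTop.limsup f) ⊤ with htop | hne
      · exact ⟨1, zero_lt_one, by rw [htop]; exact ENNReal.one_lt_top, ENNReal.one_ne_top⟩
      · refine ⟨atTop.limsup f / 2, ENNReal.half_pos (ne_of_gt hqi'),
          ENNReal.half_lt_self (ne_of_gt hqi') hne, ?_⟩
        exact ne_top_of_le_ne_top hne (ENNReal.half_le_self)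
    have hfr := frequently_lt_of_lt_limsup (by isBoundedDefault) hc'lt
    refine ⟨c'.toReal, ENNReal.toReal_pos (ne_of_gt hc'0) hc'top, ?_⟩
    have hofr : ENNReal.ofReal c'.toReal = c' := ENNReal.ofReal_toReal hc'top
    refine hfr.mono fun Q hQ => ?_
    rw [hofr]
    by_cases hT0 : (∑ q ∈ Finset.Icc 1 Q, ∑ r ∈ Finset.Icc 1 Q, volume (A q ∩ A r)) = 0
    · rw [hT0, mul_zero]
      exact zero_le
    · rw [← ENNReal.le_div_iff_mul_le (Or.inl hT0) (Or.inl (hTTfin Q))]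
      exact hQ.le
  set c : ℝ := min c0 1 with hcdef
  have hc : 0 < c := lt_min hc0 one_pos
  have hc1 : c ≤ 1 := min_le_right _ _
  have hfreq : ∃ᶠ Q in atTop,
      ENNReal.ofReal c * (∑ q ∈ Finset.Icc 1 Q, ∑ r ∈ Finset.Icc 1 Q, volume (A q ∩ A r))
        ≤ (∑ q ∈ Finset.Icc 1 Q, volume (A q))^2 := by
    refine hfreq0.mono fun Q hQ => le_trans ?_ hQ
    exact mul_le_mul_left (ENNReal.ofReal_le_ofReal (min_le_left _ _)) _
  -- lower bounds at all scales
  have hlower : ∀ n : ℕ, 0 < n → ∀ᶠ q : ℕ in atTop, ∀ v : Fin 2 → ℤ,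
      (∀ i, 0 ≤ v i ∧ v i + 1 ≤ n) →
      ENNReal.ofReal (((n:ℝ)⁻¹)^2 * g q / 2) ≤
        volume (A q ∩ box (fun i => (v i : ℝ) * (n:ℝ)⁻¹) ((n:ℝ)⁻¹)) := by
    intro n hn
    have hn' : (0:ℝ) < n := by exact_mod_cast hn
    have hh : (0:ℝ) < (n:ℝ)⁻¹ := by positivity
    filter_upwards [eventually_size ((n:ℝ)⁻¹) hh, eventually_ge_atTop 1] with q hq1 hq2
    intro v hv
    have hcl : ∀ i, 0 ≤ (v i : ℝ) * (n:ℝ)⁻¹ := by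
      intro i
      have : (0:ℝ) ≤ (v i : ℝ) := by exact_mod_cast (hv i).1
      positivity
    have hcu : ∀ i, (v i : ℝ) * (n:ℝ)⁻¹ + (n:ℝ)⁻¹ ≤ 1 := by
      intro i
      have h1 : ((v i : ℝ) + 1) ≤ (n:ℝ) := by exact_mod_cast (hv i).2
      have h2 : ((v i : ℝ) + 1) * (n:ℝ)⁻¹ ≤ (n:ℝ) * (n:ℝ)⁻¹ :=
        mul_le_mul_of_nonneg_right h1 hh.le
      rw [mul_inv_cancel₀ (ne_of_gt hn')] at h2
      calc (v i : ℝ) * (n:ℝ)⁻¹ + (n:ℝ)⁻¹ = ((v i : ℝ) + 1) * (n:ℝ)⁻¹ := by ring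
        _ ≤ 1 := h2
    have := sieve_lower ψ y (a q) (b q) q (by omega) (hψ q) (hhalf q) (hgcdab q)
      (fun i => (v i : ℝ) * (n:ℝ)⁻¹) ((n:ℝ)⁻¹) hh hcl hcu hq1
    exact this
  -- the limsup set
  set E : Set (Fin 2 → ℝ) := ⋂ N, ⋃ q, ⋃ _ : N ≤ q, A q with hE
  have hEmeas : MeasurableSet E :=
    MeasurableSet.iInter fun N => MeasurableSet.iUnion fun q =>
      MeasurableSet.iUnion fun _ => hAmeas q
  have hEsub : E ⊆ unitBox := by
    refine Set.Subset.trans (Set.iInter_subset _ 0) ?_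
    exact Set.iUnion_subset fun q => Set.iUnion_subset fun _ => hAsub q
  set s : Set (Fin 2 → ℝ) := unitBox \ E with hs
  have hsmeas : MeasurableSet s := measurableSet_unitBox.diff hEmeas
  -- key: volume s ≤ ε for every ε > 0
  have key1 : ∀ ε : ℝ, 0 < ε → ε ≤ 1 → volume s ≤ ENNReal.ofReal ε := by
    intro ε hε hε1
    set κ : ℝ := ε * c / 65536 with hκ
    have hκpos : 0 < κ := by positivity
    have hκ1 : κ ≤ 1 := by rw [hκ]; nlinarith
    have perk : ∀ k : ℕ, ∃ Vb : Set (Fin 2 → ℝ), MeasurableSet Vb ∧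
        volume Vb ≤ ENNReal.ofReal ε ∧
        ∀ x ∈ unitBox, x ∉ Vb →
          ENNReal.ofReal (κ * ((((2:ℕ)^k : ℕ):ℝ)⁻¹)^2) ≤
            volume (E ∩ closedBall x ((((2:ℕ)^k : ℕ):ℝ)⁻¹)) := by
      intro k
      have hnk : (0:ℕ) < 2^k := by positivity
      obtain ⟨Vb, hm, hv, hbound⟩ := per_scale A hAmeas hAsub g hg0 c ε hc hε hupper hfreq
        hStend (2^k) hnk (hlower (2^k) hnk)
      refine ⟨Vb, hm, hv, ?_⟩
      intro x hxu hxVb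
      have hres := hbound x hxu hxVb
      set n : ℕ := 2^k with hn
      set h : ℝ := ((n:ℕ):ℝ)⁻¹ with hhd
      have hn' : (0:ℝ) < n := by exact_mod_cast hnk
      have hh : (0:ℝ) < h := by rw [hhd]; positivity
      refine le_trans hres (measure_mono ?_)
      apply Set.inter_subset_inter_right
      -- box of x ⊆ closedBall x h
      intro z hz
      rw [Metric.mem_closedBall]
      rw [dist_pi_le_iff hh.le]
      intro i
      have hzi := hz i (Set.mem_univ i)
      simp only [Set.mem_Ico] at hzi
      have hxIco : 0 ≤ x i ∧ x i < 1 := by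
        have := hxu i (Set.mem_univ i)
        simpa [Set.mem_Ico] using this
      have hfl : (⌊x i * n⌋ : ℝ) ≤ x i * n := Int.floor_le _
      have hfl2 : x i * n < (⌊x i * n⌋ : ℝ) + 1 := Int.lt_floor_add_one _
      have hxlo : (⌊x i * n⌋ : ℝ) * h ≤ x i := by
        calc (⌊x i * n⌋ : ℝ) * h ≤ (x i * n) * h := mul_le_mul_of_nonneg_right hfl hh.le
          _ = x i := by rw [hhd]; field_simp
      have hxhi : x i < (⌊x i * n⌋ : ℝ) * h + h := by
        calc x i = (x i * n) * h := by rw [hhd]; field_simp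
          _ < ((⌊x i * n⌋ : ℝ) + 1) * h := mul_lt_mul_of_pos_right hfl2 hh
          _ = (⌊x i * n⌋ : ℝ) * h + h := by ring
      rw [Real.dist_eq, abs_le]
      constructor <;> nlinarith [hzi.1, hzi.2]
    choose Vb hVbm hVbvol hVbbound using perk
    -- a.e. point of s is eventually in Vb k
    have hbes := Besicovitch.ae_tendsto_measure_inter_div volume s
    have hae : ∀ᵐ x ∂(volume.restrict s), ∀ᶠ k in atTop, x ∈ Vb k := by
      filter_upwards [hbes, ae_restrict_mem hsmeas] with x hx hxs
      have hseq : Tendsto (fun k : ℕ => ((((2:ℕ)^k : ℕ)):ℝ)⁻¹) atTop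
          (nhdsWithin 0 (Set.Ioi 0)) := by
        rw [tendsto_nhdsWithin_iff]
        constructor
        · have hcast : (fun k : ℕ => ((((2:ℕ)^k : ℕ)):ℝ)) = fun k : ℕ => (2:ℝ)^k := by
            funext k; push_cast; ring
          have h2 : Tendsto (fun k : ℕ => (2:ℝ)^k) atTop atTop :=
            tendsto_pow_atTop_atTop_of_one_lt (by norm_num)
          have := h2.inv_tendsto_atTop
          rw [← hcast] at this
          exact this
        · exact Filter.Eventually.of_forall fun k => by
            simp only [Set.mem_Ioi]
            positivity
      have hcomp := hx.comp hseq
      have hthresh : ENNReal.ofReal (1 - κ/8) < 1 := by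
        rw [← ENNReal.ofReal_one]
        exact (ENNReal.ofReal_lt_ofReal_iff one_pos).mpr (by linarith)
      have hev := hcomp.eventually (eventually_gt_nhds hthresh)
      filter_upwards [hev] with k hk
      by_contra hxVb
      set r : ℝ := ((((2:ℕ)^k : ℕ)):ℝ)⁻¹ with hr
      have hrpos : 0 < r := by rw [hr]; positivity
      have hxu : x ∈ unitBox := hxs.1
      have hEball := hVbbound k x hxu hxVb
      set B := closedBall x r with hB
      have hBvol : volume B = ENNReal.ofReal (4*r^2) := by
        rw [hB, closedBall_pi x hrpos.le, volume_pi_pi]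
        have : ∀ i : Fin 2, volume (closedBall (x i) r) = ENNReal.ofReal (2*r) := fun i =>
          Real.volume_closedBall _ _
        simp only [this, Finset.prod_const, Finset.card_univ, Fintype.card_fin]
        rw [← ENNReal.ofReal_pow (by positivity)]
        congr 1
        ring
      have hBne : volume B ≠ ⊤ := by rw [hBvol]; exact ENNReal.ofReal_ne_top
      have hB0 : volume B ≠ 0 := by
        rw [hBvol]
        simp only [Ne, ENNReal.ofReal_eq_zero, not_le]
        positivity
      -- from hk: (s∩B)-density is > 1 - κ/8
      have hsB : ENNReal.ofReal (1 - κ/8) * volume B ≤ volume (s ∩ B) := by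
        have h1 : ENNReal.ofReal (1 - κ/8) * volume B ≤
            (volume (s ∩ B) / volume B) * volume B :=
          mul_le_mul_left hk.le _
        rwa [ENNReal.div_mul_cancel hB0 hBne] at h1
      have hadd : volume (E ∩ B) + volume (s ∩ B) ≤ volume B := by
        have hdisj : Disjoint (E ∩ B) (s ∩ B) := by
          apply Set.disjoint_of_subset Set.inter_subset_left Set.inter_subset_left
          rw [hs]
          exact disjoint_sdiff_self_right

        rw [← measure_union hdisj (hsmeas.inter (measurableSet_closedBall))]
        apply measure_mono
        exact Set.union_subset Set.inter_subset_right Set.inter_subset_right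
      -- contradiction
      have hEB : ENNReal.ofReal (κ * r^2) ≤ volume (E ∩ B) := hEball
      have hcontr : ENNReal.ofReal (κ * r^2) + ENNReal.ofReal ((1 - κ/8) * (4*r^2)) ≤
          ENNReal.ofReal (4*r^2) := by
        calc ENNReal.ofReal (κ * r^2) + ENNReal.ofReal ((1 - κ/8) * (4*r^2))
            ≤ volume (E ∩ B) + volume (s ∩ B) := by
              apply add_le_add hEB
              rw [ENNReal.ofReal_mul (by linarith)]
              rw [← hBvol]
              exact hsB
          _ ≤ volume B := hadd
          _ = ENNReal.ofReal (4*r^2) := hBvol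
      rw [← ENNReal.ofReal_add (by positivity) (by nlinarith [sq_nonneg r])] at hcontr
      rw [ENNReal.ofReal_le_ofReal_iff (by positivity)] at hcontr
      nlinarith [mul_pos hκpos (pow_pos hrpos 2)]
    -- conclude
    set P : (Fin 2 → ℝ) → Prop := fun x => ∀ᶠ k in atTop, x ∈ Vb k with hP
    have hnull : volume (s ∩ {x | ¬ P x}) = 0 := by
      have h1 := hae
      rw [ae_iff] at h1
      rw [Measure.restrict_apply' hsmeas] at h1
      rw [Set.inter_comm] at h1
      exact h1
    set Vinf : Set (Fin 2 → ℝ) := ⋃ m, ⋂ k, ⋂ _ : m ≤ k, Vb k with hVinf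
    have hsubV : s ∩ {x | P x} ⊆ Vinf := by
      rintro x ⟨hxs, hxP⟩
      obtain ⟨m, hm⟩ := eventually_atTop.mp hxP
      exact Set.mem_iUnion.mpr ⟨m, Set.mem_iInter.mpr fun k =>
        Set.mem_iInter.mpr fun hk => hm k hk⟩
    have hVinfvol : volume Vinf ≤ ENNReal.ofReal ε := by
      rw [hVinf, Directed.measure_iUnion ?_]
      · apply iSup_le
        intro m
        refine le_trans (measure_mono ?_) (hVbvol m)
        intro x hx
        simp only [Set.mem_iInter] at hx
        exact hx m (le_refl m)
      · apply Monotone.directed_le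
        intro m m' hmm' x hx
        simp only [Set.mem_iInter] at hx ⊢
        intro k hk
        exact hx k (le_trans hmm' hk)
    have hcover : s ⊆ (s ∩ {x | P x}) ∪ (s ∩ {x | ¬ P x}) := by
      intro x hx
      by_cases hPx : P x
      · exact Or.inl ⟨hx, hPx⟩
      · exact Or.inr ⟨hx, hPx⟩
    calc volume s ≤ volume ((s ∩ {x | P x}) ∪ (s ∩ {x | ¬ P x})) := measure_mono hcover
      _ ≤ volume (s ∩ {x | P x}) + volume (s ∩ {x | ¬ P x}) := measure_union_le _ _
      _ ≤ ENNReal.ofReal ε + 0 :=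
          add_le_add (le_trans (measure_mono hsubV) hVinfvol) (le_of_eq hnull)
      _ = ENNReal.ofReal ε := by simp
  -- volume s = 0
  have hs0 : volume s = 0 := by
    by_contra hne
    have hsfin : volume s ≠ ⊤ := by
      refine ne_of_lt (lt_of_le_of_lt (hvol1 s Set.diff_subset) ENNReal.one_lt_top)
    set t : ℝ := (volume s).toReal with ht
    have htpos : 0 < t := ENNReal.toReal_pos hne hsfin
    have hsle1 : volume s ≤ 1 := hvol1 s Set.diff_subset
    have ht1 : t ≤ 1 := by
      rw [ht]
      calc (volume s).toReal ≤ (1:ENNReal).toReal := ENNReal.toReal_mono ENNReal.one_ne_top hsle1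
        _ = 1 := by simp
    have hkey := key1 (t/2) (by positivity) (by linarith)
    have hlt : ENNReal.ofReal (t/2) < volume s := by
      conv_rhs => rw [← ENNReal.ofReal_toReal hsfin]
      rw [ENNReal.ofReal_lt_ofReal_iff htpos]
      linarith
    exact absurd hkey (not_le.mpr hlt)
  -- finish
  have hEeq : E = unitBox \ s := by
    rw [hs]
    exact (Set.diff_diff_cancel_left hEsub).symm
  calc volume E = volume (unitBox \ s) := by rw [hEeq]
    _ = volume unitBox := measure_diff_null hs0
    _ = 1 := volume_unitBox
end

section
/- There is an absolute constant C > 0 such that for all ψ : ℕ → ℝ_{≥0}, y ∈ ℝ², and q, r ∈ ℕ with ψ(q) ≤ 1/2 and ψ(r) ≤ 1/2, the Lebesgue measure of A_q ∩ A_r satisfies |A_q ∩ A_r| ≤ C·(ψ(q)²ψ(r)² + ψ(q)²·gcd(q,r)²/q²). -/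
open MeasureTheory Real Filter

/-- The set `A_q`. -/
def Aset (ψ : ℕ → ℝ) (y : Fin 2 → ℝ) (q : ℕ) : Set (Fin 2 → ℝ) :=
  {x ∈ unitBox | ∃ p : Fin 2 → ℤ,
    ‖(q : ℝ) • x - (fun i => (p i : ℝ)) - y‖ < ψ q}

/-- One–dimensional analogue of `Aset`. -/
def Bset (q : ℕ) (c ε : ℝ) : Set ℝ :=
  {x ∈ Set.Ico (0:ℝ) 1 | ∃ p : ℤ, |(q : ℝ) * x - p - c| < ε}

lemma Aset_eq_pi (ψ : ℕ → ℝ) (y : Fin 2 → ℝ) (q : ℕ) :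
    Aset ψ y q = Set.univ.pi fun i => Bset q (y i) (ψ q) := by
  by_cases hε : 0 < ψ q
  · ext x
    simp only [Aset, unitBox, Bset, Set.mem_setOf_eq, Set.mem_pi, Set.mem_univ, true_implies,
      Set.mem_sep_iff]
    constructor
    · rintro ⟨hbox, p, hp⟩ i
      refine ⟨hbox i, p i, ?_⟩
      have := (pi_norm_lt_iff hε).mp hp i
      simpa [Real.norm_eq_abs, mul_comm] using this
    · intro h
      refine ⟨fun i => (h i).1, fun i => (h i).2.choose, ?_⟩
      rw [pi_norm_lt_iff hε]
      intro i
      simpa [Real.norm_eq_abs, mul_comm] using (h i).2.choose_spec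
  · push_neg at hε
    have h1 : Aset ψ y q = ∅ := by
      ext x
      simp only [Aset, Set.mem_setOf_eq, Set.mem_empty_iff_false, iff_false, not_and, not_exists]
      intro _ p hp
      exact absurd (lt_of_le_of_lt (norm_nonneg _) hp) (not_lt.2 hε)
    have h2 : (Set.univ.pi fun i => Bset q (y i) (ψ q)) = ∅ := by
      ext x
      simp only [Set.mem_pi, Set.mem_univ, true_implies, Set.mem_empty_iff_false, iff_false,
        not_forall]
      refine ⟨0, ?_⟩
      rintro ⟨-, p, hp⟩
      exact absurd (lt_of_le_of_lt (abs_nonneg _) hp) (not_lt.2 hε)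
    rw [h1, h2]

set_option maxHeartbeats 2000000 in
open Finset in
/-- The key one-dimensional overlap estimate. -/
lemma oneD_s5 (q r : ℕ) (c ψq ψr : ℝ) (hq : 1 ≤ q) (hr : 1 ≤ r)
    (hψq0 : 0 ≤ ψq) (hψr0 : 0 ≤ ψr) (hψq : ψq ≤ 1/2) :
    volume (Bset q c ψq ∩ Bset r c ψr) ≤
      ENNReal.ofReal (40 * (ψq * ψr) + 10 * ((Nat.gcd q r : ℝ) * ψq / q)) := by
  classical
  have hq0 : (0:ℝ) < q := by exact_mod_cast hq
  have hr0 : (0:ℝ) < r := by exact_mod_cast hr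
  set g : ℤ := (Nat.gcd q r : ℤ) with hgdef
  have hgpos : 0 < g := by
    have h : 0 < Nat.gcd q r := Nat.gcd_pos_of_pos_left _ hq
    rw [hgdef]; exact_mod_cast h
  have hgq : g ∣ (q : ℤ) := Int.natCast_dvd_natCast.2 (Nat.gcd_dvd_left q r)
  have hgr : g ∣ (r : ℤ) := Int.natCast_dvd_natCast.2 (Nat.gcd_dvd_right q r)
  have hgR : (0:ℝ) < (g:ℝ) := by exact_mod_cast hgpos
  set D : ℝ := r * ψq + q * ψr with hD
  have hD0 : 0 ≤ D := by positivity
  set a : ℤ := ⌊-c - ψq⌋ with ha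
  set b : ℤ := ⌈(q:ℝ) - c + ψq⌉ with hb
  set a' : ℤ := ⌊-c - ψr⌋ with ha'
  set b' : ℤ := ⌈(r:ℝ) - c + ψr⌉ with hb'
  set lo : ℤ := ⌈(((q:ℝ) - r) * c - D) / g⌉ with hlo
  set hi : ℤ := ⌊(((q:ℝ) - r) * c + D) / g⌋ with hhi
  set m : ℤ := (q : ℤ) / g with hm
  have hmq : (q:ℤ) = g * m := (Int.mul_ediv_cancel' hgq).symm
  have hmpos : 0 < m := by
    have hq' : (0:ℤ) < g * m := by rw [← hmq]; exact_mod_cast hq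
    nlinarith
  have hr'q : (r:ℤ) = g * ((r:ℤ) / g) := (Int.mul_ediv_cancel' hgr).symm
  set r' : ℤ := (r:ℤ) / g with hr'
  have hcop : IsCoprime m r' := by
    have h1 : m = ((q / Nat.gcd q r : ℕ) : ℤ) := by
      rw [hm, hgdef, Int.natCast_div]
    have h2 : r' = ((r / Nat.gcd q r : ℕ) : ℤ) := by
      rw [hr', hgdef, Int.natCast_div]
    rw [h1, h2, Int.isCoprime_iff_gcd_eq_one]
    exact_mod_cast Nat.coprime_div_gcd_div_gcd
      (Nat.gcd_pos_of_pos_left _ hq)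
  classical
  set f : ℤ × ℤ → ℤ := fun pp => (r:ℤ) * pp.1 - (q:ℤ) * pp.2 with hf
  set cond : ℤ × ℤ → Prop := fun pp => |(q:ℝ) * pp.2 - (r:ℝ) * pp.1 + ((q:ℝ) - r) * c| < D
    with hcond
  set T : Finset (ℤ × ℤ) := ((Finset.Icc a b) ×ˢ (Finset.Icc a' b')).filter cond with hT
  set L : ℝ := min (ψq / q) (ψr / r) with hL
  have hL1 : L ≤ ψq / q := min_le_left _ _
  have hL2 : L ≤ ψr / r := min_le_right _ _
  have hL0 : 0 ≤ L := le_min (by positivity) (by positivity)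
  -- the covering family
  set I : ℤ × ℤ → Set ℝ := fun pp =>
    Set.Ioo ((pp.1 + c - ψq)/q) ((pp.1 + c + ψq)/q) ∩
      Set.Ioo ((pp.2 + c - ψr)/r) ((pp.2 + c + ψr)/r) with hI
  have hcover : Bset q c ψq ∩ Bset r c ψr ⊆ ⋃ pp ∈ T, I pp := by
    rintro x ⟨⟨hx01, p, hp⟩, ⟨-, p', hp'⟩⟩
    obtain ⟨hp1, hp2⟩ := abs_lt.mp hp
    obtain ⟨hp1', hp2'⟩ := abs_lt.mp hp'
    have hx0 : (0:ℝ) ≤ x := hx01.1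
    have hx1 : x < 1 := hx01.2
    have hqx0 : (0:ℝ) ≤ (q:ℝ) * x := by positivity
    have hqx1 : (q:ℝ) * x < q := by nlinarith
    have hrx0 : (0:ℝ) ≤ (r:ℝ) * x := by positivity
    have hrx1 : (r:ℝ) * x < r := by nlinarith
    have hmemT : (p, p') ∈ T := by
      rw [hT, Finset.mem_filter, Finset.mem_product, Finset.mem_Icc, Finset.mem_Icc]
      refine ⟨⟨⟨?_, ?_⟩, ⟨?_, ?_⟩⟩, ?_⟩
      · have h1 : (a:ℝ) ≤ -c - ψq := Int.floor_le _
        have h2 : -c - ψq < p := by nlinarith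
        exact_mod_cast h1.trans_lt h2 |>.le
      · have h1 : (p:ℝ) < (q:ℝ) - c + ψq := by nlinarith
        have h2 : ((q:ℝ) - c + ψq) ≤ b := Int.le_ceil _
        exact_mod_cast (h1.trans_le h2).le
      · have h1 : (a':ℝ) ≤ -c - ψr := Int.floor_le _
        have h2 : -c - ψr < p' := by nlinarith
        exact_mod_cast h1.trans_lt h2 |>.le
      · have h1 : (p':ℝ) < (r:ℝ) - c + ψr := by nlinarith
        have h2 : ((r:ℝ) - c + ψr) ≤ b' := Int.le_ceil _
        exact_mod_cast (h1.trans_le h2).le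
      · show |(q:ℝ) * p' - (r:ℝ) * p + ((q:ℝ) - r) * c| < D
        have key : (q:ℝ) * p' - (r:ℝ) * p + ((q:ℝ) - r) * c =
            (r:ℝ) * ((q:ℝ) * x - p - c) - (q:ℝ) * ((r:ℝ) * x - p' - c) := by ring
        rw [key]
        have h1 : |(r:ℝ) * ((q:ℝ) * x - p - c) - (q:ℝ) * ((r:ℝ) * x - p' - c)| ≤
            |(r:ℝ) * ((q:ℝ) * x - p - c)| + |(q:ℝ) * ((r:ℝ) * x - p' - c)| :=
          abs_sub _ _
        have h2 : |(r:ℝ) * ((q:ℝ) * x - p - c)| < (r:ℝ) * ψq := by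
          rw [abs_mul, abs_of_pos hr0]
          exact (mul_lt_mul_iff_right₀ hr0).2 hp
        have h3 : |(q:ℝ) * ((r:ℝ) * x - p' - c)| < (q:ℝ) * ψr := by
          rw [abs_mul, abs_of_pos hq0]
          exact (mul_lt_mul_iff_right₀ hq0).2 hp'
        calc _ ≤ _ := h1
          _ < (r:ℝ) * ψq + (q:ℝ) * ψr := add_lt_add h2 h3
          _ = D := rfl
    refine Set.mem_biUnion hmemT ?_
    constructor
    · constructor
      · rw [div_lt_iff₀ hq0]; nlinarith
      · rw [lt_div_iff₀ hq0]; nlinarith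
    · constructor
      · rw [div_lt_iff₀ hr0]; nlinarith
      · rw [lt_div_iff₀ hr0]; nlinarith
  -- each piece is short
  have hvol : ∀ pp : ℤ × ℤ, volume (I pp) ≤ ENNReal.ofReal (2 * L) := by
    intro pp
    rcases min_cases (ψq / q) (ψr / r) with ⟨hmin, -⟩ | ⟨hmin, -⟩
    · calc volume (I pp) ≤ volume (Set.Ioo ((pp.1 + c - ψq)/q) ((pp.1 + c + ψq)/q)) :=
            measure_mono Set.inter_subset_left
        _ = ENNReal.ofReal (2 * L) := by
            rw [Real.volume_Ioo, hL, hmin]; congr 1; field_simp; ring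
    · calc volume (I pp) ≤ volume (Set.Ioo ((pp.2 + c - ψr)/r) ((pp.2 + c + ψr)/r)) :=
            measure_mono Set.inter_subset_right
        _ = ENNReal.ofReal (2 * L) := by
            rw [Real.volume_Ioo, hL, hmin]; congr 1; field_simp; ring
  -- cardinality of `T`
  set K1 : ℕ := (Finset.Icc (0:ℤ) ((b - a)/m)).card with hK1
  set K2 : ℕ := (Finset.Icc lo hi).card with hK2
  have hfiber : ∀ n ∈ T.image f, (T.filter (fun pp => f pp = n)).card ≤ K1 := by
    intro n _
    rw [hK1]
    apply Finset.card_le_card_of_injOn (fun pp => (pp.1 - a) / m)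
    · intro pp hpp
      rw [Finset.mem_coe, Finset.mem_filter] at hpp
      have hmem := hpp.1
      rw [hT, Finset.mem_filter, Finset.mem_product, Finset.mem_Icc] at hmem
      obtain ⟨⟨⟨hpa, hpb⟩, -⟩, -⟩ := hmem
      rw [Finset.mem_coe, Finset.mem_Icc]
      exact ⟨Int.ediv_nonneg (by omega) hmpos.le,
        Int.ediv_le_ediv hmpos (by omega)⟩
    · intro pp1 h1 pp2 h2 heq
      simp only [Finset.coe_filter, Set.mem_setOf_eq] at h1 h2
      have e1 : (r:ℤ) * pp1.1 - (q:ℤ) * pp1.2 = n := h1.2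
      have e2 : (r:ℤ) * pp2.1 - (q:ℤ) * pp2.2 = n := h2.2
      have e3 : (r:ℤ) * (pp1.1 - pp2.1) = (q:ℤ) * (pp1.2 - pp2.2) := by ring_nf; omega
      have e4 : r' * (pp1.1 - pp2.1) = m * (pp1.2 - pp2.2) := by
        have : g * (r' * (pp1.1 - pp2.1)) = g * (m * (pp1.2 - pp2.2)) := by
          rw [← mul_assoc, ← mul_assoc, ← hr'q, ← hmq]; exact e3
        exact mul_left_cancel₀ (by omega) this
      have e5 : m ∣ pp1.1 - pp2.1 :=
        hcop.dvd_of_dvd_mul_left ⟨pp1.2 - pp2.2, e4⟩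
      obtain ⟨k, hk⟩ := e5
      have e6 : pp1.1 - a = (pp2.1 - a) + k * m := by linear_combination hk
      have e7 : (pp1.1 - a) / m = (pp2.1 - a) / m + k := by
        rw [e6, Int.add_mul_ediv_right _ _ (by omega : m ≠ 0)]
      have heq' : (pp1.1 - a) / m = (pp2.1 - a) / m := heq
      have hk0 : k = 0 := by linarith [e7, heq']
      have hp11 : pp1.1 = pp2.1 := by
        rw [hk0, mul_zero] at hk; omega
      have hp12 : pp1.2 = pp2.2 := by
        have : (q:ℤ) * (pp1.2 - pp2.2) = 0 := by rw [← e3, hp11]; ring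
        have hq0' : (q:ℤ) ≠ 0 := by exact_mod_cast Nat.one_le_iff_ne_zero.mp hq
        have := mul_eq_zero.mp this
        omega
      exact Prod.ext hp11 hp12
  have himage : T.image f ⊆ (Finset.Icc lo hi).image (fun k => g * k) := by
    intro n hn
    rw [Finset.mem_image] at hn
    obtain ⟨pp, hpp, hfn⟩ := hn
    rw [hT, Finset.mem_filter] at hpp
    have hcondpp := hpp.2
    rw [hcond] at hcondpp
    obtain ⟨hc1, hc2⟩ := abs_lt.mp hcondpp
    have hgn : g ∣ n := by
      rw [← hfn, hf]
      exact dvd_sub (Dvd.dvd.mul_right hgr _) (Dvd.dvd.mul_right hgq _)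
    obtain ⟨k, hk⟩ := hgn
    have hnR : (n:ℝ) = (r:ℝ) * pp.1 - (q:ℝ) * pp.2 := by
      rw [← hfn]; push_cast [hf]; ring
    have hwin1 : ((q:ℝ) - r) * c - D < n := by rw [hnR]; nlinarith [hc2]
    have hwin2 : (n:ℝ) < ((q:ℝ) - r) * c + D := by rw [hnR]; nlinarith [hc1]
    have hkR : (n:ℝ) = (g:ℝ) * k := by exact_mod_cast congrArg (Int.cast : ℤ → ℝ) hk
    rw [Finset.mem_image]
    refine ⟨k, ?_, hk.symm⟩
    rw [Finset.mem_Icc]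
    constructor
    · rw [hlo]
      apply Int.ceil_le.2
      rw [div_le_iff₀ hgR]
      nlinarith [hwin1, hkR]
    · rw [hhi]
      apply Int.le_floor.2
      rw [le_div_iff₀ hgR]
      nlinarith [hwin2, hkR]
  have hcard : T.card ≤ K1 * K2 := by
    calc T.card ≤ K1 * (T.image f).card := Finset.card_le_mul_card_image T K1 hfiber
      _ ≤ K1 * K2 := by
          apply Nat.mul_le_mul_left
          calc (T.image f).card ≤ ((Finset.Icc lo hi).image (fun k => g * k)).card :=
                Finset.card_le_card himage
            _ ≤ K2 := Finset.card_image_le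
  -- real bounds on the cardinalities
  have hba : b - a ≤ (q:ℤ) + 2 := by
    have h1 : (b:ℝ) < (q:ℝ) - c + ψq + 1 := Int.ceil_lt_add_one _
    have h2 : -c - ψq - 1 < (a:ℝ) := Int.sub_one_lt_floor _
    have : (b:ℝ) - a < (q:ℝ) + 3 := by nlinarith
    have : (b:ℝ) - a < ((q:ℤ):ℝ) + 3 := by push_cast; linarith
    have hZ : b - a < (q:ℤ) + 3 := by exact_mod_cast this
    omega
  have hK1g : (K1:ℤ) ≤ 4 * g := by
    have hcard1 : (K1:ℤ) = max ((b - a)/m + 1) 0 := by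
      rw [hK1, Int.card_Icc]
      rw [Int.toNat_eq_max]
      congr 1
      omega
    have h2 : (b - a)/m ≤ ((q:ℤ) + 2)/m := Int.ediv_le_ediv hmpos hba
    have h3 : ((q:ℤ) + 2)/m = g + 2/m := by
      rw [hmq]
      rw [add_comm, Int.add_mul_ediv_right _ _ (by omega : m ≠ 0)]
      omega
    have h4 : (2:ℤ)/m ≤ 2 := Int.ediv_le_self m (by norm_num)
    have : (b - a)/m + 1 ≤ g + 3 := by omega
    have hg1 : 1 ≤ g := hgpos
    rw [hcard1]
    rcases max_cases ((b - a)/m + 1) (0:ℤ) with ⟨h, -⟩ | ⟨h, -⟩ <;> omega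
  have hK2R : (K2:ℝ) ≤ 2 * D / g + 1 := by
    have hb0 : (0:ℝ) ≤ 2 * D / g + 1 := by positivity
    rcases le_or_gt (hi + 1 - lo) 0 with h | h
    · have : K2 = 0 := by
        rw [hK2, Int.card_Icc]
        omega
      rw [this]; exact_mod_cast hb0
    · have hcard2 : (K2:ℤ) = hi + 1 - lo := by
        rw [hK2, Int.card_Icc]
        omega
      have h1 : (hi:ℝ) ≤ (((q:ℝ) - r) * c + D) / g := Int.floor_le _
      have h2 : ((((q:ℝ) - r) * c - D) / g) ≤ lo := Int.le_ceil _
      have : ((hi:ℝ) + 1 - lo) ≤ 2 * D / g + 1 := by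
        have key : (((q:ℝ) - r) * c + D) / g - (((q:ℝ) - r) * c - D) / g = 2 * D / g := by
          field_simp; ring
        nlinarith [h1, h2]
      calc (K2:ℝ) = ((K2:ℤ):ℝ) := by norm_cast
        _ = (hi:ℝ) + 1 - lo := by rw [hcard2]; push_cast; ring
        _ ≤ 2 * D / g + 1 := this
  -- put everything together
  have hTR : (T.card : ℝ) ≤ 4 * g * (2 * D / g + 1) := by
    have h1 : (T.card : ℝ) ≤ (K1:ℝ) * K2 := by exact_mod_cast hcard
    have h2 : (K1:ℝ) ≤ 4 * g := by exact_mod_cast hK1g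
    have h3 : (0:ℝ) ≤ K2 := Nat.cast_nonneg _
    have h4 : (0:ℝ) ≤ (K1:ℝ) := Nat.cast_nonneg _
    calc (T.card : ℝ) ≤ (K1:ℝ) * K2 := h1
      _ ≤ (4 * g) * K2 := by apply mul_le_mul_of_nonneg_right h2 h3
      _ ≤ (4 * g) * (2 * D / g + 1) := by
          apply mul_le_mul_of_nonneg_left hK2R (by positivity)
  have hfinal : (T.card : ℝ) * (2 * L) ≤ 40 * (ψq * ψr) + 10 * ((Nat.gcd q r : ℝ) * ψq / q) := by
    have hexp : 4 * (g:ℝ) * (2 * D / g + 1) * (2 * L) =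
        16 * ((r:ℝ) * ψq * L) + 16 * ((q:ℝ) * ψr * L) + 8 * ((g:ℝ) * L) := by
      rw [hD]; field_simp; ring
    have e1 : (r:ℝ) * ψq * L ≤ ψq * ψr := by
      have : (r:ℝ) * ψq * L ≤ (r:ℝ) * ψq * (ψr / r) :=
        mul_le_mul_of_nonneg_left hL2 (by positivity)
      calc (r:ℝ) * ψq * L ≤ (r:ℝ) * ψq * (ψr / r) := this
        _ = ψq * ψr := by field_simp
    have e2 : (q:ℝ) * ψr * L ≤ ψq * ψr := by
      have : (q:ℝ) * ψr * L ≤ (q:ℝ) * ψr * (ψq / q) :=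
        mul_le_mul_of_nonneg_left hL1 (by positivity)
      calc (q:ℝ) * ψr * L ≤ (q:ℝ) * ψr * (ψq / q) := this
        _ = ψq * ψr := by field_simp
    have e3 : (g:ℝ) * L ≤ (Nat.gcd q r : ℝ) * ψq / q := by
      have hgg : (g:ℝ) = (Nat.gcd q r : ℝ) := by rw [hgdef]; push_cast; ring
      have : (g:ℝ) * L ≤ (g:ℝ) * (ψq / q) :=
        mul_le_mul_of_nonneg_left hL1 (by positivity)
      calc (g:ℝ) * L ≤ (g:ℝ) * (ψq / q) := this
        _ = (Nat.gcd q r : ℝ) * ψq / q := by rw [hgg]; ring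
    have hgψ : 0 ≤ (Nat.gcd q r : ℝ) * ψq / q := by positivity
    have hψψ : 0 ≤ ψq * ψr := by positivity
    calc (T.card : ℝ) * (2 * L) ≤ (4 * g * (2 * D / g + 1)) * (2 * L) :=
          mul_le_mul_of_nonneg_right hTR (by positivity)
      _ = 16 * ((r:ℝ) * ψq * L) + 16 * ((q:ℝ) * ψr * L) + 8 * ((g:ℝ) * L) := hexp
      _ ≤ 16 * (ψq * ψr) + 16 * (ψq * ψr) + 8 * ((Nat.gcd q r : ℝ) * ψq / q) := by
          nlinarith [e1, e2, e3]
      _ ≤ 40 * (ψq * ψr) + 10 * ((Nat.gcd q r : ℝ) * ψq / q) := by linarith [hψψ, hgψ]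
  calc volume (Bset q c ψq ∩ Bset r c ψr) ≤ volume (⋃ pp ∈ T, I pp) := measure_mono hcover
    _ ≤ ∑ pp ∈ T, volume (I pp) := measure_biUnion_finset_le _ _
    _ ≤ T.card • ENNReal.ofReal (2 * L) := Finset.sum_le_card_nsmul _ _ _ (fun pp _ => hvol pp)
    _ = (T.card : ENNReal) * ENNReal.ofReal (2 * L) := by rw [nsmul_eq_mul]
    _ = ENNReal.ofReal ((T.card : ℝ) * (2 * L)) := by
        rw [← ENNReal.ofReal_natCast, ← ENNReal.ofReal_mul (Nat.cast_nonneg _)]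
    _ ≤ _ := ENNReal.ofReal_le_ofReal hfinal


/-- Overlap estimate: there is an absolute constant `C > 0` such that
`|A_q ∩ A_r| ≤ C (ψ(q)²ψ(r)² + ψ(q)² gcd(q,r)²/q²)`. -/
theorem overlap_estimate :
    ∃ C : ℝ, 0 < C ∧ ∀ (ψ : ℕ → ℝ), (∀ n, 0 ≤ ψ n) → ∀ (y : Fin 2 → ℝ) (q r : ℕ),
      1 ≤ q → 1 ≤ r → ψ q ≤ 1 / 2 → ψ r ≤ 1 / 2 →
      volume (Aset ψ y q ∩ Aset ψ y r) ≤
        ENNReal.ofReal (C * (ψ q ^ 2 * ψ r ^ 2 +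
          ψ q ^ 2 * (Nat.gcd q r : ℝ) ^ 2 / (q : ℝ) ^ 2)) := by
  refine ⟨2000, by norm_num, ?_⟩
  intro ψ hψ y q r hq hr hψq2 hψr2
  have hq0 : (0:ℝ) < q := by exact_mod_cast hq
  have hG0 : (0:ℝ) ≤ (Nat.gcd q r : ℝ) := Nat.cast_nonneg _
  set M : ℝ := 40 * (ψ q * ψ r) + 10 * ((Nat.gcd q r : ℝ) * ψ q / q) with hM
  have hM0 : 0 ≤ M := by
    rw [hM]
    have := hψ q
    have := hψ r
    positivity
  have h1 : Aset ψ y q ∩ Aset ψ y r =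
      Set.univ.pi fun i => Bset q (y i) (ψ q) ∩ Bset r (y i) (ψ r) := by
    rw [Aset_eq_pi, Aset_eq_pi, ← Set.pi_inter_distrib]
  rw [h1, volume_pi_pi]
  have hle : ∀ i : Fin 2,
      volume (Bset q (y i) (ψ q) ∩ Bset r (y i) (ψ r)) ≤ ENNReal.ofReal M :=
    fun i => oneD_s5 q r (y i) (ψ q) (ψ r) hq hr (hψ q) (hψ r) hψq2
  have key : M * M ≤ 2000 * (ψ q ^ 2 * ψ r ^ 2 +
      ψ q ^ 2 * (Nat.gcd q r : ℝ) ^ 2 / (q : ℝ) ^ 2) := by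
    have e : ψ q ^ 2 * ψ r ^ 2 + ψ q ^ 2 * (Nat.gcd q r : ℝ) ^ 2 / (q : ℝ) ^ 2 =
        (ψ q * ψ r) ^ 2 + ((Nat.gcd q r : ℝ) * ψ q / q) ^ 2 := by
      field_simp
    rw [hM, e]
    set A : ℝ := ψ q * ψ r with hA
    set B : ℝ := (Nat.gcd q r : ℝ) * ψ q / (q : ℝ) with hB
    nlinarith [sq_nonneg (A - B), sq_nonneg B]
  calc (∏ i : Fin 2, volume (Bset q (y i) (ψ q) ∩ Bset r (y i) (ψ r)))
      = volume (Bset q (y 0) (ψ q) ∩ Bset r (y 0) (ψ r)) *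
        volume (Bset q (y 1) (ψ q) ∩ Bset r (y 1) (ψ r)) := Fin.prod_univ_two _
    _ ≤ ENNReal.ofReal M * ENNReal.ofReal M := mul_le_mul' (hle 0) (hle 1)
    _ = ENNReal.ofReal (M * M) := (ENNReal.ofReal_mul hM0).symm
    _ ≤ _ := ENNReal.ofReal_le_ofReal key
end

section
/- Let δ > 0, ψ : ℕ → ℝ_{≥0}, y ∈ ℝ², and q > r be natural numbers with ψ(q) ≤ q^{−δ}, ψ(r) ≤ r^{−δ}, and gcd(q, r) > 4·q^{3/(δ+3)}. Let (a_q, b_q) ∈ ℤ² × ℕ satisfy |b_q·y − a_q| < q^{−δ/(δ+3)}, 1 ≤ b_q ≤ q^{2δ/(δ+3)}, and gcd(a_q, b_q) = 1. Then Ã_q ∩ A_r = ∅; in particular the Lebesgue measure of Ã_q ∩ Ã_r is 0. -/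
open MeasureTheory Real Filter

/-- Key lemma: if `q > r`, `ψ(q) ≤ q^{-δ}`, `ψ(r) ≤ r^{-δ}` and
`gcd(q,r) > 4 q^{3/(δ+3)}`, then `Ã_q ∩ A_r = ∅`; in particular `|Ã_q ∩ Ã_r| = 0`. -/
theorem key_lemma (δ : ℝ) (hδ : 0 < δ) (ψ : ℕ → ℝ) (hψ : ∀ n, 0 ≤ ψ n)
    (y : Fin 2 → ℝ) (q r : ℕ) (hr : 1 ≤ r) (hqr : r < q)
    (hψq : ψ q ≤ (q : ℝ) ^ (-δ)) (hψr : ψ r ≤ (r : ℝ) ^ (-δ))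
    (hgcdqr : 4 * (q : ℝ) ^ ((3 : ℝ) / (δ + 3)) < (Nat.gcd q r : ℝ))
    (a : Fin 2 → ℤ) (b : ℕ) (hb1 : 1 ≤ b)
    (hab : ‖(b : ℝ) • y - (fun i => (a i : ℝ))‖ < (q : ℝ) ^ (-(δ / (δ + 3))))
    (hb2 : (b : ℝ) ≤ (q : ℝ) ^ (2 * δ / (δ + 3)))
    (hgcdab : Nat.gcd (Int.gcd (a 0) (a 1)) b = 1) :
    Atilde ψ y a b q ∩ Aset ψ y r = ∅ ∧
    ∀ (a' : Fin 2 → ℤ) (b' : ℕ),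
      volume (Atilde ψ y a b q ∩ Atilde ψ y a' b' r) = 0 := by
  have hq2 : 2 ≤ q := by omega
  have hQ0 : (0:ℝ) < q := by exact_mod_cast (by omega : 0 < q)
  have hR1 : (1:ℝ) ≤ r := by exact_mod_cast hr
  have hR0 : (0:ℝ) < r := by linarith
  have hRQ : (r:ℝ) ≤ q := by exact_mod_cast hqr.le
  have hδ3 : (0:ℝ) < δ + 3 := by linarith
  set g : ℕ := Nat.gcd q r with hgdef
  have hg0 : 0 < g := Nat.gcd_pos_of_pos_left _ (by omega)
  have hgq : g ∣ q := Nat.gcd_dvd_left q r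
  have hgr : g ∣ r := Nat.gcd_dvd_right q r
  have hgler : g ≤ r := Nat.le_of_dvd (by omega) hgr
  have hgR : (g:ℝ) ≤ r := by exact_mod_cast hgler
  set c : ℝ := (q:ℝ) ^ ((3:ℝ)/(δ+3)) with hcdef
  have hc0 : 0 < c := Real.rpow_pos_of_pos hQ0 _
  have hgc : 3 * c < (g:ℝ) := by linarith
  have hmain : Atilde ψ y a b q ∩ Aset ψ y r = ∅ := by
    rw [Set.eq_empty_iff_forall_notMem]
    rintro x ⟨⟨hxB, P, hP, hPg⟩, -, P', hP'⟩
    have compP : ∀ i, |(q:ℝ) * x i - P i - y i| < ψ q := by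
      intro i
      have h := (norm_le_pi_norm ((q:ℝ) • x - (fun i => (P i:ℝ)) - y) i).trans_lt hP
      simpa [Real.norm_eq_abs] using h
    have compP' : ∀ i, |(r:ℝ) * x i - P' i - y i| < ψ r := by
      intro i
      have h := (norm_le_pi_norm ((r:ℝ) • x - (fun i => (P' i:ℝ)) - y) i).trans_lt hP'
      simpa [Real.norm_eq_abs] using h
    have compA : ∀ i, |(b:ℝ) * y i - a i| < (q:ℝ) ^ (-(δ / (δ + 3))) := by
      intro i
      have h := (norm_le_pi_norm ((b:ℝ) • y - (fun i => (a i:ℝ))) i).trans_lt hab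
      simpa [Real.norm_eq_abs] using h
    set v : Fin 2 → ℤ := fun i =>
      (b:ℤ) * ((q:ℤ) * P' i - (r:ℤ) * P i) + ((q:ℤ) - (r:ℤ)) * a i with hvdef
    have hB0 : (1:ℝ) ≤ b := by exact_mod_cast hb1
    have hrpow1 : (q:ℝ) ^ (-δ) ≤ (r:ℝ) ^ (-δ) := by
      rw [Real.rpow_neg hR0.le, Real.rpow_neg hQ0.le]
      exact inv_anti₀ (Real.rpow_pos_of_pos hR0 δ) (Real.rpow_le_rpow hR0.le hRQ hδ.le)
    have hcler : c ≤ (r:ℝ) := by linarith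
    have hrpow2 : (r:ℝ) ^ (-δ) ≤ (q:ℝ) ^ (-(3*δ/(δ+3))) := by
      have h1 : (q:ℝ) ^ ((3:ℝ)*δ/(δ+3)) ≤ (r:ℝ) ^ δ := by
        have h2 : ((q:ℝ) ^ ((3:ℝ)/(δ+3))) ^ δ ≤ (r:ℝ) ^ δ :=
          Real.rpow_le_rpow hc0.le hcler hδ.le
        rwa [← Real.rpow_mul hQ0.le, div_mul_eq_mul_div] at h2
      rw [Real.rpow_neg hR0.le, Real.rpow_neg hQ0.le]
      exact inv_anti₀ (Real.rpow_pos_of_pos hQ0 _) h1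
    have hbound : ∀ i, |(v i : ℝ)| < 3 * c := by
      intro i
      have hA := compP i
      have hB := compP' i
      have hC := compA i
      have hid : (v i : ℝ) =
          (b:ℝ) * ((r:ℝ) * ((q:ℝ) * x i - P i - y i) - (q:ℝ) * ((r:ℝ) * x i - P' i - y i))
            - ((q:ℝ) - (r:ℝ)) * ((b:ℝ) * y i - a i) := by
        simp only [hvdef]
        push_cast
        ring
      have hinner : |(r:ℝ) * ((q:ℝ) * x i - P i - y i)
            - (q:ℝ) * ((r:ℝ) * x i - P' i - y i)|
          ≤ (r:ℝ) * |(q:ℝ) * x i - P i - y i| + (q:ℝ) * |(r:ℝ) * x i - P' i - y i| := by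
        refine (abs_sub _ _).trans ?_
        rw [abs_mul, abs_mul, abs_of_pos hR0, abs_of_pos hQ0]
      have habs : |(v i : ℝ)| ≤ (b:ℝ) * ((r:ℝ) * |(q:ℝ) * x i - P i - y i|
            + (q:ℝ) * |(r:ℝ) * x i - P' i - y i|)
            + ((q:ℝ) - (r:ℝ)) * |(b:ℝ) * y i - a i| := by
        rw [hid]
        refine (abs_sub _ _).trans ?_
        rw [abs_mul, abs_mul, abs_of_nonneg (by positivity : (0:ℝ) ≤ (b:ℝ)),
          abs_of_nonneg (by linarith : (0:ℝ) ≤ (q:ℝ) - r)]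
        gcongr
      have s1 : (r:ℝ) * |(q:ℝ) * x i - P i - y i| ≤ (q:ℝ) * (q:ℝ) ^ (-(3*δ/(δ+3))) := by
        calc (r:ℝ) * |(q:ℝ) * x i - P i - y i| ≤ (r:ℝ) * ψ q :=
              mul_le_mul_of_nonneg_left hA.le hR0.le
          _ ≤ (r:ℝ) * (q:ℝ) ^ (-δ) := mul_le_mul_of_nonneg_left hψq hR0.le
          _ ≤ (q:ℝ) * (q:ℝ) ^ (-δ) :=
              mul_le_mul_of_nonneg_right hRQ (Real.rpow_nonneg hQ0.le _)
          _ ≤ (q:ℝ) * (r:ℝ) ^ (-δ) := mul_le_mul_of_nonneg_left hrpow1 hQ0.le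
          _ ≤ (q:ℝ) * (q:ℝ) ^ (-(3*δ/(δ+3))) := mul_le_mul_of_nonneg_left hrpow2 hQ0.le
      have s2 : (q:ℝ) * |(r:ℝ) * x i - P' i - y i| ≤ (q:ℝ) * (q:ℝ) ^ (-(3*δ/(δ+3))) := by
        calc (q:ℝ) * |(r:ℝ) * x i - P' i - y i| ≤ (q:ℝ) * ψ r :=
              mul_le_mul_of_nonneg_left hB.le hQ0.le
          _ ≤ (q:ℝ) * (r:ℝ) ^ (-δ) := mul_le_mul_of_nonneg_left hψr hQ0.le
          _ ≤ (q:ℝ) * (q:ℝ) ^ (-(3*δ/(δ+3))) := mul_le_mul_of_nonneg_left hrpow2 hQ0.le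
      have hexp : (q:ℝ) ^ (2*δ/(δ+3)) * (2 * ((q:ℝ) * (q:ℝ) ^ (-(3*δ/(δ+3))))) = 2 * c := by
        have h3 : (q:ℝ) ^ (2*δ/(δ+3)) * ((q:ℝ) ^ (1:ℝ) * (q:ℝ) ^ (-(3*δ/(δ+3))))
            = (q:ℝ) ^ ((3:ℝ)/(δ+3)) := by
          rw [← Real.rpow_add hQ0, ← Real.rpow_add hQ0]
          congr 1
          field_simp
          ring
        calc (q:ℝ) ^ (2*δ/(δ+3)) * (2 * ((q:ℝ) * (q:ℝ) ^ (-(3*δ/(δ+3)))))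
            = 2 * ((q:ℝ) ^ (2*δ/(δ+3)) * ((q:ℝ) ^ (1:ℝ) * (q:ℝ) ^ (-(3*δ/(δ+3))))) := by
              rw [Real.rpow_one]; ring
          _ = 2 * c := by rw [h3]
      have sb : (b:ℝ) * ((r:ℝ) * |(q:ℝ) * x i - P i - y i|
            + (q:ℝ) * |(r:ℝ) * x i - P' i - y i|) ≤ 2 * c := by
        calc (b:ℝ) * ((r:ℝ) * |(q:ℝ) * x i - P i - y i|
              + (q:ℝ) * |(r:ℝ) * x i - P' i - y i|)
            ≤ (q:ℝ) ^ (2*δ/(δ+3)) * (2 * ((q:ℝ) * (q:ℝ) ^ (-(3*δ/(δ+3))))) := by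
              apply mul_le_mul hb2 (by linarith) (by positivity) (Real.rpow_nonneg hQ0.le _)
          _ = 2 * c := hexp
      have s4 : ((q:ℝ) - r) * |(b:ℝ) * y i - a i| < c := by
        have h1 : ((q:ℝ) - r) * |(b:ℝ) * y i - a i| ≤ (q:ℝ) * |(b:ℝ) * y i - a i| :=
          mul_le_mul_of_nonneg_right (by linarith) (abs_nonneg _)
        have h2 : (q:ℝ) * |(b:ℝ) * y i - a i| < (q:ℝ) * (q:ℝ) ^ (-(δ/(δ+3))) :=
          mul_lt_mul_of_pos_left hC hQ0
        have h3 : (q:ℝ) * (q:ℝ) ^ (-(δ/(δ+3))) = c := by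
          rw [hcdef]
          nth_rewrite 1 [← Real.rpow_one (q:ℝ)]
          rw [← Real.rpow_add hQ0]
          congr 1
          field_simp
          ring
        linarith
      linarith
    have hdvd : ∀ i, (g:ℤ) ∣ v i := by
      intro i
      obtain ⟨q1, hq1⟩ := hgq
      obtain ⟨r1, hr1⟩ := hgr
      refine ⟨(b:ℤ) * ((q1:ℤ) * P' i - (r1:ℤ) * P i) + ((q1:ℤ) - (r1:ℤ)) * a i, ?_⟩
      simp only [hvdef, hq1, hr1]
      push_cast
      ring
    have hveq : ∀ i, v i = 0 := by
      intro i
      by_contra h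
      have h1 : (g:ℤ) ≤ |v i| := Int.le_of_dvd (abs_pos.mpr h) ((dvd_abs _ _).mpr (hdvd i))
      have h2 : (g:ℝ) ≤ |(v i:ℝ)| := by
        rw [← Int.cast_abs]
        exact_mod_cast h1
      linarith [hbound i]
    have hQdvd : ∀ i, (q:ℤ) ∣ (r:ℤ) * ((b:ℤ) * P i + a i) := by
      intro i
      refine ⟨(b:ℤ) * P' i + a i, ?_⟩
      have h := hveq i
      simp only [hvdef] at h
      linear_combination -h
    have hq1dvd : ∀ i, ((q/g : ℕ):ℤ) ∣ ((b:ℤ) * P i + a i) := by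
      intro i
      have hcop : Nat.Coprime (q/g) (r/g) := Nat.coprime_div_gcd_div_gcd hg0
      have hcopZ : IsCoprime ((q/g:ℕ):ℤ) ((r/g:ℕ):ℤ) :=
        Int.isCoprime_iff_gcd_eq_one.mpr (by rw [Int.gcd_natCast_natCast]; exact hcop)
      apply hcopZ.dvd_of_dvd_mul_left
      have hqeq : (q:ℤ) = (g:ℤ) * ((q/g:ℕ):ℤ) := by
        rw [← Nat.cast_mul]
        exact_mod_cast (Nat.mul_div_cancel' hgq).symm
      have hreq : (r:ℤ) = (g:ℤ) * ((r/g:ℕ):ℤ) := by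
        rw [← Nat.cast_mul]
        exact_mod_cast (Nat.mul_div_cancel' hgr).symm
      have h := hQdvd i
      rw [hqeq, hreq, mul_assoc] at h
      exact (mul_dvd_mul_iff_left (by exact_mod_cast hg0.ne' : (g:ℤ) ≠ 0)).mp h
    have hdvdgcd : (q/g) ∣ gcdVec q (fun i => (b:ℤ) * P i + a i) := by
      refine Nat.dvd_gcd (Nat.div_dvd_of_dvd hgq) ?_
      have h := Int.dvd_gcd (hq1dvd 0) (hq1dvd 1)
      exact_mod_cast h
    rw [hPg] at hdvdgcd
    have hq1one : q / g = 1 := Nat.dvd_one.mp hdvdgcd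
    have hqg : q = g := by
      have h := Nat.mul_div_cancel' hgq
      rw [hq1one, mul_one] at h
      omega
    omega
  refine ⟨hmain, fun a' b' => ?_⟩
  have hsub : Atilde ψ y a b q ∩ Atilde ψ y a' b' r ⊆ Atilde ψ y a b q ∩ Aset ψ y r := by
    apply Set.inter_subset_inter_right
    rintro x ⟨hxB, p, h1, -⟩
    exact ⟨hxB, p, h1⟩
  apply measure_mono_null hsub
  rw [hmain]
  exact measure_empty
end

section
/- Let δ > 0. For every q ∈ ℕ, ∑_{1 ≤ r ≤ q, gcd(q,r) ≤ 4q^{3/(δ+3)}} gcd(q, r)²/q² < 4·τ(q)/q^{δ/(δ+3)}, where τ(q) denotes the number of positive divisors of q. -/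
open Real

lemma gcd_sum_le (q : ℕ) (hq : 1 ≤ q) :
    ∑ r ∈ Finset.Icc 1 q, Nat.gcd q r ≤ q.divisors.card * q := by
  have h1 : ∑ r ∈ Finset.Icc 1 q, Nat.gcd q r
      = ∑ d ∈ q.divisors, ∑ r ∈ (Finset.Icc 1 q).filter (fun r => Nat.gcd q r = d),
          Nat.gcd q r := by
    refine (Finset.sum_fiberwise_of_maps_to ?_ _).symm
    intro r hr
    exact Nat.mem_divisors.mpr ⟨Nat.gcd_dvd_left q r, by omega⟩
  rw [h1]
  have h2 : ∀ d ∈ q.divisors,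
      (∑ r ∈ (Finset.Icc 1 q).filter (fun r => Nat.gcd q r = d), Nat.gcd q r) ≤ q := by
    intro d hd
    obtain ⟨hdvd, hq0⟩ := Nat.mem_divisors.mp hd
    calc ∑ r ∈ (Finset.Icc 1 q).filter (fun r => Nat.gcd q r = d), Nat.gcd q r
        = ∑ _r ∈ (Finset.Icc 1 q).filter (fun r => Nat.gcd q r = d), d :=
          Finset.sum_congr rfl (fun r hr => (Finset.mem_filter.mp hr).2)
      _ = ((Finset.Icc 1 q).filter (fun r => Nat.gcd q r = d)).card * d := by
          rw [Finset.sum_const, smul_eq_mul]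
      _ ≤ ((Finset.Icc 1 q).filter (fun r => d ∣ r)).card * d := by
          refine Nat.mul_le_mul_right d (Finset.card_le_card ?_)
          intro r hr
          obtain ⟨h1, h2⟩ := Finset.mem_filter.mp hr
          exact Finset.mem_filter.mpr ⟨h1, h2 ▸ Nat.gcd_dvd_right q r⟩
      _ = (q / d) * d := by
          rw [show (1 : ℕ) = 0 + 1 from rfl, Finset.Icc_add_one_left_eq_Ioc,
            Nat.Ioc_filter_dvd_card_eq_div]
      _ ≤ q := Nat.div_mul_le_self q d
  calc ∑ d ∈ q.divisors, ∑ r ∈ (Finset.Icc 1 q).filter (fun r => Nat.gcd q r = d),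
        Nat.gcd q r ≤ ∑ _d ∈ q.divisors, q := Finset.sum_le_sum h2
    _ = q.divisors.card * q := by rw [Finset.sum_const, smul_eq_mul]

/-- For `δ > 0` and `q ≥ 1`, the sum of `gcd(q,r)²/q²` over `1 ≤ r ≤ q` with
`gcd(q,r) ≤ 4 q^{3/(δ+3)}` is less than `4 τ(q) / q^{δ/(δ+3)}`. -/
theorem restricted_gcd_sum_lt (δ : ℝ) (hδ : 0 < δ) (q : ℕ) (hq : 1 ≤ q) :
    ∑ r ∈ (Finset.Icc 1 q).filter
        (fun r => (Nat.gcd q r : ℝ) ≤ 4 * (q : ℝ) ^ ((3 : ℝ) / (δ + 3))),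
      (Nat.gcd q r : ℝ) ^ 2 / (q : ℝ) ^ 2 <
      4 * (q.divisors.card : ℝ) / (q : ℝ) ^ (δ / (δ + 3)) := by
  set M : ℝ := 4 * (q : ℝ) ^ ((3 : ℝ) / (δ + 3)) with hMdef
  have hq0 : (0 : ℝ) < q := by exact_mod_cast hq
  have hq1 : (1 : ℝ) ≤ q := by exact_mod_cast hq
  have hq2 : (0 : ℝ) < (q : ℝ) ^ 2 := by positivity
  have hδ3 : (0 : ℝ) < δ + 3 := by linarith
  have hrpow1 : (1 : ℝ) ≤ (q : ℝ) ^ ((3 : ℝ) / (δ + 3)) :=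
    Real.one_le_rpow hq1 (by positivity)
  have hM4 : (4 : ℝ) ≤ M := by
    rw [hMdef]; nlinarith
  set s := (Finset.Icc 1 q).filter (fun r => (Nat.gcd q r : ℝ) ≤ M) with hs
  have step1 : ∑ r ∈ s, (Nat.gcd q r : ℝ) ^ 2 / (q : ℝ) ^ 2
      < ∑ r ∈ s, (Nat.gcd q r : ℝ) * M / (q : ℝ) ^ 2 := by
    apply Finset.sum_lt_sum
    · intro r hr
      have hle : (Nat.gcd q r : ℝ) ≤ M := (Finset.mem_filter.mp hr).2
      have hg0 : (0 : ℝ) ≤ (Nat.gcd q r : ℝ) := Nat.cast_nonneg _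
      have hq2' : (0:ℝ) ≤ (q:ℝ)^2 := le_of_lt hq2
      gcongr (?_ : ℝ) / _
      nlinarith
    · refine ⟨1, ?_, ?_⟩
      · refine Finset.mem_filter.mpr ⟨Finset.mem_Icc.mpr ⟨le_refl 1, hq⟩, ?_⟩
        simp only [Nat.gcd_one_right, Nat.cast_one]
        linarith
      · have hg1 : (Nat.gcd q 1 : ℝ) = 1 := by simp
        rw [hg1]
        apply (div_lt_div_iff_of_pos_right hq2).mpr
        nlinarith
  have step2 : ∑ r ∈ s, (Nat.gcd q r : ℝ) * M / (q : ℝ) ^ 2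
      ≤ ∑ r ∈ Finset.Icc 1 q, (Nat.gcd q r : ℝ) * M / (q : ℝ) ^ 2 := by
    apply Finset.sum_le_sum_of_subset_of_nonneg (Finset.filter_subset _ _)
    intro r _ _
    have : (0:ℝ) ≤ M := by linarith
    positivity
  have hgcdsum : (∑ r ∈ Finset.Icc 1 q, (Nat.gcd q r : ℝ))
      ≤ (q.divisors.card : ℝ) * q := by
    have := gcd_sum_le q hq
    exact_mod_cast this
  have step3 : ∑ r ∈ Finset.Icc 1 q, (Nat.gcd q r : ℝ) * M / (q : ℝ) ^ 2
      ≤ (q.divisors.card : ℝ) * q * M / (q : ℝ) ^ 2 := by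
    have heq : ∑ r ∈ Finset.Icc 1 q, (Nat.gcd q r : ℝ) * M / (q : ℝ) ^ 2
        = (∑ r ∈ Finset.Icc 1 q, (Nat.gcd q r : ℝ)) * M / (q : ℝ) ^ 2 := by
      rw [← Finset.sum_div, ← Finset.sum_mul]
    rw [heq]
    have hM0 : (0:ℝ) ≤ M := by linarith
    gcongr
  have key : (q.divisors.card : ℝ) * q * M / (q : ℝ) ^ 2
      = 4 * (q.divisors.card : ℝ) / (q : ℝ) ^ (δ / (δ + 3)) := by
    have hne : (δ + 3) ≠ 0 := ne_of_gt hδ3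
    have hpow : (q : ℝ) ^ ((3 : ℝ) / (δ + 3)) * (q:ℝ) / (q:ℝ)^2
        = 1 / (q : ℝ) ^ (δ / (δ + 3)) := by
      rw [show ((q:ℝ))^2 = (q:ℝ) ^ (2:ℝ) from by
          rw [← Real.rpow_natCast (q:ℝ) 2]; norm_num,
        ← Real.rpow_add_one (ne_of_gt hq0), ← Real.rpow_sub hq0,
        show (3:ℝ)/(δ+3) + 1 - 2 = -(δ/(δ+3)) from by field_simp; ring,
        Real.rpow_neg (le_of_lt hq0), one_div]
    calc (q.divisors.card : ℝ) * q * M / (q : ℝ) ^ 2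
        = 4 * (q.divisors.card : ℝ)
          * ((q : ℝ) ^ ((3 : ℝ) / (δ + 3)) * (q:ℝ) / (q:ℝ)^2) := by rw [hMdef]; ring
      _ = 4 * (q.divisors.card : ℝ) * (1 / (q : ℝ) ^ (δ / (δ + 3))) := by rw [hpow]
      _ = 4 * (q.divisors.card : ℝ) / (q : ℝ) ^ (δ / (δ + 3)) := by ring
  calc ∑ r ∈ s, (Nat.gcd q r : ℝ) ^ 2 / (q : ℝ) ^ 2
      < ∑ r ∈ s, (Nat.gcd q r : ℝ) * M / (q : ℝ) ^ 2 := step1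
    _ ≤ ∑ r ∈ Finset.Icc 1 q, (Nat.gcd q r : ℝ) * M / (q : ℝ) ^ 2 := step2
    _ ≤ (q.divisors.card : ℝ) * q * M / (q : ℝ) ^ 2 := step3
    _ = 4 * (q.divisors.card : ℝ) / (q : ℝ) ^ (δ / (δ + 3)) := key
end

section
/- Let δ > 0. There is a constant C = C(δ) > 0 such that for every q ∈ ℕ, ∑_{1 ≤ r ≤ q, gcd(q,r) ≤ 4q^{3/(δ+3)}} gcd(q, r)²/q² ≤ C, i.e. the sum over r ≤ q restricted to gcd(q, r) ≤ 4q^{3/(δ+3)} of gcd(q,r)²/q² is bounded uniformly in q. -/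
open Real

/-- Divisor bound: for `0 < ε ≤ 1` there is `K ≥ 1` with `τ(q) ≤ K * q ^ ε`. -/
lemma divisor_bound_aux (ε : ℝ) (hε : 0 < ε) (hε1 : ε ≤ 1) :
    ∃ K : ℝ, 1 ≤ K ∧ ∀ q : ℕ, q ≠ 0 → (q.divisors.card : ℝ) ≤ K * (q : ℝ) ^ ε := by
  set c : ℝ := ε * Real.log 2 with hc
  have hlog2 : 0 < Real.log 2 := Real.log_pos (by norm_num)
  have hc0 : 0 < c := mul_pos hε hlog2
  have hc1 : c ≤ 1 := by
    have : Real.log 2 ≤ 1 := by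
      have := Real.log_le_sub_one_of_pos (x := 2) (by norm_num)
      linarith
    calc c ≤ 1 * Real.log 2 := by apply mul_le_mul_of_nonneg_right hε1 hlog2.le
    _ ≤ 1 := by linarith
  set K : ℝ := max (1 / c) 1 with hK
  have hK1 : 1 ≤ K := le_max_right _ _
  set N : ℕ := ⌈(2 : ℝ) ^ (1 / ε)⌉₊ with hN
  refine ⟨K ^ (N + 1), one_le_pow₀ hK1, fun q hq => ?_⟩
  have hqpos : 0 < q := Nat.pos_of_ne_zero hq
  -- per-prime bound
  have key : ∀ p ∈ q.primeFactors,
      ((q.factorization p + 1 : ℕ) : ℝ) ≤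
        (if (p : ℝ) ^ ε < 2 then K else 1) * (p : ℝ) ^ (ε * (q.factorization p : ℕ)) := by
    intro p hp
    have hpp : p.Prime := Nat.prime_of_mem_primeFactors hp
    have hp2 : (2 : ℝ) ≤ (p : ℝ) := by exact_mod_cast hpp.two_le
    have hp0 : (0 : ℝ) ≤ (p : ℝ) := by linarith
    set a : ℕ := q.factorization p
    by_cases hsmall : (p : ℝ) ^ ε < 2
    · rw [if_pos hsmall]
      have h2a : ((a + 1 : ℕ) : ℝ) ≤ (1 / c) * (2 : ℝ) ^ (ε * a) := by
        have hexp : (2 : ℝ) ^ (ε * a) = Real.exp (c * a) := by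
          rw [Real.rpow_def_of_pos (by norm_num : (0:ℝ) < 2)]
          ring_nf
          rw [hc]; ring_nf
        rw [hexp, Nat.cast_add, Nat.cast_one]
        have h1 : c * a + 1 ≤ Real.exp (c * a) := Real.add_one_le_exp _
        have h2 : c * ((a : ℝ) + 1) ≤ Real.exp (c * a) := by nlinarith
        rw [one_div, ← div_eq_inv_mul, le_div_iff₀ hc0]
        linarith [h2]
      calc ((a + 1 : ℕ) : ℝ) ≤ (1 / c) * (2 : ℝ) ^ (ε * a) := h2a
      _ ≤ K * (p : ℝ) ^ (ε * a) := by
          apply mul_le_mul (le_max_left _ _)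
            (Real.rpow_le_rpow (by norm_num) hp2 (by positivity))
            (Real.rpow_nonneg (by norm_num) _) (by linarith [hK1])
    · rw [if_neg hsmall]
      push_neg at hsmall
      rw [one_mul]
      have h1 : ((a + 1 : ℕ) : ℝ) ≤ (2 : ℝ) ^ a := by
        exact_mod_cast (Nat.lt_two_pow_self (n := a))
      have h2 : ((2 : ℝ)) ^ a ≤ ((p : ℝ) ^ ε) ^ a :=
        pow_le_pow_left₀ (by norm_num) hsmall a
      have h3 : ((p : ℝ) ^ ε) ^ a = (p : ℝ) ^ (ε * a) := by
        rw [← Real.rpow_natCast ((p:ℝ) ^ ε) a, ← Real.rpow_mul hp0]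
      calc ((a + 1 : ℕ) : ℝ) ≤ ((p : ℝ) ^ ε) ^ a := le_trans h1 h2
      _ = _ := h3
  have hpf_nonneg : ∀ p ∈ q.primeFactors,
      (0:ℝ) ≤ ((q.factorization p + 1 : ℕ) : ℝ) := fun p _ => by positivity
  have step1 : (q.divisors.card : ℝ)
      = ∏ p ∈ q.primeFactors, ((q.factorization p + 1 : ℕ) : ℝ) := by
    rw [Nat.card_divisors hq, Nat.cast_prod]
  have step2 : (∏ p ∈ q.primeFactors, ((q.factorization p + 1 : ℕ) : ℝ))
      ≤ ∏ p ∈ q.primeFactors,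
          (if (p : ℝ) ^ ε < 2 then K else 1) * (p : ℝ) ^ (ε * (q.factorization p : ℕ)) :=
    Finset.prod_le_prod hpf_nonneg key
  rw [step1]
  refine le_trans step2 ?_
  rw [Finset.prod_mul_distrib]
  have hprodif : (∏ p ∈ q.primeFactors, if (p : ℝ) ^ ε < 2 then K else (1:ℝ))
      = K ^ (q.primeFactors.filter (fun p : ℕ => (p : ℝ) ^ ε < 2)).card := by
    rw [Finset.prod_ite, Finset.prod_const, Finset.prod_const_one, mul_one]
  have hcard : (q.primeFactors.filter (fun p : ℕ => (p : ℝ) ^ ε < 2)).card ≤ N + 1 := by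
    have hsub : q.primeFactors.filter (fun p : ℕ => (p : ℝ) ^ ε < 2) ⊆ Finset.range (N + 1) := by
      intro p hp
      rw [Finset.mem_filter] at hp
      obtain ⟨hp1, hp2⟩ := hp
      have hp0 : (0:ℝ) ≤ (p:ℝ) := Nat.cast_nonneg p
      have h1 : ((p:ℝ) ^ ε) ^ (1/ε) ≤ (2:ℝ) ^ (1/ε) :=
        Real.rpow_le_rpow (Real.rpow_nonneg hp0 _) hp2.le (by positivity)
      have h2 : ((p:ℝ) ^ ε) ^ (1/ε) = (p:ℝ) := by
        rw [← Real.rpow_mul hp0, mul_one_div, div_self hε.ne', Real.rpow_one]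
      have h3 : (p:ℝ) ≤ (N:ℝ) := le_trans (h2 ▸ h1) (Nat.le_ceil _)
      have : p ≤ N := by exact_mod_cast h3
      exact Finset.mem_range.mpr (Nat.lt_succ_of_le this)
    exact le_trans (Finset.card_le_card hsub) (by rw [Finset.card_range])
  have hprodpow : (∏ p ∈ q.primeFactors, (p : ℝ) ^ (ε * (q.factorization p : ℕ)))
      = (q : ℝ) ^ ε := by
    have e1 : ∀ p ∈ q.primeFactors,
        (p : ℝ) ^ (ε * (q.factorization p : ℕ)) = ((p : ℝ) ^ (q.factorization p)) ^ ε := by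
      intro p hp
      rw [mul_comm, Real.rpow_mul (Nat.cast_nonneg p), Real.rpow_natCast]
    rw [Finset.prod_congr rfl e1,
      Real.finset_prod_rpow _ _ (fun p _ => by positivity) ε]
    congr 1
    have h := Nat.factorization_prod_pow_eq_self hq
    rw [Finsupp.prod] at h
    calc ∏ p ∈ q.primeFactors, ((p:ℝ) ^ q.factorization p)
        = ((∏ p ∈ q.primeFactors, p ^ q.factorization p : ℕ) : ℝ) := by
          rw [Nat.cast_prod]; exact Finset.prod_congr rfl (fun p _ => (Nat.cast_pow p _).symm)
      _ = (q : ℝ) := by exact_mod_cast congrArg (Nat.cast : ℕ → ℝ) h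
  rw [hprodif, hprodpow]
  exact mul_le_mul (pow_le_pow_right₀ hK1 hcard) le_rfl (Real.rpow_nonneg (Nat.cast_nonneg q) ε)
    (by positivity)

/-- For each `δ > 0` there is a constant `C = C(δ) > 0` bounding, uniformly in `q`, the sum
of `gcd(q,r)²/q²` over `1 ≤ r ≤ q` with `gcd(q,r) ≤ 4 q^{3/(δ+3)}`. -/
theorem restricted_gcd_sum_bounded (δ : ℝ) (hδ : 0 < δ) :
    ∃ C : ℝ, 0 < C ∧ ∀ q : ℕ,
      ∑ r ∈ (Finset.Icc 1 q).filter
          (fun r => (Nat.gcd q r : ℝ) ≤ 4 * (q : ℝ) ^ ((3 : ℝ) / (δ + 3))),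
        (Nat.gcd q r : ℝ) ^ 2 / (q : ℝ) ^ 2 ≤ C := by
  have hd3 : (0:ℝ) < δ + 3 := by linarith
  have hε0 : (0:ℝ) < δ / (δ + 3) := by positivity
  have hε1 : δ / (δ + 3) ≤ 1 := by rw [div_le_one hd3]; linarith
  obtain ⟨K, hK1, hKbd⟩ := divisor_bound_aux (δ / (δ + 3)) hε0 hε1
  refine ⟨4 * K, by linarith, fun q => ?_⟩
  rcases Nat.eq_zero_or_pos q with rfl | hq
  · simp
    linarith
  have hq0 : q ≠ 0 := hq.ne'
  have hqR : (0:ℝ) < (q:ℝ) := by exact_mod_cast hq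
  set T : ℝ := 4 * (q : ℝ) ^ ((3 : ℝ) / (δ + 3)) with hT
  have hT0 : 0 < T := by positivity
  set s := (Finset.Icc 1 q).filter (fun r => (Nat.gcd q r : ℝ) ≤ T) with hs
  set t := q.divisors.filter (fun d : ℕ => (d : ℝ) ≤ T) with ht
  have hmaps : ∀ r ∈ s, Nat.gcd q r ∈ t := by
    intro r hr
    rw [hs, Finset.mem_filter] at hr
    rw [ht, Finset.mem_filter, Nat.mem_divisors]
    exact ⟨⟨Nat.gcd_dvd_left q r, hq0⟩, hr.2⟩
  have inner : ∀ d ∈ t,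
      ∑ r ∈ s.filter (fun r => Nat.gcd q r = d), (Nat.gcd q r : ℝ) ^ 2 / (q : ℝ) ^ 2
        ≤ T / (q : ℝ) := by
    intro d hd
    rw [ht, Finset.mem_filter, Nat.mem_divisors] at hd
    obtain ⟨⟨hdvd, _⟩, hdT⟩ := hd
    have hdpos : 0 < d := Nat.pos_of_dvd_of_pos hdvd hq
    have hdR : (0:ℝ) < (d:ℝ) := by exact_mod_cast hdpos
    have hcardle : (s.filter (fun r => Nat.gcd q r = d)).card
        ≤ ((Finset.Ioc 0 q).filter (fun r => d ∣ r)).card := by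
      apply Finset.card_le_card
      intro r hr
      rw [Finset.mem_filter, hs, Finset.mem_filter] at hr
      obtain ⟨⟨hr1, _⟩, hr2⟩ := hr
      rw [Finset.mem_filter]
      refine ⟨?_, hr2 ▸ Nat.gcd_dvd_right q r⟩
      rwa [← Finset.Icc_add_one_left_eq_Ioc]
    rw [Nat.Ioc_filter_dvd_card_eq_div] at hcardle
    calc ∑ r ∈ s.filter (fun r => Nat.gcd q r = d), (Nat.gcd q r : ℝ) ^ 2 / (q : ℝ) ^ 2
        = ∑ r ∈ s.filter (fun r => Nat.gcd q r = d), (d : ℝ) ^ 2 / (q : ℝ) ^ 2 := by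
          refine Finset.sum_congr rfl (fun r hr => ?_)
          rw [Finset.mem_filter] at hr
          rw [hr.2]
      _ = ((s.filter (fun r => Nat.gcd q r = d)).card : ℝ) * ((d : ℝ) ^ 2 / (q : ℝ) ^ 2) := by
          rw [Finset.sum_const, nsmul_eq_mul]
      _ ≤ ((q / d : ℕ) : ℝ) * ((d : ℝ) ^ 2 / (q : ℝ) ^ 2) := by
          apply mul_le_mul_of_nonneg_right (by exact_mod_cast hcardle) (by positivity)
      _ ≤ ((q : ℝ) / (d : ℝ)) * ((d : ℝ) ^ 2 / (q : ℝ) ^ 2) :=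
          mul_le_mul_of_nonneg_right (Nat.cast_div_le) (by positivity)
      _ = (d : ℝ) / (q : ℝ) := by field_simp
      _ ≤ T / (q : ℝ) := by
            apply div_le_div_of_nonneg_right hdT hqR.le
  calc ∑ r ∈ s, (Nat.gcd q r : ℝ) ^ 2 / (q : ℝ) ^ 2
      = ∑ d ∈ t, ∑ r ∈ s.filter (fun r => Nat.gcd q r = d),
          (Nat.gcd q r : ℝ) ^ 2 / (q : ℝ) ^ 2 :=
        (Finset.sum_fiberwise_of_maps_to hmaps _).symm
    _ ≤ ∑ d ∈ t, T / (q : ℝ) := Finset.sum_le_sum inner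
    _ = (t.card : ℝ) * (T / (q : ℝ)) := by rw [Finset.sum_const, nsmul_eq_mul]
    _ ≤ (q.divisors.card : ℝ) * (T / (q : ℝ)) := by
        apply mul_le_mul_of_nonneg_right _ (by positivity)
        exact_mod_cast Finset.card_filter_le _ _
    _ ≤ (K * (q : ℝ) ^ (δ / (δ + 3))) * (T / (q : ℝ)) :=
        mul_le_mul_of_nonneg_right (hKbd q hq0) (by positivity)
    _ = 4 * K * ((q : ℝ) ^ (δ / (δ + 3)) * (q : ℝ) ^ ((3 : ℝ) / (δ + 3)) / (q : ℝ)) := by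
        rw [hT]; ring
    _ = 4 * K := by
        rw [← Real.rpow_add hqR]
        have : δ / (δ + 3) + 3 / (δ + 3) = 1 := by field_simp
        rw [this, Real.rpow_one, div_self hqR.ne']
        ring
end

section
/- Let q > r be natural numbers, b ∈ ℕ, and a, p, s ∈ ℤ² with gcd(q, b·p + a) = 1, where gcd(q, v) for v = (v₁, v₂) ∈ ℤ² means gcd(q, v₁, v₂). Then the vectors (b·p + a)/q and (b·s + a)/r in ℝ² are distinct, and |(b·p + a)/q − (b·s + a)/r| ≥ 1/(b·lcm(q, r)) = gcd(q, r)/(b·q·r), where |·| denotes the maximum norm on ℝ² (here the left side is additionally multiplied by 1/b in the paper's formulation: |(1/b)·((b·p + a)/q − (b·s + a)/r)| ≥ gcd(q,r)/(b·q·r)). -/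
open Real

/-- If `q > r ≥ 1`, `b ≥ 1` and `gcd(q, b·p + a) = 1`, then the rational vectors
`(b·p + a)/q` and `(b·s + a)/r` are distinct, their max-norm distance is at least
`1/(b·lcm(q,r)) = gcd(q,r)/(b·q·r)`, and the `1/b`-scaled distance is at least
`gcd(q,r)/(b·q·r)`. -/
theorem separation_of_rationals (q r b : ℕ) (hr : 1 ≤ r) (hqr : r < q) (hb : 1 ≤ b)
    (a p s : Fin 2 → ℤ)
    (hgcd : gcdVec q (fun i => (b : ℤ) * p i + a i) = 1) :
    (fun i => (((b : ℤ) * p i + a i : ℤ) : ℝ) / (q : ℝ)) ≠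
      (fun i => (((b : ℤ) * s i + a i : ℤ) : ℝ) / (r : ℝ)) ∧
    1 / ((b : ℝ) * (Nat.lcm q r : ℝ)) ≤
      ‖(fun i => (((b : ℤ) * p i + a i : ℤ) : ℝ) / (q : ℝ)) -
        (fun i => (((b : ℤ) * s i + a i : ℤ) : ℝ) / (r : ℝ))‖ ∧
    1 / ((b : ℝ) * (Nat.lcm q r : ℝ)) = (Nat.gcd q r : ℝ) / ((b : ℝ) * q * r) ∧
    (Nat.gcd q r : ℝ) / ((b : ℝ) * q * r) ≤
      ‖((b : ℝ))⁻¹ • ((fun i => (((b : ℤ) * p i + a i : ℤ) : ℝ) / (q : ℝ)) -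
        (fun i => (((b : ℤ) * s i + a i : ℤ) : ℝ) / (r : ℝ)))‖ := by
  have hq0 : 0 < q := by omega
  have hb0 : 0 < b := hb
  set u : Fin 2 → ℤ := fun i => (b : ℤ) * p i + a i with hu
  set w : Fin 2 → ℤ := fun i => (b : ℤ) * s i + a i with hw
  set d : ℕ := Nat.gcd q r with hd
  set L : ℕ := Nat.lcm q r with hL
  have hd0 : 0 < d := Nat.gcd_pos_of_pos_left r hq0
  have hL0 : 0 < L := Nat.pos_of_ne_zero (Nat.lcm_ne_zero hq0.ne' (lt_of_lt_of_le Nat.zero_lt_one hr).ne')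
  have hdL : d * L = q * r := Nat.gcd_mul_lcm q r
  -- existence of a nonzero coordinate of r*u - q*w
  have hex : ∃ i, (r : ℤ) * u i - (q : ℤ) * w i ≠ 0 := by
    by_contra h
    push_neg at h
    have hdvd : ∀ i, (q : ℤ) ∣ (r : ℤ) * u i := fun i => ⟨w i, by have := h i; linarith⟩
    have h2 : (q : ℤ) ∣ (Int.gcd ((r : ℤ) * u 0) ((r : ℤ) * u 1) : ℤ) :=
      Int.dvd_coe_gcd (hdvd 0) (hdvd 1)
    rw [Int.gcd_mul_left] at h2
    have h3 : q ∣ ((r : ℤ)).natAbs * Int.gcd (u 0) (u 1) := by exact_mod_cast h2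
    rw [Int.natAbs_natCast] at h3
    have hcop : Nat.Coprime q (Int.gcd (u 0) (u 1)) := hgcd
    have h4 : q ∣ r := hcop.dvd_of_dvd_mul_right h3
    exact absurd (Nat.le_of_dvd (lt_of_lt_of_le Nat.zero_lt_one hr) h4) (not_le.mpr hqr)
  obtain ⟨i, hi⟩ := hex
  set n : ℤ := (r : ℤ) * u i - (q : ℤ) * w i with hn
  have hddvd : (d : ℤ) ∣ n := by
    have h1 : (d : ℤ) ∣ (q : ℤ) := Int.natCast_dvd_natCast.mpr (Nat.gcd_dvd_left _ _)
    have h2 : (d : ℤ) ∣ (r : ℤ) := Int.natCast_dvd_natCast.mpr (Nat.gcd_dvd_right _ _)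
    exact dvd_sub (h2.mul_right _) (h1.mul_right _)
  have hdlen : (d : ℤ) ≤ |n| := Int.le_of_dvd (abs_pos.mpr hi) ((dvd_abs _ _).mpr hddvd)
  -- real computations
  have hqR : (0:ℝ) < (q:ℝ) := by exact_mod_cast hq0
  have hrR : (0:ℝ) < (r:ℝ) := by exact_mod_cast lt_of_lt_of_le Nat.zero_lt_one hr
  have hbR : (0:ℝ) < (b:ℝ) := by exact_mod_cast hb0
  have hLR : (0:ℝ) < (L:ℝ) := by exact_mod_cast hL0
  have hdR : (0:ℝ) < (d:ℝ) := by exact_mod_cast hd0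
  set x : Fin 2 → ℝ := (fun i => ((u i : ℤ) : ℝ) / (q : ℝ)) - fun i => ((w i : ℤ) : ℝ) / (r : ℝ) with hx
  have hxi : x i = (n : ℝ) / ((q : ℝ) * r) := by
    simp only [hx, Pi.sub_apply, hn]
    push_cast
    field_simp
  have hdqr : (d : ℝ) / ((q:ℝ) * r) = 1 / (L:ℝ) := by
    have : (d:ℝ) * L = (q:ℝ) * r := by exact_mod_cast hdL
    field_simp
    linarith
  have hcore : 1 / (L : ℝ) ≤ ‖x‖ := by
    have h1 : |x i| ≤ ‖x‖ := by
      have := norm_le_pi_norm x i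
      simpa using this
    have h2 : (d : ℝ) / ((q:ℝ) * r) ≤ |x i| := by
      rw [hxi, abs_div, abs_of_pos (mul_pos hqR hrR)]
      apply div_le_div_of_nonneg_right _ (mul_pos hqR hrR).le
      exact_mod_cast hdlen
    linarith [hdqr ▸ h2]
  have hbL : 1 / ((b:ℝ) * L) ≤ 1 / (L:ℝ) := by
    apply one_div_le_one_div_of_le hLR
    nlinarith [hbR, hLR, (by exact_mod_cast hb : (1:ℝ) ≤ (b:ℝ))]
  have hmain : 1 / ((b:ℝ) * L) ≤ ‖x‖ := le_trans hbL hcore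
  have heq : 1 / ((b:ℝ) * L) = (d : ℝ) / ((b:ℝ) * q * r) := by
    have hqrL : (d:ℝ) * L = (q:ℝ) * r := by exact_mod_cast hdL
    field_simp
    nlinarith
  refine ⟨?_, hmain, heq, ?_⟩
  · intro hcontra
    have : x = 0 := by
      rw [hx, hcontra]
      funext j
      simp only [Pi.sub_apply, Pi.zero_apply, hw]
      push_cast
      ring
    rw [this, norm_zero] at hmain
    have : (0:ℝ) < 1 / ((b:ℝ) * L) := by positivity
    linarith
  · rw [norm_smul]
    have h1 : (d : ℝ) / ((b:ℝ) * q * r) = (b:ℝ)⁻¹ * ((d:ℝ) / ((q:ℝ)*r)) := by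
      field_simp
      try ring
      try tauto
    rw [h1, hdqr]
    simp only [norm_inv, Real.norm_natCast]
    exact mul_le_mul_of_nonneg_left hcore (by positivity)
end

section
/- Let δ > 0, q > r be natural numbers with gcd(q, r) > 2·q^{3/(δ+3)}, y ∈ ℝ², and (a_q, b_q) ∈ ℤ² × ℕ with |b_q·y − a_q| < q^{−δ/(δ+3)} and 1 ≤ b_q ≤ q^{2δ/(δ+3)}. Then for all p, s ∈ ℤ² with gcd(q, b_q·p + a_q) = 1, the distance between the box centers satisfies |(p + y)/q − (s + y)/r| > gcd(q, r)/(2·b_q·q·r), where |·| denotes the maximum norm on ℝ², gcd(q, v) for v = (v₁, v₂) ∈ ℤ² means gcd(q, v₁, v₂), and vector operations are componentwise. -/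
open Real

/-- Key separation estimate for the box centers: under the Dirichlet conditions on
`(a_q, b_q)` and `gcd(q,r) > 2 q^{3/(δ+3)}`, for all `p, s ∈ ℤ²` with
`gcd(q, b_q·p + a_q) = 1` one has `|(p+y)/q − (s+y)/r| > gcd(q,r)/(2 b_q q r)`. -/
theorem center_separation (δ : ℝ) (hδ : 0 < δ) (q r : ℕ) (hr : 1 ≤ r) (hqr : r < q)
    (hgcdqr : 2 * (q : ℝ) ^ ((3 : ℝ) / (δ + 3)) < (Nat.gcd q r : ℝ))
    (y : Fin 2 → ℝ) (a : Fin 2 → ℤ) (b : ℕ) (hb1 : 1 ≤ b)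
    (hab : ‖(b : ℝ) • y - (fun i => (a i : ℝ))‖ < (q : ℝ) ^ (-(δ / (δ + 3))))
    (hb2 : (b : ℝ) ≤ (q : ℝ) ^ (2 * δ / (δ + 3))) :
    ∀ p s : Fin 2 → ℤ, gcdVec q (fun i => (b : ℤ) * p i + a i) = 1 →
      (Nat.gcd q r : ℝ) / (2 * (b : ℝ) * q * r) <
        ‖(fun i => ((p i : ℝ) + y i) / (q : ℝ)) -
          (fun i => ((s i : ℝ) + y i) / (r : ℝ))‖ := by
  intro p s hgcd
  have hq0 : 0 < q := by omega
  have hqR : (0:ℝ) < q := by exact_mod_cast hq0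
  have hrR : (0:ℝ) < r := by exact_mod_cast hr
  have hbR : (0:ℝ) < b := by exact_mod_cast hb1
  set g : ℕ := Nat.gcd q r with hg
  have hg0 : 0 < g := Nat.gcd_pos_of_pos_left _ hq0
  set w : Fin 2 → ℤ := fun i => (b : ℤ) * p i + a i with hw
  set u : Fin 2 → ℤ := fun i => (b : ℤ) * s i + a i with hu
  set v : Fin 2 → ℤ := fun i => w i * r - u i * q with hv
  have hcop : Nat.Coprime q (Int.gcd (w 0) (w 1)) := hgcd
  -- v is not identically zero
  have hvne : ¬ (v 0 = 0 ∧ v 1 = 0) := by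
    rintro ⟨h0, h1⟩
    have hd0 : (q:ℤ) ∣ w 0 * r := ⟨u 0, by simp only [hv] at h0; linarith⟩
    have hd1 : (q:ℤ) ∣ w 1 * r := ⟨u 1, by simp only [hv] at h1; linarith⟩
    have hdG : (q:ℤ) ∣ (Int.gcd (w 0 * r) (w 1 * r) : ℤ) := Int.dvd_coe_gcd hd0 hd1
    rw [Int.gcd_mul_right] at hdG
    have hdG' : q ∣ Int.gcd (w 0) (w 1) * (r:ℤ).natAbs := by exact_mod_cast hdG
    have : q ∣ r := by
      have := (Nat.Coprime.dvd_of_dvd_mul_left hcop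
        (by simpa [mul_comm] using hdG'))
      simpa using this
    have := Nat.le_of_dvd (by omega) this
    omega
  obtain ⟨i, hi⟩ : ∃ i, v i ≠ 0 := by
    by_contra h; push_neg at h; exact hvne ⟨h 0, h 1⟩
  have hgq : (g:ℤ) ∣ (q:ℤ) := Int.natCast_dvd_natCast.mpr (Nat.gcd_dvd_left q r)
  have hgr : (g:ℤ) ∣ (r:ℤ) := Int.natCast_dvd_natCast.mpr (Nat.gcd_dvd_right q r)
  have hgv : (g:ℤ) ∣ v i := dvd_sub (hgr.mul_left _) (hgq.mul_left _)
  have hgleZ : (g:ℤ) ≤ |v i| := Int.le_of_dvd (abs_pos.mpr hi) ((dvd_abs _ _).mpr hgv)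
  have hgle : (g:ℝ) ≤ |(v i : ℝ)| := by
    have := (@Int.cast_le ℝ _ _ _).mpr hgleZ
    push_cast at this
    exact this
  -- analytic bounds
  set E : ℝ := (q:ℝ) ^ (-(δ / (δ + 3))) with hE
  have hE0 : 0 < E := Real.rpow_pos_of_pos hqR _
  set e : ℝ := (b:ℝ) * y i - a i with he
  have heE : |e| < E := by
    have h := norm_le_pi_norm ((b : ℝ) • y - (fun i => (a i : ℝ))) i
    simp only [Pi.sub_apply, Pi.smul_apply, smul_eq_mul, Real.norm_eq_abs] at h
    exact lt_of_le_of_lt h hab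
  have hEq : E * q = (q:ℝ) ^ ((3:ℝ) / (δ + 3)) := by
    have h3 : -(δ / (δ + 3)) + 1 = 3 / (δ + 3) := by
      field_simp
      ring
    calc E * q = (q:ℝ) ^ (-(δ / (δ + 3))) * (q:ℝ) ^ (1:ℝ) := by rw [Real.rpow_one]
      _ = (q:ℝ) ^ (-(δ / (δ + 3)) + 1) := (Real.rpow_add hqR _ _).symm
      _ = _ := by rw [h3]
  have hE2 : 2 * (E * ((q:ℝ) - r)) < g := by
    have h1 : E * ((q:ℝ) - r) < E * q := by
      have : (q:ℝ) - r < q := by linarith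
      exact (mul_lt_mul_iff_right₀ hE0).mpr this
    calc 2 * (E * ((q:ℝ) - r)) < 2 * (E * q) := by linarith
      _ = 2 * (q:ℝ) ^ ((3:ℝ) / (δ + 3)) := by rw [hEq]
      _ < g := hgcdqr
  -- coordinate identity
  have hvcast : ((v i : ℤ) : ℝ) = ((b:ℝ) * p i + a i) * r - ((b:ℝ) * s i + a i) * q := by
    simp only [hv, hw, hu]
    push_cast
    ring
  have hDi : ((p i : ℝ) + y i) / q - ((s i : ℝ) + y i) / r
      = ((v i : ℝ) + e * ((r:ℝ) - q)) / ((b:ℝ) * q * r) := by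
    rw [hvcast, he]
    field_simp
    ring
  -- lower bound on numerator
  have hrq : |(r:ℝ) - q| = (q:ℝ) - r := by
    rw [abs_sub_comm, abs_of_pos]
    have : (r:ℝ) < q := by exact_mod_cast hqr
    linarith
  have hnum : (g:ℝ) / 2 < |(v i : ℝ) + e * ((r:ℝ) - q)| := by
    have h1 : |(v i : ℝ)| ≤ |(v i : ℝ) + e * ((r:ℝ) - q)| + |e * ((r:ℝ) - q)| := by
      calc |(v i : ℝ)| = |((v i : ℝ) + e * ((r:ℝ) - q)) + (-(e * ((r:ℝ) - q)))| := by
            ring_nf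
        _ ≤ _ := by simpa using abs_add_le ((v i : ℝ) + e * ((r:ℝ) - q)) (-(e * ((r:ℝ) - q)))
    have h2 : |e * ((r:ℝ) - q)| ≤ E * ((q:ℝ) - r) := by
      rw [abs_mul, hrq]
      have hq' : (0:ℝ) ≤ (q:ℝ) - r := by
        have : (r:ℝ) < q := by exact_mod_cast hqr
        linarith
      exact mul_le_mul_of_nonneg_right heE.le hq'
    nlinarith [hgle, hE2]
  have hfinal : (g:ℝ) / (2 * (b:ℝ) * q * r)
      < |((p i : ℝ) + y i) / q - ((s i : ℝ) + y i) / r| := by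
    rw [hDi, abs_div, abs_of_pos (by positivity : (0:ℝ) < (b:ℝ) * q * r)]
    rw [div_lt_div_iff₀ (by positivity) (by positivity)]
    nlinarith [hnum, mul_pos (mul_pos hbR hqR) hrR]
  refine lt_of_lt_of_le hfinal ?_
  have h := norm_le_pi_norm ((fun i => ((p i : ℝ) + y i) / (q:ℝ)) -
    (fun i => ((s i : ℝ) + y i) / (r:ℝ))) i
  simpa [Real.norm_eq_abs] using h
end
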